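/- arXiv:2008.10101 — 4 statements merged into one kernel-verified Lean document; each statement's English description precedes it below -/
import Mathlib

section
/- Let (J, 𝒜) be a standard Borel space and let φ and ψ be finite signed Borel measures on J × J. There exists a circulation α with φ(S) ≤ α(S) ≤ ψ(S) for every Borel set S ⊆ J × J if and only if φ(S) ≤ ψ(S) for every Borel set S ⊆ J × J and φ(X × Xᶜ) ≤ ψ(Xᶜ × X) for every Borel set X ⊆ J. -/
open MeasureTheory Set Finset

/-- Layer-cake bound for the finite Gale/Hoffman problem. -/
lemma layer_cake_aux {T : Type*} [Fintype T] [DecidableEq T] (d : T → ℝ) (b : T → T → ℝ)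
    (hb : ∀ σ τ, 0 ≤ b σ τ) (hd : ∑ σ, d σ = 0)
    (hcut : ∀ R : Finset T, ∑ σ ∈ R, d σ ≤ ∑ σ ∈ Rᶜ, ∑ τ ∈ R, b σ τ) :
    ∀ (n : ℕ) (y : T → ℝ), (Finset.univ.image y).card ≤ n →
      ∑ σ, d σ * y σ ≤ ∑ σ, ∑ τ, b σ τ * max (y τ - y σ) 0 := by
  classical
  intro n
  induction n with
  | zero =>
    intro y hy
    have h0 : (Finset.univ.image y) = ∅ := Finset.card_eq_zero.1 (Nat.le_zero.1 hy)
    have : (Finset.univ : Finset T) = ∅ := Finset.image_eq_empty.1 h0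
    simp [this]
  | succ n ih =>
    intro y hy
    by_cases hcard : (Finset.univ.image y).card ≤ 1
    · -- y is constant (or T empty)
      have hyc : ∀ σ τ : T, y σ = y τ := by
        intro σ τ
        have h1 : y σ ∈ Finset.univ.image y := Finset.mem_image_of_mem y (Finset.mem_univ σ)
        have h2 : y τ ∈ Finset.univ.image y := Finset.mem_image_of_mem y (Finset.mem_univ τ)
        exact Finset.card_le_one.1 hcard _ h1 _ h2
      have hL : ∑ σ, d σ * y σ = 0 := by
        rcases isEmpty_or_nonempty T with hT | hT
        · simp
        · obtain ⟨σ₀⟩ := hT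
          have : ∀ σ, d σ * y σ = d σ * y σ₀ := fun σ => by rw [hyc σ σ₀]
          rw [Finset.sum_congr rfl fun σ _ => this σ, ← Finset.sum_mul, hd, zero_mul]
      have hR : ∀ σ τ : T, b σ τ * max (y τ - y σ) 0 = 0 := by
        intro σ τ; rw [hyc τ σ]; simp
      rw [hL]
      simp [hR]
    · push_neg at hcard
      have hne : (Finset.univ.image y).Nonempty := Finset.card_pos.1 (by omega)
      set M := (Finset.univ.image y).max' hne with hMdef
      have hMmem : M ∈ Finset.univ.image y := Finset.max'_mem _ _
      set I2 := (Finset.univ.image y).erase M with hI2def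
      have hI2ne : I2.Nonempty := by
        rw [← Finset.card_pos, hI2def, Finset.card_erase_of_mem hMmem]; omega
      set t := I2.max' hI2ne with htdef
      have htmem : t ∈ I2 := Finset.max'_mem _ _
      have htM : t < M := by
        have h1 : t ∈ Finset.univ.image y := Finset.mem_of_mem_erase htmem
        have h2 : t ≠ M := Finset.ne_of_mem_erase htmem
        exact lt_of_le_of_ne (Finset.le_max' _ _ h1) h2
      set R : Finset T := Finset.univ.filter (fun σ => y σ = M) with hRdef
      have hM : ∀ σ, y σ ≤ M := fun σ =>
        Finset.le_max' _ _ (Finset.mem_image_of_mem y (Finset.mem_univ σ))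
      have hmemR : ∀ σ, σ ∈ R ↔ y σ = M := by
        intro σ; simp [hRdef]
      have hnotR : ∀ σ, σ ∉ R → y σ ≤ t := by
        intro σ hσ
        refine Finset.le_max' _ _ ?_
        rw [hI2def, Finset.mem_erase]
        exact ⟨fun h => hσ ((hmemR σ).2 h), Finset.mem_image_of_mem y (Finset.mem_univ σ)⟩
      set y' : T → ℝ := fun σ => min (y σ) t with hy'def
      have hy'R : ∀ σ, σ ∈ R → y' σ = t := by
        intro σ hσ; rw [hy'def]; simp only
        rw [(hmemR σ).1 hσ]; exact min_eq_right htM.le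
      have hy'n : ∀ σ, σ ∉ R → y' σ = y σ := by
        intro σ hσ; exact min_eq_left (hnotR σ hσ)
      have himg : (Finset.univ.image y').card ≤ n := by
        have hsub : Finset.univ.image y' ⊆ I2 := by
          intro v hv
          obtain ⟨σ, _, rfl⟩ := Finset.mem_image.1 hv
          by_cases hσ : σ ∈ R
          · rw [hy'R σ hσ]; exact htmem
          · rw [hy'n σ hσ, hI2def, Finset.mem_erase]
            exact ⟨fun h => hσ ((hmemR σ).2 h),
              Finset.mem_image_of_mem y (Finset.mem_univ σ)⟩
        calc (Finset.univ.image y').card ≤ I2.card := Finset.card_le_card hsub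
          _ = (Finset.univ.image y).card - 1 := by rw [hI2def, Finset.card_erase_of_mem hMmem]
          _ ≤ n := by omega
      have key1 : ∀ σ, y σ = y' σ + (if σ ∈ R then M - t else 0) := by
        intro σ
        by_cases hσ : σ ∈ R
        · rw [hy'R σ hσ, if_pos hσ, (hmemR σ).1 hσ]; ring
        · rw [hy'n σ hσ, if_neg hσ]; ring
      have key2 : ∀ σ τ, max (y τ - y σ) 0
          = max (y' τ - y' σ) 0 + (if τ ∈ R ∧ σ ∉ R then M - t else 0) := by
        intro σ τ
        by_cases hτ : τ ∈ R
        · by_cases hσ : σ ∈ R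
          · rw [if_neg (by tauto), (hmemR σ).1 hσ, (hmemR τ).1 hτ, hy'R σ hσ, hy'R τ hτ]
            simp
          · rw [if_pos ⟨hτ, hσ⟩, (hmemR τ).1 hτ, hy'R τ hτ, hy'n σ hσ]
            have h1 : (0:ℝ) ≤ t - y σ := by linarith [hnotR σ hσ]
            rw [max_eq_left (by linarith), max_eq_left h1]
            ring
        · rw [if_neg (by tauto), hy'n τ hτ]
          by_cases hσ : σ ∈ R
          · rw [hy'R σ hσ, (hmemR σ).1 hσ]
            have h1 : y τ ≤ t := hnotR τ hτ
            rw [max_eq_right (by linarith), max_eq_right (by linarith), add_zero]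
          · rw [hy'n σ hσ, add_zero]
      have hdec1 : ∑ σ, d σ * y σ
          = (∑ σ, d σ * y' σ) + (M - t) * ∑ σ ∈ R, d σ := by
        calc ∑ σ, d σ * y σ
            = ∑ σ, (d σ * y' σ + (if σ ∈ R then (M - t) * d σ else 0)) := by
              refine Finset.sum_congr rfl fun σ _ => ?_
              rw [key1 σ]; by_cases hσ : σ ∈ R <;> simp [hσ] <;> ring
          _ = (∑ σ, d σ * y' σ) + ∑ σ, (if σ ∈ R then (M - t) * d σ else 0) :=
              Finset.sum_add_distrib
          _ = (∑ σ, d σ * y' σ) + (M - t) * ∑ σ ∈ R, d σ := by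
              rw [Finset.sum_ite_mem, Finset.univ_inter, ← Finset.mul_sum]
      have hdec2 : ∑ σ, ∑ τ, b σ τ * max (y τ - y σ) 0
          = (∑ σ, ∑ τ, b σ τ * max (y' τ - y' σ) 0)
            + (M - t) * ∑ σ ∈ Rᶜ, ∑ τ ∈ R, b σ τ := by
        have hpt : ∀ σ τ, b σ τ * max (y τ - y σ) 0
            = b σ τ * max (y' τ - y' σ) 0
              + (if σ ∈ Rᶜ then (if τ ∈ R then (M - t) * b σ τ else 0) else 0) := by
          intro σ τ
          rw [key2 σ τ, mul_add]
          congr 1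
          by_cases hσ : σ ∈ R <;> by_cases hτ : τ ∈ R <;>
            simp [hσ, hτ, Finset.mem_compl] <;> ring
        calc ∑ σ, ∑ τ, b σ τ * max (y τ - y σ) 0
            = ∑ σ, ((∑ τ, b σ τ * max (y' τ - y' σ) 0)
                + ∑ τ, (if σ ∈ Rᶜ then (if τ ∈ R then (M - t) * b σ τ else 0) else 0)) := by
              refine Finset.sum_congr rfl fun σ _ => ?_
              rw [← Finset.sum_add_distrib]
              exact Finset.sum_congr rfl fun τ _ => hpt σ τ
          _ = (∑ σ, ∑ τ, b σ τ * max (y' τ - y' σ) 0)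
              + ∑ σ, ∑ τ, (if σ ∈ Rᶜ then (if τ ∈ R then (M - t) * b σ τ else 0) else 0) :=
              Finset.sum_add_distrib
          _ = (∑ σ, ∑ τ, b σ τ * max (y' τ - y' σ) 0)
              + (M - t) * ∑ σ ∈ Rᶜ, ∑ τ ∈ R, b σ τ := by
              congr 1
              have h1 : ∀ σ : T, ∑ τ, (if σ ∈ Rᶜ then (if τ ∈ R then (M - t) * b σ τ else 0) else 0)
                  = (if σ ∈ Rᶜ then (M - t) * ∑ τ ∈ R, b σ τ else 0) := by
                intro σ
                by_cases hσ : σ ∈ Rᶜ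
                · simp only [if_pos hσ]
                  rw [Finset.sum_ite_mem, Finset.univ_inter, ← Finset.mul_sum]
                · simp [hσ]
              rw [Finset.sum_congr rfl fun σ _ => h1 σ, Finset.sum_ite_mem, Finset.univ_inter,
                ← Finset.mul_sum]
      rw [hdec1, hdec2]
      have hMt : (0:ℝ) ≤ M - t := by linarith
      have := mul_le_mul_of_nonneg_left (hcut R) hMt
      have hih := ih y' himg
      linarith

/-- Feasibility for the finite Gale/Hoffman flow problem. -/
lemma finite_gale {T : Type*} [Fintype T] [DecidableEq T] (d : T → ℝ) (b : T → T → ℝ)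
    (hb : ∀ σ τ, 0 ≤ b σ τ) (hd : ∑ σ, d σ = 0)
    (hcut : ∀ R : Finset T, ∑ σ ∈ R, d σ ≤ ∑ σ ∈ Rᶜ, ∑ τ ∈ R, b σ τ) :
    ∃ x : T → T → ℝ, (∀ σ τ, 0 ≤ x σ τ) ∧ (∀ σ τ, x σ τ ≤ b σ τ) ∧
      ∀ σ, (∑ τ, x τ σ) - (∑ τ, x σ τ) = d σ := by
  classical
  set K : Set (T → T → ℝ) := Set.univ.pi (fun σ => Set.univ.pi (fun τ => Set.Icc 0 (b σ τ)))
    with hKdef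
  let Λ : (T → T → ℝ) →ₗ[ℝ] (T → ℝ) :=
    { toFun := fun x σ => (∑ τ, x τ σ) - ∑ τ, x σ τ
      map_add' := by
        intro x z; funext σ
        simp [Finset.sum_add_distrib]; ring
      map_smul' := by
        intro c x; funext σ
        simp only [smul_eq_mul, Pi.smul_apply, RingHom.id_apply]
        rw [← Finset.mul_sum, ← Finset.mul_sum]
        ring }
  have hΛ : ∀ (x : T → T → ℝ) σ, Λ x σ = (∑ τ, x τ σ) - ∑ τ, x σ τ := fun _ _ => rfl
  set S : Set (T → ℝ) := Λ '' K with hSdef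
  have hKconv : Convex ℝ K :=
    convex_pi fun σ _ => convex_pi fun τ _ => convex_Icc _ _
  have hKcomp : IsCompact K :=
    isCompact_univ_pi fun σ => isCompact_univ_pi fun τ => isCompact_Icc
  have hScomp : IsCompact S := hKcomp.image Λ.continuous_of_finiteDimensional
  have hSconv : Convex ℝ S := hKconv.linear_image Λ
  by_cases hdS : d ∈ S
  · obtain ⟨x, hxK, hΛx⟩ := hdS
    refine ⟨x, ?_, ?_, ?_⟩
    · intro σ τ; exact ((hxK σ (Set.mem_univ _)) τ (Set.mem_univ _)).1
    · intro σ τ; exact ((hxK σ (Set.mem_univ _)) τ (Set.mem_univ _)).2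
    · intro σ; rw [← hΛ x σ, hΛx]
  · exfalso
    obtain ⟨f, u, hfs, hfd⟩ :=
      geometric_hahn_banach_closed_point hSconv hScomp.isClosed hdS
    set y : T → ℝ := fun σ => f (Pi.single σ 1 : T → ℝ) with hydef
    have hfy : ∀ z : T → ℝ, f z = ∑ σ, z σ * y σ := by
      intro z
      have hz : z = ∑ σ, z σ • (Pi.single σ 1 : T → ℝ) := by
        funext j
        simp [Finset.sum_apply, Pi.single_apply]
      conv_lhs => rw [hz]
      rw [map_sum]
      exact Finset.sum_congr rfl fun σ _ => by rw [_root_.map_smul, smul_eq_mul]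
    set x : T → T → ℝ := fun σ τ => if y σ < y τ then b σ τ else 0 with hxdef
    have hxK : x ∈ K := by
      intro σ _; intro τ _
      by_cases h : y σ < y τ <;> simp [hxdef, h, hb σ τ, le_refl]
    have hfx : f (Λ x) = ∑ σ, ∑ τ, b σ τ * max (y τ - y σ) 0 := by
      rw [hfy]
      have h1 : ∀ σ, Λ x σ * y σ = (∑ τ, x τ σ * y σ) - ∑ τ, x σ τ * y σ := by
        intro σ; rw [hΛ, sub_mul, Finset.sum_mul, Finset.sum_mul]
      rw [Finset.sum_congr rfl fun σ _ => h1 σ, Finset.sum_sub_distrib]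
      have h2 : ∑ σ : T, ∑ τ : T, x τ σ * y σ = ∑ σ : T, ∑ τ : T, x σ τ * y τ :=
        Finset.sum_comm
      rw [h2, ← Finset.sum_sub_distrib]
      refine Finset.sum_congr rfl fun σ _ => ?_
      rw [← Finset.sum_sub_distrib]
      refine Finset.sum_congr rfl fun τ _ => ?_
      rw [← mul_sub]
      by_cases h : y σ < y τ
      · rw [hxdef]; simp only [if_pos h]
        rw [max_eq_left (by linarith)]
      · rw [hxdef]; simp only [if_neg h]
        rw [max_eq_right (by linarith), mul_zero, zero_mul]
    have hcut' : ∀ R : Finset T, ∑ σ ∈ R, d σ ≤ ∑ σ ∈ Rᶜ, ∑ τ ∈ R, b σ τ := hcut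
    have hlc := layer_cake_aux d b hb hd hcut' (Finset.univ.image y).card y le_rfl
    have h3 : f d = ∑ σ, d σ * y σ := hfy d
    have h4 : f (Λ x) < u := hfs _ ⟨x, hxK, rfl⟩
    rw [hfx] at h4
    rw [h3] at hfd
    linarith

/-- Finite additivity of a signed measure over a finite disjoint union. -/
lemma sm_biUnion {α : Type*} [MeasurableSpace α] (s : SignedMeasure α) {ι : Type*}
    (R : Finset ι) (f : ι → Set α) (hf : ∀ i, MeasurableSet (f i))
    (hd : ∀ i ∈ R, ∀ j ∈ R, i ≠ j → Disjoint (f i) (f j)) :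
    s (⋃ i ∈ R, f i) = ∑ i ∈ R, s (f i) := by
  classical
  induction R using Finset.induction_on with
  | empty => simp
  | @insert a R ha ih =>
    rw [Finset.set_biUnion_insert, Finset.sum_insert ha]
    rw [MeasureTheory.VectorMeasure.of_union ?hdisj (hf a)
      (Finset.measurableSet_biUnion R fun i _ => hf i)]
    · rw [ih (fun i hi => fun j hj hij =>
        hd i (Finset.mem_insert_of_mem hi) j (Finset.mem_insert_of_mem hj) hij)]
    case hdisj =>
      rw [Set.disjoint_iUnion₂_right]
      intro i hi
      exact hd a (Finset.mem_insert_self a R) i (Finset.mem_insert_of_mem hi)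
        (fun h => ha (h ▸ hi))


lemma exists_approx {J : Type*} [MeasurableSpace J] (φ ψ : SignedMeasure (J × J))
    (hle : φ ≤ ψ)
    (hcut : ∀ X : Set J, MeasurableSet X → φ (X ×ˢ Xᶜ) ≤ ψ (Xᶜ ×ˢ X)) (F : Finset (Set J)) :
    ∃ v : Set (J × J) → ℝ,
      (∀ S, MeasurableSet S → 0 ≤ v S) ∧
      (∀ S, MeasurableSet S → v S ≤ ψ S - φ S) ∧
      (∀ S S', MeasurableSet S → MeasurableSet S' → Disjoint S S' →
        v (S ∪ S') = v S + v S') ∧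
      (∀ A ∈ F, MeasurableSet A → v ((univ : Set J) ×ˢ A) - v (A ×ˢ (univ : Set J))
          = φ (A ×ˢ (univ : Set J)) - φ ((univ : Set J) ×ˢ A)) := by
  classical
  -- the nonnegative "capacity" measure
  have h0 : (0 : VectorMeasure (J × J) ℝ) ≤[univ] (ψ - φ) := by
    refine (VectorMeasure.restrict_le_restrict_iff _ _ MeasurableSet.univ).2 ?_
    intro j hj _
    rw [VectorMeasure.zero_apply, VectorMeasure.sub_apply, sub_nonneg]
    exact hle j hj
  set bm : Measure (J × J) := (ψ - φ).toMeasureOfZeroLE univ MeasurableSet.univ h0 with hbmdef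
  haveI : IsFiniteMeasure bm := SignedMeasure.toMeasureOfZeroLE_finite _ h0 MeasurableSet.univ
  have hbm : ∀ S : Set (J × J), MeasurableSet S → (bm S).toReal = ψ S - φ S := by
    intro S hS
    rw [hbmdef, SignedMeasure.toMeasureOfZeroLE_apply _ h0 MeasurableSet.univ hS]
    rw [ENNReal.coe_toReal, NNReal.coe_mk, Set.univ_inter, VectorMeasure.sub_apply]
  -- the finite algebra
  set F' : Finset (Set J) := F.filter (fun A => MeasurableSet A) with hF'def
  have hF'meas : ∀ A : {A // A ∈ F'}, MeasurableSet (A : Set J) := by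
    intro A
    exact (Finset.mem_filter.1 A.2).2
  set T := ({A // A ∈ F'} → Bool) with hTdef
  set atom : T → Set J := fun σ => ⋂ A : {A // A ∈ F'}, (if σ A then (A : Set J) else (A : Set J)ᶜ)
    with hatomdef
  have hatom_meas : ∀ σ : T, MeasurableSet (atom σ) := by
    intro σ
    refine MeasurableSet.iInter fun A => ?_
    by_cases h : σ A <;> simp [h, hF'meas A, (hF'meas A).compl]
  have hmem_iff : ∀ (x : J) (σ : T), x ∈ atom σ → ∀ A : {A // A ∈ F'},
      (σ A = true ↔ x ∈ (A : Set J)) := by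
    intro x σ hx A
    have := Set.mem_iInter.1 hx A
    by_cases h : σ A
    · simp only [h, if_true] at this; simp [h, this]
    · simp only [Bool.not_eq_true] at h
      simp only [h, if_false] at this
      simp [h]; exact this
  set tag : J → T := fun x A => decide (x ∈ (A : Set J)) with htagdef
  have htag : ∀ x : J, x ∈ atom (tag x) := by
    intro x
    refine Set.mem_iInter.2 fun A => ?_
    by_cases h : x ∈ (A : Set J)
    · simp [htagdef, h]
    · simp [htagdef, h]
  have hdisj : ∀ σ τ : T, σ ≠ τ → Disjoint (atom σ) (atom τ) := by
    intro σ τ hστ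
    rw [Set.disjoint_left]
    intro x hxσ hxτ
    refine hστ (funext fun A => ?_)
    have h1 := hmem_iff x σ hxσ A
    have h2 := hmem_iff x τ hxτ A
    by_cases h : x ∈ (A : Set J)
    · rw [h1.2 h, h2.2 h]
    · cases hσA : σ A
      · cases hτA : τ A
        · rfl
        · exact absurd (h2.1 hτA) h
      · exact absurd (h1.1 hσA) h
  have hcover : ⋃ σ ∈ (Finset.univ : Finset T), atom σ = (univ : Set J) := by
    refine Set.eq_univ_of_forall fun x => ?_
    exact Set.mem_biUnion (Finset.mem_univ (tag x)) (htag x)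
  have hA_eq : ∀ Ah : {A // A ∈ F'},
      (Ah : Set J) = ⋃ τ ∈ Finset.univ.filter (fun τ : T => τ Ah = true), atom τ := by
    intro Ah
    ext x
    constructor
    · intro hx
      refine Set.mem_biUnion (Finset.mem_filter.2 ⟨Finset.mem_univ _, ?_⟩) (htag x)
      simp [htagdef, hx]
    · intro hx
      obtain ⟨τ, hτ, hxτ⟩ := Set.mem_iUnion₂.1 hx
      exact (hmem_iff x τ hxτ Ah).1 (Finset.mem_filter.1 hτ).2
  have hA_inter : ∀ (Ah : {A // A ∈ F'}) (τ : T),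
      (Ah : Set J) ∩ atom τ = if τ Ah = true then atom τ else ∅ := by
    intro Ah τ
    by_cases h : τ Ah = true
    · rw [if_pos h, Set.inter_eq_right]
      intro x hx
      exact (hmem_iff x τ hx Ah).1 h
    · rw [if_neg h]
      ext x
      simp only [Set.mem_inter_iff, Set.mem_empty_iff_false, iff_false, not_and]
      intro hxA hxτ
      exact h ((hmem_iff x τ hxτ Ah).2 hxA)
  -- rectangles
  have hrect : ∀ σ τ : T, MeasurableSet ((atom σ) ×ˢ (atom τ)) :=
    fun σ τ => (hatom_meas σ).prod (hatom_meas τ)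
  set d : T → ℝ := fun σ => φ ((atom σ) ×ˢ (univ : Set J)) - φ ((univ : Set J) ×ˢ (atom σ))
    with hddef
  set bR : T → T → ℝ := fun σ τ => (bm ((atom σ) ×ˢ (atom τ))).toReal with hbRdef
  have hbR0 : ∀ σ τ, 0 ≤ bR σ τ := fun σ τ => ENNReal.toReal_nonneg
  have hXmeas : ∀ R : Finset T, MeasurableSet (⋃ σ ∈ R, atom σ) :=
    fun R => Finset.measurableSet_biUnion _ (fun σ _ => hatom_meas σ)
  have hμX : ∀ R : Finset T,
      φ ((⋃ σ ∈ R, atom σ) ×ˢ (univ : Set J)) - φ ((univ : Set J) ×ˢ (⋃ σ ∈ R, atom σ))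
        = ∑ σ ∈ R, d σ := by
    intro R
    have h1 : (⋃ σ ∈ R, atom σ) ×ˢ (univ : Set J)
        = ⋃ σ ∈ R, ((atom σ) ×ˢ (univ : Set J)) := by
      ext p
      simp only [Set.mem_prod, Set.mem_iUnion₂, Set.mem_iUnion, Set.mem_univ, and_true]
    have h2 : (univ : Set J) ×ˢ (⋃ σ ∈ R, atom σ)
        = ⋃ σ ∈ R, ((univ : Set J) ×ˢ (atom σ)) := by
      ext p
      simp only [Set.mem_prod, Set.mem_iUnion₂, Set.mem_iUnion, Set.mem_univ, true_and]
    rw [h1, h2,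
      sm_biUnion φ R _ (fun σ => (hatom_meas σ).prod MeasurableSet.univ)
        (fun i _ j _ hij => Set.Disjoint.set_prod_left (hdisj i j hij) _ _),
      sm_biUnion φ R _ (fun σ => MeasurableSet.univ.prod (hatom_meas σ))
        (fun i _ j _ hij => Set.Disjoint.set_prod_right (hdisj i j hij) _ _),
      ← Finset.sum_sub_distrib]
  have hd0 : ∑ σ, d σ = 0 := by
    rw [← hμX Finset.univ, hcover, sub_self]
  have hcutT : ∀ R : Finset T, ∑ σ ∈ R, d σ ≤ ∑ σ ∈ Rᶜ, ∑ τ ∈ R, bR σ τ := by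
    intro R
    set X := ⋃ σ ∈ R, atom σ with hXdef
    have hX : MeasurableSet X := hXmeas R
    have hXc : Xᶜ = ⋃ σ ∈ Rᶜ, atom σ := by
      ext y
      simp only [Set.mem_compl_iff, hXdef, Set.mem_iUnion₂, not_exists]
      constructor
      · intro hy
        exact ⟨tag y, Finset.mem_compl.2 (fun h => hy (tag y) h (htag y)), htag y⟩
      · rintro ⟨σ, hσ, hyσ⟩ τ hτ hyτ
        have hne : τ ≠ σ := fun h => (Finset.mem_compl.1 hσ) (h ▸ hτ)
        exact Set.disjoint_left.1 (hdisj τ σ hne) hyτ hyσ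
    have e1 : φ (X ×ˢ (univ : Set J)) = φ (X ×ˢ X) + φ (X ×ˢ Xᶜ) := by
      have h : X ×ˢ (univ : Set J) = (X ×ˢ X) ∪ (X ×ˢ Xᶜ) := by
        rw [← Set.prod_union, Set.union_compl_self]
      rw [h, MeasureTheory.VectorMeasure.of_union
        (Disjoint.set_prod_right disjoint_compl_right _ _) (hX.prod hX) (hX.prod hX.compl)]
    have e2 : φ ((univ : Set J) ×ˢ X) = φ (X ×ˢ X) + φ (Xᶜ ×ˢ X) := by
      have h : (univ : Set J) ×ˢ X = (X ×ˢ X) ∪ (Xᶜ ×ˢ X) := by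
        rw [← Set.union_prod, Set.union_compl_self]
      rw [h, MeasureTheory.VectorMeasure.of_union
        (Disjoint.set_prod_left disjoint_compl_right _ _) (hX.prod hX) (hX.compl.prod hX)]
    have e3 : ∑ σ ∈ R, d σ = φ (X ×ˢ Xᶜ) - φ (Xᶜ ×ˢ X) := by
      have := hμX R
      rw [← hXdef] at this
      rw [← this, e1, e2]
      ring
    have e5 : (bm (Xᶜ ×ˢ X)).toReal = ∑ σ ∈ Rᶜ, ∑ τ ∈ R, bR σ τ := by
      have hXcX : Xᶜ ×ˢ X = ⋃ σ ∈ Rᶜ, ⋃ τ ∈ R, ((atom σ) ×ˢ (atom τ)) := by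
        rw [hXc, hXdef]
        ext p
        simp only [Set.mem_prod, Set.mem_iUnion₂]
        constructor
        · rintro ⟨⟨σ, hσ, h1⟩, ⟨τ, hτ, h2⟩⟩
          exact ⟨σ, hσ, τ, hτ, h1, h2⟩
        · rintro ⟨σ, hσ, τ, hτ, h1, h2⟩
          exact ⟨⟨σ, hσ, h1⟩, ⟨τ, hτ, h2⟩⟩
      rw [hXcX, measure_biUnion_finset
        (fun i _ j _ hij => Set.disjoint_left.2 (by
          intro p hp hp'
          simp only [Set.mem_iUnion₂] at hp hp'
          obtain ⟨τ, _, hpτ⟩ := hp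
          obtain ⟨τ', _, hpτ'⟩ := hp'
          exact Set.disjoint_left.1 (Set.Disjoint.set_prod_left (hdisj i j hij) (atom τ) (atom τ'))
            hpτ hpτ'))
        (fun σ _ => Finset.measurableSet_biUnion _ (fun τ _ => hrect σ τ))]
      rw [ENNReal.toReal_sum (fun σ _ => measure_ne_top bm _)]
      refine Finset.sum_congr rfl fun σ _ => ?_
      rw [measure_biUnion_finset
        (fun i _ j _ hij => Set.Disjoint.set_prod_right (hdisj i j hij) _ _)
        (fun τ _ => hrect σ τ),
        ENNReal.toReal_sum (fun τ _ => measure_ne_top bm _)]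
    have e4 : φ (X ×ˢ Xᶜ) ≤ ψ (Xᶜ ×ˢ X) := hcut X hX
    have e6 : (bm (Xᶜ ×ˢ X)).toReal = ψ (Xᶜ ×ˢ X) - φ (Xᶜ ×ˢ X) :=
      hbm _ (hX.compl.prod hX)
    rw [e3, ← e5, e6]
    linarith
  obtain ⟨x, hx0, hxb, hxflow⟩ := finite_gale d bR hbR0 hd0 hcutT
  set c : T → T → ℝ := fun σ τ => if bR σ τ = 0 then 0 else x σ τ / bR σ τ with hcdef
  have hc0 : ∀ σ τ, 0 ≤ c σ τ := by
    intro σ τ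
    rw [hcdef]
    dsimp only
    split_ifs with h
    · exact le_refl 0
    · exact div_nonneg (hx0 σ τ) (hbR0 σ τ)
  have hc1 : ∀ σ τ, c σ τ ≤ 1 := by
    intro σ τ
    rw [hcdef]
    dsimp only
    split_ifs with h
    · exact zero_le_one
    · exact (div_le_one (lt_of_le_of_ne (hbR0 σ τ) (Ne.symm h))).2 (hxb σ τ)
  have hcb : ∀ σ τ, c σ τ * bR σ τ = x σ τ := by
    intro σ τ
    rw [hcdef]
    dsimp only
    split_ifs with h
    · rw [zero_mul]
      exact (le_antisymm (h ▸ hxb σ τ) (hx0 σ τ)).symm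
    · exact div_mul_cancel₀ _ h
  set v : Set (J × J) → ℝ :=
    fun S => ∑ σ : T, ∑ τ : T, c σ τ * (bm (S ∩ ((atom σ) ×ˢ (atom τ)))).toReal with hvdef
  refine ⟨v, ?_, ?_, ?_, ?_⟩
  · intro S _
    exact Finset.sum_nonneg fun σ _ => Finset.sum_nonneg fun τ _ =>
      mul_nonneg (hc0 σ τ) ENNReal.toReal_nonneg
  · intro S hS
    have h1 : v S ≤ ∑ σ : T, ∑ τ : T, (bm (S ∩ ((atom σ) ×ˢ (atom τ)))).toReal := by
      refine Finset.sum_le_sum fun σ _ => Finset.sum_le_sum fun τ _ => ?_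
      calc c σ τ * (bm (S ∩ ((atom σ) ×ˢ (atom τ)))).toReal
          ≤ 1 * (bm (S ∩ ((atom σ) ×ˢ (atom τ)))).toReal :=
            mul_le_mul_of_nonneg_right (hc1 σ τ) ENNReal.toReal_nonneg
        _ = _ := one_mul _
    have h2 : ∑ σ : T, ∑ τ : T, (bm (S ∩ ((atom σ) ×ˢ (atom τ)))).toReal = (bm S).toReal := by
      have hScover : S = ⋃ σ ∈ (Finset.univ : Finset T), ⋃ τ ∈ (Finset.univ : Finset T),
          (S ∩ ((atom σ) ×ˢ (atom τ))) := by
        ext p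
        simp only [Set.mem_iUnion₂, Set.mem_inter_iff, Set.mem_prod]
        constructor
        · intro hp
          exact ⟨tag p.1, Finset.mem_univ _, tag p.2, Finset.mem_univ _, hp,
            htag p.1, htag p.2⟩
        · rintro ⟨σ, _, τ, _, hp, _⟩
          exact hp
      conv_rhs => rw [hScover]
      rw [measure_biUnion_finset
        (fun i _ j _ hij => Set.disjoint_left.2 (by
          intro p hp hp'
          simp only [Set.mem_iUnion₂, Set.mem_inter_iff] at hp hp'
          obtain ⟨τ, _, _, hpτ⟩ := hp
          obtain ⟨τ', _, _, hpτ'⟩ := hp'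
          exact Set.disjoint_left.1 (Set.Disjoint.set_prod_left (hdisj i j hij) (atom τ) (atom τ'))
            hpτ hpτ'))
        (fun σ _ => Finset.measurableSet_biUnion _ (fun τ _ => hS.inter (hrect σ τ)))]
      rw [ENNReal.toReal_sum (fun σ _ => measure_ne_top bm _)]
      refine Finset.sum_congr rfl fun σ _ => ?_
      rw [measure_biUnion_finset
        (fun i _ j _ hij => Disjoint.mono Set.inter_subset_right Set.inter_subset_right
          (Set.Disjoint.set_prod_right (hdisj i j hij) _ _))
        (fun τ _ => hS.inter (hrect σ τ)),
        ENNReal.toReal_sum (fun τ _ => measure_ne_top bm _)]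
    calc v S ≤ (bm S).toReal := h1.trans_eq h2
      _ = ψ S - φ S := hbm S hS
  · intro S S' hS hS' hdisjS
    rw [hvdef]
    dsimp only
    rw [← Finset.sum_add_distrib]
    refine Finset.sum_congr rfl fun σ _ => ?_
    rw [← Finset.sum_add_distrib]
    refine Finset.sum_congr rfl fun τ _ => ?_
    rw [← mul_add]
    congr 1
    rw [Set.union_inter_distrib_right,
      measure_union (Disjoint.mono Set.inter_subset_left Set.inter_subset_left hdisjS)
        (hS'.inter (hrect σ τ)),
      ENNReal.toReal_add (measure_ne_top bm _) (measure_ne_top bm _)]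
  · intro A hAF hAmeas
    have hAF' : A ∈ F' := Finset.mem_filter.2 ⟨hAF, hAmeas⟩
    set Ah : {A // A ∈ F'} := ⟨A, hAF'⟩ with hAhdef
    have hv1 : v ((univ : Set J) ×ˢ A)
        = ∑ σ : T, ∑ τ : T, (if τ Ah = true then x σ τ else 0) := by
      rw [hvdef]
      dsimp only
      refine Finset.sum_congr rfl fun σ _ => Finset.sum_congr rfl fun τ _ => ?_
      have h : ((univ : Set J) ×ˢ A) ∩ ((atom σ) ×ˢ (atom τ))
          = if τ Ah = true then (atom σ) ×ˢ (atom τ) else ∅ := by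
        rw [Set.prod_inter_prod, Set.univ_inter]
        have : A ∩ atom τ = if τ Ah = true then atom τ else ∅ := hA_inter Ah τ
        rw [this]
        split_ifs <;> simp
      rw [h]
      split_ifs with hτ
      · exact hcb σ τ
      · simp
    have hv2 : v (A ×ˢ (univ : Set J))
        = ∑ σ : T, ∑ τ : T, (if σ Ah = true then x σ τ else 0) := by
      rw [hvdef]
      dsimp only
      refine Finset.sum_congr rfl fun σ _ => Finset.sum_congr rfl fun τ _ => ?_
      have h : (A ×ˢ (univ : Set J)) ∩ ((atom σ) ×ˢ (atom τ))
          = if σ Ah = true then (atom σ) ×ˢ (atom τ) else ∅ := by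
        rw [Set.prod_inter_prod, Set.univ_inter]
        have : A ∩ atom σ = if σ Ah = true then atom σ else ∅ := hA_inter Ah σ
        rw [this]
        split_ifs <;> simp
      rw [h]
      split_ifs with hσ
      · exact hcb σ τ
      · simp
    have hswap : ∑ σ : T, ∑ τ : T, (if σ Ah = true then x σ τ else 0)
        = ∑ σ : T, ∑ τ : T, (if τ Ah = true then x τ σ else 0) := Finset.sum_comm
    have hAunion : A = ⋃ τ ∈ Finset.univ.filter (fun τ : T => τ Ah = true), atom τ :=
      hA_eq Ah
    have hμA : φ (A ×ˢ (univ : Set J)) - φ ((univ : Set J) ×ˢ A)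
        = ∑ τ ∈ Finset.univ.filter (fun τ : T => τ Ah = true), d τ := by
      conv_lhs => rw [hAunion]
      exact hμX _
    rw [hv1, hv2, hswap, ← Finset.sum_sub_distrib]
    have : ∀ σ : T, (∑ τ : T, (if τ Ah = true then x σ τ else 0))
        - (∑ τ : T, (if τ Ah = true then x τ σ else 0))
        = ∑ τ : T, (if τ Ah = true then x σ τ - x τ σ else 0) := by
      intro σ
      rw [← Finset.sum_sub_distrib]
      refine Finset.sum_congr rfl fun τ _ => ?_
      split_ifs <;> simp
    rw [Finset.sum_congr rfl fun σ _ => this σ, Finset.sum_comm, hμA]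
    rw [Finset.sum_filter]
    refine Finset.sum_congr rfl fun τ _ => ?_
    split_ifs with hτ
    · rw [← hxflow τ, Finset.sum_sub_distrib]
    · simp

open Filter

/-- **Generalized Hoffman Circulation Theorem.**
Let `(J, 𝒜)` be a standard Borel space and `φ`, `ψ` finite signed Borel measures on `J × J`.
There exists a circulation `α` (a finite signed measure on `J × J` with equal marginals)
with `φ ≤ α ≤ ψ` (setwise) iff `φ ≤ ψ` and `φ(X × Xᶜ) ≤ ψ(Xᶜ × X)` for every Borel `X`. -/
theorem stmt_0 {J : Type*} [MeasurableSpace J] [StandardBorelSpace J]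
    (φ ψ : SignedMeasure (J × J)) :
    (∃ α : SignedMeasure (J × J),
        (∀ A : Set J, MeasurableSet A → α (A ×ˢ (univ : Set J)) = α ((univ : Set J) ×ˢ A)) ∧
        φ ≤ α ∧ α ≤ ψ) ↔
      (φ ≤ ψ ∧ ∀ X : Set J, MeasurableSet X → φ (X ×ˢ Xᶜ) ≤ ψ (Xᶜ ×ˢ X)) := by
  constructor
  · rintro ⟨α, hα, hφα, hαψ⟩
    refine ⟨le_trans hφα hαψ, fun X hX => ?_⟩
    have h1 : α (X ×ˢ (univ : Set J)) = α (X ×ˢ X) + α (X ×ˢ Xᶜ) := by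
      have h : X ×ˢ (univ : Set J) = (X ×ˢ X) ∪ (X ×ˢ Xᶜ) := by
        rw [← Set.prod_union, Set.union_compl_self]
      rw [h, MeasureTheory.VectorMeasure.of_union
        (Set.Disjoint.set_prod_right disjoint_compl_right _ _) (hX.prod hX) (hX.prod hX.compl)]
    have h2 : α ((univ : Set J) ×ˢ X) = α (X ×ˢ X) + α (Xᶜ ×ˢ X) := by
      have h : (univ : Set J) ×ˢ X = (X ×ˢ X) ∪ (Xᶜ ×ˢ X) := by
        rw [← Set.union_prod, Set.union_compl_self]
      rw [h, MeasureTheory.VectorMeasure.of_union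
        (Set.Disjoint.set_prod_left disjoint_compl_right _ _) (hX.prod hX) (hX.compl.prod hX)]
    have h3 : α (X ×ˢ Xᶜ) = α (Xᶜ ×ˢ X) := by
      have := hα X hX
      linarith
    calc φ (X ×ˢ Xᶜ) ≤ α (X ×ˢ Xᶜ) :=
          (MeasureTheory.VectorMeasure.le_iff.1 hφα) _ (hX.prod hX.compl)
      _ = α (Xᶜ ×ˢ X) := h3
      _ ≤ ψ (Xᶜ ×ˢ X) := (MeasureTheory.VectorMeasure.le_iff.1 hαψ) _ (hX.compl.prod hX)
  · rintro ⟨hle, hcut⟩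
    classical
    choose v hv0 hvb hvadd hvcon using fun F => exists_approx φ ψ hle hcut F
    set U : Ultrafilter (Finset (Set J)) := Ultrafilter.of Filter.atTop with hUdef
    have hU : (U : Filter (Finset (Set J))) ≤ Filter.atTop := Ultrafilter.of_le _
    have hex : ∀ S : Set (J × J), MeasurableSet S → ∃ r : ℝ,
        Filter.Tendsto (fun F => v F S) (U : Filter (Finset (Set J))) (nhds r) ∧
        0 ≤ r ∧ r ≤ ψ S - φ S := by
      intro S hS
      have hc : IsCompact (Set.Icc (0 : ℝ) (ψ S - φ S)) := isCompact_Icc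
      have hle' : (U.map (fun F => v F S) : Filter ℝ)
          ≤ Filter.principal (Set.Icc 0 (ψ S - φ S)) := by
        rw [Filter.le_principal_iff]
        exact Filter.mem_map.2 (Filter.univ_mem' fun F => ⟨hv0 F S hS, hvb F S hS⟩)
      obtain ⟨r, hrmem, hrle⟩ := hc.ultrafilter_le_nhds (U.map (fun F => v F S)) hle'
      exact ⟨r, hrle, hrmem.1, hrmem.2⟩
    set L : Set (J × J) → ℝ :=
      fun S => if h : MeasurableSet S then (hex S h).choose else 0 with hLdef
    have hLt : ∀ S, ∀ hS : MeasurableSet S,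
        Filter.Tendsto (fun F => v F S) (U : Filter (Finset (Set J))) (nhds (L S)) := by
      intro S hS
      rw [hLdef]
      dsimp only
      rw [dif_pos hS]
      exact (hex S hS).choose_spec.1
    have hL0 : ∀ S, MeasurableSet S → 0 ≤ L S := by
      intro S hS
      rw [hLdef]
      dsimp only
      rw [dif_pos hS]
      exact (hex S hS).choose_spec.2.1
    have hLb : ∀ S, MeasurableSet S → L S ≤ ψ S - φ S := by
      intro S hS
      rw [hLdef]
      dsimp only
      rw [dif_pos hS]
      exact (hex S hS).choose_spec.2.2
    have hLadd : ∀ S S', MeasurableSet S → MeasurableSet S' → Disjoint S S' →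
        L (S ∪ S') = L S + L S' := by
      intro S S' hS hS' hd
      refine tendsto_nhds_unique (hLt _ (hS.union hS')) ?_
      have h : (fun F => v F (S ∪ S')) = fun F => v F S + v F S' :=
        funext fun F => hvadd F S S' hS hS' hd
      rw [h]
      exact (hLt S hS).add (hLt S' hS')
    have hLempty : L ∅ = 0 := by
      have h := hLadd ∅ ∅ MeasurableSet.empty MeasurableSet.empty
        (Set.disjoint_left.2 fun x hx _ => absurd hx (Set.notMem_empty x))
      rw [Set.union_self] at h
      linarith
    have hLcon : ∀ A : Set J, MeasurableSet A →
        L ((univ : Set J) ×ˢ A) - L (A ×ˢ (univ : Set J))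
          = φ (A ×ˢ (univ : Set J)) - φ ((univ : Set J) ×ˢ A) := by
      intro A hA
      have h1 : Filter.Tendsto
          (fun F => v F ((univ : Set J) ×ˢ A) - v F (A ×ˢ (univ : Set J)))
          (U : Filter (Finset (Set J)))
          (nhds (L ((univ : Set J) ×ˢ A) - L (A ×ˢ (univ : Set J)))) :=
        (hLt _ (MeasurableSet.univ.prod hA)).sub (hLt _ (hA.prod MeasurableSet.univ))
      have h2 : ∀ᶠ F in (U : Filter (Finset (Set J))),
          v F ((univ : Set J) ×ˢ A) - v F (A ×ˢ (univ : Set J))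
            = φ (A ×ˢ (univ : Set J)) - φ ((univ : Set J) ×ˢ A) := by
        have hmem : Set.Ici ({A} : Finset (Set J)) ∈ (U : Filter (Finset (Set J))) :=
          hU (Filter.Ici_mem_atTop _)
        filter_upwards [hmem] with F hF
        have hAF : A ∈ F := Finset.singleton_subset_iff.1 hF
        exact hvcon F A hAF hA
      exact tendsto_nhds_unique (h1.congr' h2) tendsto_const_nhds
    have hLsum : ∀ f : ℕ → Set (J × J), (∀ i, MeasurableSet (f i)) →
        Pairwise (Function.onFun Disjoint f) → HasSum (fun i => L (f i)) (L (⋃ i, f i)) := by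
      intro f hf hdf
      have htailmeas : ∀ N : ℕ, MeasurableSet (⋃ i, f (i + N)) :=
        fun N => MeasurableSet.iUnion fun i => hf (i + N)
      have hfin : ∀ N : ℕ,
          L (⋃ i, f i) = (∑ i ∈ Finset.range N, L (f i)) + L (⋃ i, f (i + N)) := by
        intro N
        induction N with
        | zero => simp
        | succ N ihN =>
          have hsplit : (⋃ i, f (i + N)) = f N ∪ ⋃ i, f (i + (N + 1)) := by
            ext p
            simp only [Set.mem_iUnion, Set.mem_union]
            constructor
            · rintro ⟨i, hi⟩
              cases i with
              | zero => left; simpa using hi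
              | succ i =>
                right
                exact ⟨i, by rwa [show i + (N + 1) = i + 1 + N by omega]⟩
            · rintro (h | ⟨i, hi⟩)
              · exact ⟨0, by simpa using h⟩
              · exact ⟨i + 1, by rwa [show i + 1 + N = i + (N + 1) by omega]⟩
          have hdisjtail : Disjoint (f N) (⋃ i, f (i + (N + 1))) := by
            rw [Set.disjoint_iUnion_right]
            intro i
            exact hdf (by omega)
          rw [ihN, hsplit, hLadd (f N) _ (hf N) (htailmeas (N + 1)) hdisjtail,
            Finset.sum_range_succ]
          ring
      have hsummable : Summable (fun i => (ψ - φ) (f i)) :=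
        ((ψ - φ).m_iUnion hf hdf).summable
      have htail0 : Filter.Tendsto (fun N => L (⋃ i, f (i + N))) Filter.atTop (nhds 0) := by
        have hub : ∀ N, L (⋃ i, f (i + N)) ≤ ∑' i, (ψ - φ) (f (i + N)) := by
          intro N
          have h1 := hLb _ (htailmeas N)
          have h2 : (ψ - φ) (⋃ i, f (i + N)) = ∑' i, (ψ - φ) (f (i + N)) :=
            (ψ - φ).of_disjoint_iUnion (fun i => hf (i + N)) (fun i j hij => hdf (by omega))
          rw [MeasureTheory.VectorMeasure.sub_apply] at h2
          linarith
        exact squeeze_zero (fun N => hL0 _ (htailmeas N)) hub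
          (tendsto_sum_nat_add fun i => (ψ - φ) (f i))
      have hpart : Filter.Tendsto (fun N => ∑ i ∈ Finset.range N, L (f i))
          Filter.atTop (nhds (L (⋃ i, f i))) := by
        have h : (fun N => ∑ i ∈ Finset.range N, L (f i))
            = fun N => L (⋃ i, f i) - L (⋃ i, f (i + N)) := by
          funext N
          have := hfin N
          linarith
        rw [h]
        simpa using tendsto_const_nhds.sub htail0
      exact (hasSum_iff_tendsto_nat_of_nonneg (fun i => hL0 _ (hf i)) _).2 hpart
    set m : ∀ S : Set (J × J), MeasurableSet S → ENNReal :=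
      fun S _ => ENNReal.ofReal (L S) with hmdef
    have hm0 : m ∅ MeasurableSet.empty = 0 := by
      rw [hmdef]
      dsimp only
      rw [hLempty, ENNReal.ofReal_zero]
    have hmadd : ∀ (f : ℕ → Set (J × J)) (hf : ∀ i, MeasurableSet (f i)),
        Pairwise (Function.onFun Disjoint f) →
        m (⋃ i, f i) (MeasurableSet.iUnion hf) = ∑' i, m (f i) (hf i) := by
      intro f hf hdf
      rw [hmdef]
      dsimp only
      rw [← (hLsum f hf hdf).tsum_eq,
        ENNReal.ofReal_tsum_of_nonneg (fun i => hL0 _ (hf i)) (hLsum f hf hdf).summable]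
    set G : MeasureTheory.Measure (J × J) := MeasureTheory.Measure.ofMeasurable m hm0 hmadd
      with hGdef
    have hGapply : ∀ S : Set (J × J), MeasurableSet S → G S = ENNReal.ofReal (L S) := by
      intro S hS
      rw [hGdef, MeasureTheory.Measure.ofMeasurable_apply S hS]
    haveI : MeasureTheory.IsFiniteMeasure G :=
      ⟨by rw [hGapply univ MeasurableSet.univ]; exact ENNReal.ofReal_lt_top⟩
    set γ : SignedMeasure (J × J) := G.toSignedMeasure with hγdef
    have hγ : ∀ S : Set (J × J), MeasurableSet S → γ S = L S := by
      intro S hS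
      rw [hγdef, MeasureTheory.Measure.toSignedMeasure_apply_measurable hS, measureReal_def, hGapply S hS,
        ENNReal.toReal_ofReal (hL0 S hS)]
    refine ⟨φ + γ, ?_, ?_, ?_⟩
    · intro A hA
      rw [MeasureTheory.VectorMeasure.add_apply, MeasureTheory.VectorMeasure.add_apply,
        hγ _ (hA.prod MeasurableSet.univ), hγ _ (MeasurableSet.univ.prod hA)]
      have := hLcon A hA
      linarith
    · refine MeasureTheory.VectorMeasure.le_iff.2 fun i hi => ?_
      rw [MeasureTheory.VectorMeasure.add_apply, hγ i hi]
      linarith [hL0 i hi]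
    · refine MeasureTheory.VectorMeasure.le_iff.2 fun i hi => ?_
      rw [MeasureTheory.VectorMeasure.add_apply, hγ i hi]
      linarith [hLb i hi]
end

section
/- Let (J, 𝒜) be a standard Borel space and let ψ be a finite nonnegative Borel measure on J × J. There exists a nonnegative circulation η on J × J with η(J × J) = 1 and η ≤ ψ (an ergodic circulation dominated by ψ) if and only if ∫ (1 + F)₊ dψ ≥ 1 for every potential F, where g₊ denotes the positive part of the function g. -/
open MeasureTheory Set

section helpers

variable {α : Type*} [MeasurableSpace α] {ψ : Measure α} [IsFiniteMeasure ψ]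

lemma integrable_of_bdd {g : α → ℝ} (hm : Measurable g) {C : ℝ} (hb : ∀ x, |g x| ≤ C) :
    Integrable g ψ := by
  refine Integrable.mono' (integrable_const C) hm.aestronglyMeasurable ?_
  exact Filter.Eventually.of_forall fun x => hb x

lemma memL1_of_bdd {g : α → ℝ} (hm : Measurable g) {C : ℝ} (hb : ∀ x, |g x| ≤ C) :
    MemLp g 1 ψ :=
  MemLp.of_bound hm.aestronglyMeasurable C (Filter.Eventually.of_forall fun x => hb x)

lemma toLp_eq_toLp {f g : α → ℝ} (h : f = g) (hf : MemLp f 1 ψ) (hg : MemLp g 1 ψ) :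
    hf.toLp f = hg.toLp g := by subst h; rfl

end helpers

section finiteDim

variable {J : Type*} [MeasurableSpace J] (ψ : Measure (J × J)) [IsFiniteMeasure ψ]

/-- The finite-dimensional separation step. -/
lemma finite_dim_step
    (hyp : ∀ f : J → ℝ, Measurable f → (∃ C, ∀ x, |f x| ≤ C) →
        1 ≤ ∫ p, max (1 + (f p.1 - f p.2)) 0 ∂ψ)
    (n : ℕ) (f : Fin n → J → ℝ) (hm : ∀ i, Measurable (f i))
    (hb : ∀ i, ∃ C, ∀ x, |f i x| ≤ C) {ε : ℝ} (hε : 0 < ε) :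
    ∃ h : J × J → ℝ, Measurable h ∧ (∀ x, h x ∈ Icc (0:ℝ) 1) ∧
      1 - ε ≤ ∫ p, h p ∂ψ ∧ ∀ i, |∫ p, h p * (f i p.1 - f i p.2) ∂ψ| ≤ ε := by
  classical
  -- basic integrability facts
  obtain hbC : ∀ i, ∃ C, ∀ x : J × J, |f i x.1 - f i x.2| ≤ C := by
    intro i; obtain ⟨C, hC⟩ := hb i
    exact ⟨C + C, fun x => (abs_sub (f i x.1) (f i x.2)).trans (add_le_add (hC _) (hC _))⟩
  set H : Set (J × J → ℝ) := {h | Measurable h ∧ ∀ x, h x ∈ Icc (0:ℝ) 1} with hH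
  have hint : ∀ h ∈ H, ∀ (g : J × J → ℝ), Measurable g → (∀ x, |g x| ≤ 1) →
      False ∨ True := fun _ _ _ _ _ => Or.inr trivial
  have hinth : ∀ h ∈ H, Integrable h ψ := by
    rintro h ⟨hm', hI⟩
    exact integrable_of_bdd hm' (C := 1) fun x => abs_le.2 ⟨by linarith [(hI x).1], (hI x).2⟩
  have hinthf : ∀ h ∈ H, ∀ i, Integrable (fun p => h p * (f i p.1 - f i p.2)) ψ := by
    rintro h ⟨hm', hI⟩ i
    obtain ⟨C, hC⟩ := hbC i
    refine integrable_of_bdd (hm'.mul (((hm i).comp measurable_fst).sub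
      ((hm i).comp measurable_snd))) (C := C) fun x => ?_
    rw [abs_mul]
    calc |h x| * |f i x.1 - f i x.2| ≤ 1 * C := by
          refine mul_le_mul ?_ (hC x) (abs_nonneg _) zero_le_one
          exact abs_le.2 ⟨by linarith [(hI x).1], (hI x).2⟩
      _ = C := one_mul C
  set vec : (J × J → ℝ) → (Fin (n + 1) → ℝ) :=
    fun h => Fin.cons (∫ p, h p ∂ψ) (fun i => ∫ p, h p * (f i p.1 - f i p.2) ∂ψ) with hvec
  set S : Set (Fin (n + 1) → ℝ) := vec '' H with hS
  have hSconv : Convex ℝ S := by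
    rintro x ⟨h₁, hh₁, rfl⟩ y ⟨h₂, hh₂, rfl⟩ a b ha hb' hab
    refine ⟨fun p => a * h₁ p + b * h₂ p, ⟨(hh₁.1.const_mul a).add (hh₂.1.const_mul b),
      fun p => ?_⟩, ?_⟩
    · have := (convex_Icc (0:ℝ) 1) (hh₁.2 p) (hh₂.2 p) ha hb' hab
      simpa [smul_eq_mul] using this
    · funext j
      refine Fin.cases ?_ (fun i => ?_) j
      · simp only [hvec, Fin.cons_zero, Pi.add_apply, Pi.smul_apply, smul_eq_mul]
        rw [integral_add ((hinth h₁ hh₁).const_mul a) ((hinth h₂ hh₂).const_mul b),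
          integral_const_mul, integral_const_mul]
      · simp only [hvec, Fin.cons_succ, Pi.add_apply, Pi.smul_apply, smul_eq_mul]
        have : ∀ p : J × J, (a * h₁ p + b * h₂ p) * (f i p.1 - f i p.2)
            = a * (h₁ p * (f i p.1 - f i p.2)) + b * (h₂ p * (f i p.1 - f i p.2)) := by
          intro p; ring
        rw [show (fun p => (a * h₁ p + b * h₂ p) * (f i p.1 - f i p.2))
            = fun p => a * (h₁ p * (f i p.1 - f i p.2)) + b * (h₂ p * (f i p.1 - f i p.2))
            from funext this]
        rw [integral_add ((hinthf h₁ hh₁ i).const_mul a) ((hinthf h₂ hh₂ i).const_mul b),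
          integral_const_mul, integral_const_mul]
  have hbmem : (Fin.cons 1 0 : Fin (n + 1) → ℝ) ∈ closure S := by
    by_contra hnot
    obtain ⟨f₀, u, hlt, hgt⟩ := geometric_hahn_banach_closed_point
      (hSconv.closure) isClosed_closure hnot
    set e : Fin (n + 1) → (Fin (n + 1) → ℝ) := fun i j => if i = j then 1 else 0 with he
    set t : ℝ := f₀ (e 0) with ht
    set a : Fin n → ℝ := fun i => f₀ (e i.succ) with ha
    have hexp : ∀ x : Fin (n + 1) → ℝ, f₀ x = x 0 * t + ∑ i : Fin n, x i.succ * a i := by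
      intro x
      have := LinearMap.pi_apply_eq_sum_univ (f₀ : (Fin (n+1) → ℝ) →ₗ[ℝ] ℝ) x
      simp only [ContinuousLinearMap.coe_coe] at this
      rw [this, Fin.sum_univ_succ]
      simp [smul_eq_mul, ht, ha, he]
    -- 0 < t
    have h0S : (0 : Fin (n + 1) → ℝ) ∈ S := by
      refine ⟨fun _ => 0, ⟨measurable_const, fun x => ⟨le_refl _, zero_le_one⟩⟩, ?_⟩
      funext j
      refine Fin.cases ?_ (fun i => ?_) j <;> simp [hvec]
    have hu0 : (0:ℝ) < u := by
      have := hlt 0 (subset_closure h0S); simpa using this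
    have htu : u < t := by
      have := hgt
      rw [hexp] at this
      simpa [Fin.cons_zero, Fin.cons_succ] using this
    have ht0 : 0 < t := hu0.trans htu
    -- define g
    set g : J → ℝ := fun y => ∑ i : Fin n, a i * f i y with hg
    have hgm : Measurable g := by
      apply Finset.measurable_sum
      intro i _; exact (hm i).const_mul _
    have hgb : ∃ C, ∀ x, |g x| ≤ C := by
      have : ∀ i : Fin n, ∃ C, ∀ x, |a i * f i x| ≤ C := by
        intro i; obtain ⟨C, hC⟩ := hb i
        exact ⟨|a i| * C, fun x => by
          rw [abs_mul]; exact mul_le_mul_of_nonneg_left (hC x) (abs_nonneg _)⟩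
      choose C hC using this
      refine ⟨∑ i, C i, fun x => ?_⟩
      exact (Finset.abs_sum_le_sum_abs _ _).trans (Finset.sum_le_sum fun i _ => hC i x)
    have hgdiff : ∀ p : J × J, g p.1 - g p.2 = ∑ i : Fin n, a i * (f i p.1 - f i p.2) := by
      intro p
      simp only [hg]
      rw [← Finset.sum_sub_distrib]
      congr 1; funext i; ring
    -- the maximizing h
    set hstar : J × J → ℝ := fun p => if 0 < t + (g p.1 - g p.2) then 1 else 0 with hhstar
    have hGm : Measurable fun p : J × J => t + (g p.1 - g p.2) :=
      measurable_const.add ((hgm.comp measurable_fst).sub (hgm.comp measurable_snd))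
    have hstarH : hstar ∈ H := by
      constructor
      · exact Measurable.ite (measurableSet_lt measurable_const hGm) measurable_const
          measurable_const
      · intro x; by_cases h : 0 < t + (g x.1 - g x.2) <;>
          simp [hhstar, h, zero_le_one]
    -- f₀ (vec hstar) = ∫ max (t + (g .1 - g .2)) 0
    have hmaxpt : ∀ p : J × J, hstar p * (t + (g p.1 - g p.2)) = max (t + (g p.1 - g p.2)) 0 := by
      intro p
      by_cases h : 0 < t + (g p.1 - g p.2)
      · simp [hhstar, h, max_eq_left h.le]
      · simp [hhstar, h, max_eq_right (not_lt.1 h)]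
    have hval : f₀ (vec hstar) = ∫ p, max (t + (g p.1 - g p.2)) 0 ∂ψ := by
      rw [hexp]
      simp only [hvec, Fin.cons_zero, Fin.cons_succ]
      have hstep : (∫ p, hstar p ∂ψ) * t
          + ∑ i : Fin n, (∫ p, hstar p * (f i p.1 - f i p.2) ∂ψ) * a i
          = ∫ p, hstar p * (t + (g p.1 - g p.2)) ∂ψ := by
        have expand : ∀ p : J × J, hstar p * (t + (g p.1 - g p.2))
            = hstar p * t + ∑ i : Fin n, (hstar p * (f i p.1 - f i p.2)) * a i := by
          intro p
          rw [hgdiff p, mul_add, Finset.mul_sum]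
          congr 1
          exact Finset.sum_congr rfl fun i _ => by ring
        rw [show (fun p => hstar p * (t + (g p.1 - g p.2)))
            = fun p => hstar p * t + ∑ i : Fin n, (hstar p * (f i p.1 - f i p.2)) * a i
            from funext expand]
        rw [integral_add ((hinth hstar hstarH).mul_const t)
          (integrable_finset_sum _ fun i _ => (hinthf hstar hstarH i).mul_const (a i))]
        rw [integral_mul_const, integral_finset_sum _
          (fun i _ => (hinthf hstar hstarH i).mul_const (a i))]
        congr 1
        exact Finset.sum_congr rfl fun i _ => (integral_mul_const _ _).symm
      rw [hstep]
      congr 1; funext p; exact hmaxpt p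
    -- hypothesis gives t ≤ ∫ max(t + G) 0
    have hhyp := hyp (fun y => g y / t) (hgm.div_const t)
      (by obtain ⟨C, hC⟩ := hgb; exact ⟨C / t, fun x => by
        rw [abs_div, abs_of_pos ht0]; gcongr; exact hC x⟩)
    have hscale : ∀ p : J × J, max (t + (g p.1 - g p.2)) 0
        = t * max (1 + (g p.1 / t - g p.2 / t)) 0 := by
      intro p
      rw [mul_max_of_nonneg _ _ ht0.le, mul_zero]
      congr 1
      field_simp
    have hge : t ≤ ∫ p, max (t + (g p.1 - g p.2)) 0 ∂ψ := by
      rw [show (fun p : J × J => max (t + (g p.1 - g p.2)) 0)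
          = fun p => t * max (1 + (g p.1 / t - g p.2 / t)) 0 from funext hscale]
      rw [integral_const_mul]
      calc t = t * 1 := (mul_one t).symm
        _ ≤ t * ∫ p, max (1 + (g p.1 / t - g p.2 / t)) 0 ∂ψ :=
          mul_le_mul_of_nonneg_left hhyp ht0.le
    have hless : f₀ (vec hstar) < u := hlt _ (subset_closure ⟨hstar, hstarH, rfl⟩)
    rw [hval] at hless
    linarith
  -- extract approximation from closure
  rw [Metric.mem_closure_iff] at hbmem
  obtain ⟨s, hsS, hds⟩ := hbmem ε hε
  obtain ⟨h, hh, rfl⟩ := hsS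
  refine ⟨h, hh.1, hh.2, ?_, ?_⟩
  · have := (dist_le_pi_dist (Fin.cons 1 0 : Fin (n+1) → ℝ) (vec h) 0).trans hds.le
    simp only [hvec, Fin.cons_zero, Real.dist_eq] at this
    have := abs_sub_le_iff.1 this
    linarith [this.1]
  · intro i
    have := (dist_le_pi_dist (Fin.cons 1 0 : Fin (n+1) → ℝ) (vec h) i.succ).trans hds.le
    simp only [hvec, Fin.cons_succ, Real.dist_eq, Pi.zero_apply, zero_sub, abs_neg] at this
    simpa using this
end finiteDim

section weakdual

variable {J : Type*} [MeasurableSpace J] (ψ : Measure (J × J)) [IsFiniteMeasure ψ]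

lemma integrable_mul_h (h : J × J → ℝ) (hm : Measurable h) (hI : ∀ x, h x ∈ Icc (0:ℝ) 1)
    (g : Lp ℝ 1 ψ) : Integrable (fun p => g p * h p) ψ := by
  refine Integrable.mono' (L1.integrable_coeFn g).norm
    ((Lp.aestronglyMeasurable g).mul hm.aestronglyMeasurable) ?_
  refine Filter.Eventually.of_forall fun p => ?_
  rw [norm_mul]
  calc ‖g p‖ * ‖h p‖ ≤ ‖g p‖ * 1 := by
        refine mul_le_mul_of_nonneg_left ?_ (norm_nonneg _)
        rw [Real.norm_eq_abs, abs_le]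
        exact ⟨by linarith [(hI p).1], (hI p).2⟩
    _ = ‖g p‖ := mul_one _

/-- Integration against a `[0,1]`-valued density, as a continuous linear functional on `L¹`. -/
noncomputable def intCLM (h : J × J → ℝ) (hm : Measurable h) (hI : ∀ x, h x ∈ Icc (0:ℝ) 1) :
    Lp ℝ 1 ψ →L[ℝ] ℝ := by
  refine LinearMap.mkContinuous
    { toFun := fun g => ∫ p, g p * h p ∂ψ
      map_add' := ?_
      map_smul' := ?_ } 1 ?_
  · intro g₁ g₂
    have hae : (fun p => (↑↑(g₁ + g₂) : J × J → ℝ) p * h p)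
        =ᵐ[ψ] fun p => g₁ p * h p + g₂ p * h p := by
      filter_upwards [Lp.coeFn_add g₁ g₂] with p hp
      rw [hp, Pi.add_apply, add_mul]
    show (∫ p, (↑↑(g₁ + g₂) : J × J → ℝ) p * h p ∂ψ)
        = (∫ p, (g₁ : J × J → ℝ) p * h p ∂ψ) + ∫ p, (g₂ : J × J → ℝ) p * h p ∂ψ
    rw [integral_congr_ae hae,
      integral_add (integrable_mul_h ψ h hm hI g₁) (integrable_mul_h ψ h hm hI g₂)]
  · intro c g
    have hae : (fun p => (↑↑(c • g) : J × J → ℝ) p * h p)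
        =ᵐ[ψ] fun p => c * (g p * h p) := by
      filter_upwards [Lp.coeFn_smul c g] with p hp
      rw [hp, Pi.smul_apply, smul_eq_mul, mul_assoc]
    show (∫ p, (↑↑(c • g) : J × J → ℝ) p * h p ∂ψ)
        = RingHom.id ℝ c • ∫ p, (g : J × J → ℝ) p * h p ∂ψ
    rw [RingHom.id_apply, smul_eq_mul, integral_congr_ae hae, integral_const_mul]
  · intro g
    simp only [LinearMap.coe_mk, AddHom.coe_mk, one_mul]
    calc ‖∫ p, g p * h p ∂ψ‖ ≤ ∫ p, ‖g p * h p‖ ∂ψ := norm_integral_le_integral_norm _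
      _ ≤ ∫ p, ‖g p‖ ∂ψ := by
          refine integral_mono (integrable_mul_h ψ h hm hI g).norm
            (L1.integrable_coeFn g).norm fun p => ?_
          rw [norm_mul]
          calc ‖g p‖ * ‖h p‖ ≤ ‖g p‖ * 1 := by
                refine mul_le_mul_of_nonneg_left ?_ (norm_nonneg _)
                rw [Real.norm_eq_abs, abs_le]
                exact ⟨by linarith [(hI p).1], (hI p).2⟩
            _ = ‖g p‖ := mul_one _
      _ = ‖g‖ := (L1.norm_eq_integral_norm g).symm

lemma intCLM_apply (h : J × J → ℝ) (hm : Measurable h) (hI : ∀ x, h x ∈ Icc (0:ℝ) 1)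
    (g : Lp ℝ 1 ψ) : intCLM ψ h hm hI g = ∫ p, g p * h p ∂ψ := rfl

end weakdual

section stepB

variable {J : Type*} [MeasurableSpace J] (ψ : Measure (J × J)) [IsFiniteMeasure ψ]

/-- The constant function 1 as an element of L¹. -/
noncomputable def oneL : Lp ℝ 1 ψ :=
  (memL1_of_bdd (g := fun _ : J × J => (1:ℝ)) measurable_const (C := 1)
    (fun _ => by norm_num)).toLp _

/-- Positive functionals dominated by integration against ψ. -/
def posSet : Set (WeakDual ℝ (Lp ℝ 1 ψ)) :=
  {φ | ∀ g : Lp ℝ 1 ψ, 0 ≤ᵐ[ψ] (g : J × J → ℝ) → 0 ≤ φ g ∧ φ g ≤ ∫ p, g p ∂ψ}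

lemma isClosed_posSet : IsClosed (posSet ψ) := by
  have : posSet ψ = ⋂ (g : Lp ℝ 1 ψ), ⋂ (_ : 0 ≤ᵐ[ψ] (g : J × J → ℝ)),
      ({φ : WeakDual ℝ (Lp ℝ 1 ψ) | 0 ≤ φ g} ∩ {φ | φ g ≤ ∫ p, g p ∂ψ}) := by
    ext φ; simp [posSet, Set.mem_iInter]
  rw [this]
  refine isClosed_iInter fun g => isClosed_iInter fun _ => IsClosed.inter ?_ ?_
  · exact isClosed_le continuous_const (WeakDual.eval_continuous g)
  · exact isClosed_le (WeakDual.eval_continuous g) continuous_const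

/-- The compact convex set of candidate functionals. -/
def CC : Set (WeakDual ℝ (Lp ℝ 1 ψ)) :=
  WeakDual.polar ℝ (Metric.ball 0 1) ∩ posSet ψ

lemma isClosed_CC : IsClosed (CC ψ) :=
  (WeakDual.isClosed_polar ℝ _).inter (isClosed_posSet ψ)

lemma isCompact_CC : IsCompact (CC ψ) :=
  (WeakDual.isCompact_polar ℝ (Metric.ball_mem_nhds 0 one_pos)).inter_right
    (isClosed_posSet ψ)

/-- The integration functional as an element of the weak dual. -/
noncomputable def intWD (h : J × J → ℝ) (hm : Measurable h) (hI : ∀ x, h x ∈ Icc (0:ℝ) 1) :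
    WeakDual ℝ (Lp ℝ 1 ψ) := intCLM ψ h hm hI

lemma intWD_apply (h : J × J → ℝ) (hm : Measurable h) (hI : ∀ x, h x ∈ Icc (0:ℝ) 1)
    (g : Lp ℝ 1 ψ) : intWD ψ h hm hI g = ∫ p, g p * h p ∂ψ := rfl

lemma intWD_mem_CC (h : J × J → ℝ) (hm : Measurable h) (hI : ∀ x, h x ∈ Icc (0:ℝ) 1) :
    intWD ψ h hm hI ∈ CC ψ := by
  constructor
  · rw [WeakDual.polar_def]
    intro g hg
    rw [intWD_apply]
    calc ‖∫ p, g p * h p ∂ψ‖ ≤ ∫ p, ‖g p * h p‖ ∂ψ := norm_integral_le_integral_norm _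
      _ ≤ ∫ p, ‖g p‖ ∂ψ := by
          refine integral_mono (integrable_mul_h ψ h hm hI g).norm
            (L1.integrable_coeFn g).norm fun p => ?_
          rw [norm_mul]
          calc ‖g p‖ * ‖h p‖ ≤ ‖g p‖ * 1 := by
                refine mul_le_mul_of_nonneg_left ?_ (norm_nonneg _)
                rw [Real.norm_eq_abs, abs_le]
                exact ⟨by linarith [(hI p).1], (hI p).2⟩
            _ = ‖g p‖ := mul_one _
      _ = ‖g‖ := (L1.norm_eq_integral_norm g).symm
      _ ≤ 1 := by
          have := Metric.mem_ball.1 hg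
          rw [dist_zero_right] at this
          exact this.le
  · intro g hg
    rw [intWD_apply]
    constructor
    · refine integral_nonneg_of_ae ?_
      filter_upwards [hg] with p hp
      exact mul_nonneg hp (hI p).1
    · refine integral_mono_ae (integrable_mul_h ψ h hm hI g) (L1.integrable_coeFn g) ?_
      filter_upwards [hg] with p hp
      exact mul_le_of_le_one_right hp (hI p).2

lemma exists_phi
    (hyp : ∀ f : J → ℝ, Measurable f → (∃ C, ∀ x, |f x| ≤ C) →
        1 ≤ ∫ p, max (1 + (f p.1 - f p.2)) 0 ∂ψ) :
    ∃ φ : WeakDual ℝ (Lp ℝ 1 ψ),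
      (∀ g : Lp ℝ 1 ψ, 0 ≤ᵐ[ψ] (g : J × J → ℝ) → 0 ≤ φ g ∧ φ g ≤ ∫ p, g p ∂ψ) ∧
      1 ≤ φ (oneL ψ) ∧
      ∀ f' : J → ℝ, Measurable f' → (∃ C, ∀ x, |f' x| ≤ C) →
        ∀ hL : MemLp (fun p : J × J => f' p.1 - f' p.2) 1 ψ,
          φ (hL.toLp _) = 0 := by
  classical
  set ι := Finset (J → ℝ) × {ε : ℝ // 0 < ε} with hι
  haveI : Nonempty ι := ⟨⟨∅, ⟨1, one_pos⟩⟩⟩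
  set Z : ι → Set (WeakDual ℝ (Lp ℝ 1 ψ)) := fun i =>
    CC ψ ∩ ({φ | 1 - (i.2 : ℝ) ≤ φ (oneL ψ)} ∩
      ⋂ (f' : J → ℝ) (_ : f' ∈ i.1) (_ : Measurable f') (_ : ∃ C, ∀ x, |f' x| ≤ C)
        (hL : MemLp (fun p : J × J => f' p.1 - f' p.2) 1 ψ),
          {φ | |φ (hL.toLp _)| ≤ (i.2 : ℝ)}) with hZ
  have hZclosed : ∀ i, IsClosed (Z i) := by
    intro i
    refine (isClosed_CC ψ).inter (IsClosed.inter ?_ ?_)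
    · exact isClosed_le continuous_const (WeakDual.eval_continuous _)
    · refine isClosed_iInter fun f' => isClosed_iInter fun _ => isClosed_iInter fun _ =>
        isClosed_iInter fun _ => isClosed_iInter fun hL => ?_
      exact isClosed_le (continuous_abs.comp (WeakDual.eval_continuous _)) continuous_const
  have hZcomp : ∀ i, IsCompact (Z i) := fun i => (isCompact_CC ψ).inter_right
    ((isClosed_le continuous_const (WeakDual.eval_continuous _)).inter
      (by
        refine isClosed_iInter fun f' => isClosed_iInter fun _ => isClosed_iInter fun _ =>
          isClosed_iInter fun _ => isClosed_iInter fun hL => ?_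
        exact isClosed_le (continuous_abs.comp (WeakDual.eval_continuous _)) continuous_const))
  have hZdir : Directed (fun x1 x2 : Set (WeakDual ℝ (Lp ℝ 1 ψ)) => x1 ⊇ x2) Z := by
    intro a b
    refine ⟨⟨a.1 ∪ b.1, ⟨min (a.2 : ℝ) (b.2 : ℝ), lt_min a.2.2 b.2.2⟩⟩, ?_, ?_⟩
    · rintro φ ⟨hφC, hone, hrest⟩
      refine ⟨hφC, ?_, ?_⟩
      · have : (min (a.2 : ℝ) (b.2 : ℝ)) ≤ (a.2 : ℝ) := min_le_left _ _
        calc (1 : ℝ) - a.2 ≤ 1 - min (a.2 : ℝ) (b.2 : ℝ) := by linarith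
          _ ≤ φ (oneL ψ) := hone
      · simp only [Set.mem_iInter] at hrest ⊢
        intro f' hf' hm hb hL
        have h1 := hrest f' (Finset.mem_union_left _ hf') hm hb hL
        simp only [Set.mem_setOf_eq] at h1 ⊢
        exact h1.trans (min_le_left _ _)
    · rintro φ ⟨hφC, hone, hrest⟩
      refine ⟨hφC, ?_, ?_⟩
      · have : (min (a.2 : ℝ) (b.2 : ℝ)) ≤ (b.2 : ℝ) := min_le_right _ _
        calc (1 : ℝ) - b.2 ≤ 1 - min (a.2 : ℝ) (b.2 : ℝ) := by linarith
          _ ≤ φ (oneL ψ) := hone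
      · simp only [Set.mem_iInter] at hrest ⊢
        intro f' hf' hm hb hL
        have h1 := hrest f' (Finset.mem_union_right _ hf') hm hb hL
        simp only [Set.mem_setOf_eq] at h1 ⊢
        exact h1.trans (min_le_right _ _)
  have hZne : ∀ i, (Z i).Nonempty := by
    rintro ⟨s, ε, hε⟩
    set s' := s.filter (fun f' => Measurable f' ∧ ∃ C, ∀ x, |f' x| ≤ C) with hs'
    set n := s'.card with hn
    set F : Fin n → J → ℝ := fun k => (s'.equivFin.symm k : J → ℝ) with hF
    have hFm : ∀ k, Measurable (F k) := fun k =>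
      (Finset.mem_filter.1 (s'.equivFin.symm k).2).2.1
    have hFb : ∀ k, ∃ C, ∀ x, |F k x| ≤ C := fun k =>
      (Finset.mem_filter.1 (s'.equivFin.symm k).2).2.2
    obtain ⟨h, hhm, hhI, hmass, hvals⟩ := finite_dim_step ψ hyp n F hFm hFb hε
    refine ⟨intWD ψ h hhm hhI, intWD_mem_CC ψ h hhm hhI, ?_, ?_⟩
    · show 1 - (ε : ℝ) ≤ intWD ψ h hhm hhI (oneL ψ)
      rw [intWD_apply]
      have hae : (fun p => (oneL ψ : J × J → ℝ) p * h p) =ᵐ[ψ] h := by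
        filter_upwards [MemLp.coeFn_toLp
          (memL1_of_bdd (g := fun _ : J × J => (1:ℝ)) measurable_const (C := 1)
            (fun _ => by norm_num))] with p hp
        show (oneL ψ : J × J → ℝ) p * h p = h p
        rw [show (oneL ψ : J × J → ℝ) p = 1 from hp, one_mul]
      rw [integral_congr_ae hae]
      exact hmass
    · simp only [Set.mem_iInter]
      intro f' hf's hm' hb' hL
      have hf'mem : f' ∈ s' := by
        rw [hs', Finset.mem_filter]; exact ⟨hf's, hm', hb'⟩
      set k := s'.equivFin ⟨f', hf'mem⟩ with hk
      have hFk : F k = f' := by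
        show ((s'.equivFin.symm (s'.equivFin ⟨f', hf'mem⟩)) : J → ℝ) = f'
        rw [Equiv.symm_apply_apply]
      show |intWD ψ h hhm hhI (hL.toLp _)| ≤ ε
      rw [intWD_apply]
      have hae : (fun p => (hL.toLp _ : J × J → ℝ) p * h p)
          =ᵐ[ψ] fun p => h p * (F k p.1 - F k p.2) := by
        filter_upwards [hL.coeFn_toLp] with p hp
        rw [hp, mul_comm, hFk]
      rw [integral_congr_ae hae]
      exact hvals k
  obtain ⟨φ, hφ⟩ := IsCompact.nonempty_iInter_of_directed_nonempty_isCompact_isClosed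
    Z hZdir hZne hZcomp hZclosed
  rw [Set.mem_iInter] at hφ
  refine ⟨φ, (hφ ⟨∅, ⟨1, one_pos⟩⟩).1.2, ?_, ?_⟩
  · refine le_of_forall_pos_le_add fun ε hε => ?_
    have := (hφ ⟨∅, ⟨ε, hε⟩⟩).2.1
    simp only [Set.mem_setOf_eq] at this
    linarith
  · intro f' hm' hb' hL
    have habs : ∀ ε : ℝ, 0 < ε → |φ (hL.toLp _)| ≤ ε := by
      intro ε hε
      have := (hφ ⟨{f'}, ⟨ε, hε⟩⟩).2.2
      simp only [Set.mem_iInter] at this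
      exact this f' (Finset.mem_singleton_self f') hm' hb' hL
    have : |φ (hL.toLp _)| ≤ 0 := by
      refine le_of_forall_pos_le_add fun ε hε => ?_
      have := habs ε hε; linarith
    exact abs_nonpos_iff.1 this

end stepB

section stepC

variable {J : Type*} [MeasurableSpace J] (ψ : Measure (J × J)) [IsFiniteMeasure ψ]

lemma ind_memL1 {A : Set (J × J)} (hA : MeasurableSet A) :
    MemLp (A.indicator (fun _ => (1:ℝ))) 1 ψ :=
  memL1_of_bdd (measurable_const.indicator hA) (C := 1)
    (fun x => by by_cases h : x ∈ A <;> simp [h])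

/-- Indicator of a measurable set as an element of L¹. -/
noncomputable def indL (A : Set (J × J)) (hA : MeasurableSet A) : Lp ℝ 1 ψ :=
  (ind_memL1 ψ hA).toLp _

lemma indL_coeFn {A : Set (J × J)} (hA : MeasurableSet A) :
    ⇑(indL ψ A hA) =ᵐ[ψ] A.indicator (fun _ => (1:ℝ)) :=
  (ind_memL1 ψ hA).coeFn_toLp

lemma indL_congr {A B : Set (J × J)} (h : A = B) (hA : MeasurableSet A)
    (hB : MeasurableSet B) : indL ψ A hA = indL ψ B hB :=
  toLp_eq_toLp (by rw [h]) _ _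

lemma norm_indL (A : Set (J × J)) (hA : MeasurableSet A) :
    ‖indL ψ A hA‖ = (ψ A).toReal := by
  rw [L1.norm_eq_integral_norm]
  have hae : (fun p => ‖(indL ψ A hA : J × J → ℝ) p‖)
      =ᵐ[ψ] A.indicator (fun _ => (1:ℝ)) := by
    filter_upwards [(ind_memL1 ψ hA).coeFn_toLp] with p hp
    rw [show (indL ψ A hA : J × J → ℝ) p = A.indicator (fun _ => (1:ℝ)) p from hp]
    by_cases h : p ∈ A <;> simp [h]
  rw [integral_congr_ae hae, integral_indicator_const (1:ℝ) hA, smul_eq_mul, mul_one, measureReal_def]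

lemma key
    (hyp : ∀ f : J → ℝ, Measurable f → (∃ C, ∀ x, |f x| ≤ C) →
        1 ≤ ∫ p, max (1 + (f p.1 - f p.2)) 0 ∂ψ) :
    ∃ η : Measure (J × J), η.fst = η.snd ∧ η univ = 1 ∧ η ≤ ψ := by
  classical
  obtain ⟨φ, hφP, hφ1, hφcirc⟩ := exists_phi ψ hyp
  -- values on indicators
  have hind : ∀ (A : Set (J × J)) (hA : MeasurableSet A),
      0 ≤ φ (indL ψ A hA) ∧ φ (indL ψ A hA) ≤ (ψ A).toReal := by
    intro A hA
    have h0 : 0 ≤ᵐ[ψ] ⇑(indL ψ A hA) := by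
      filter_upwards [indL_coeFn ψ hA] with p hp
      rw [hp]; by_cases h : p ∈ A <;> simp [h]
    obtain ⟨h1, h2⟩ := hφP (indL ψ A hA) h0
    refine ⟨h1, h2.trans (le_of_eq ?_)⟩
    rw [integral_congr_ae (indL_coeFn ψ hA),
      integral_indicator_const (1:ℝ) hA, smul_eq_mul, mul_one, measureReal_def]
  have hempty : ∀ h : MeasurableSet (∅ : Set (J × J)), indL ψ ∅ h = 0 := by
    intro h
    have hfun : (∅ : Set (J × J)).indicator (fun _ => (1:ℝ)) = (0 : J × J → ℝ) := by
      funext p; simp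
    have h2 := toLp_eq_toLp hfun (ind_memL1 ψ h) MemLp.zero
    rw [MemLp.toLp_zero] at h2
    exact h2
  -- finite additivity
  have hadd : ∀ (A B : Set (J × J)) (hA : MeasurableSet A) (hB : MeasurableSet B),
      Disjoint A B → φ (indL ψ (A ∪ B) (hA.union hB))
        = φ (indL ψ A hA) + φ (indL ψ B hB) := by
    intro A B hA hB hd
    have hfun : (A ∪ B).indicator (fun _ => (1:ℝ))
        = A.indicator (fun _ => (1:ℝ)) + B.indicator (fun _ => (1:ℝ)) := by
      funext p
      rw [Set.indicator_union_of_disjoint hd]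
      rfl
    have := toLp_eq_toLp hfun (ind_memL1 ψ (hA.union hB))
      ((ind_memL1 ψ hA).add (ind_memL1 ψ hB))
    rw [MemLp.toLp_add (ind_memL1 ψ hA) (ind_memL1 ψ hB)] at this
    rw [show indL ψ (A ∪ B) (hA.union hB) = indL ψ A hA + indL ψ B hB from this, map_add]
  -- countable additivity data
  have mU : ∀ ⦃A : ℕ → Set (J × J)⦄ (hA : ∀ i, MeasurableSet (A i)),
      Pairwise (Function.onFun Disjoint A) →
      ENNReal.ofReal (φ (indL ψ (⋃ i, A i) (MeasurableSet.iUnion hA)))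
        = ∑' i, ENNReal.ofReal (φ (indL ψ (A i) (hA i))) := by
    intro A hA hdisj
    set U := ⋃ i, A i with hUdef
    have hU : MeasurableSet U := MeasurableSet.iUnion hA
    set Un : ℕ → Set (J × J) := fun n => ⋃ k ∈ Finset.range n, A k with hUndef
    have hUn : ∀ n, MeasurableSet (Un n) := fun n =>
      (Finset.range n).measurableSet_biUnion (fun k _ => hA k)
    have hUnmono : Monotone Un := fun a b hab =>
      Set.biUnion_subset_biUnion_left (Finset.range_subset_range.2 hab)
    have hUnU : ⋃ n, Un n = U := by
      ext p
      simp only [Set.mem_iUnion, hUdef]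
      constructor
      · rintro ⟨n, hp⟩
        obtain ⟨k, _, hk⟩ := Set.mem_iUnion₂.1 hp
        exact ⟨k, hk⟩
      · rintro ⟨k, hk⟩
        exact ⟨k + 1, Set.mem_iUnion₂.2 ⟨k, Finset.self_mem_range_succ k, hk⟩⟩
    have hUnsub : ∀ n, Un n ⊆ U := fun n => by
      rw [← hUnU]; exact Set.subset_iUnion Un n
    have hpartial : ∀ n, ∑ k ∈ Finset.range n, φ (indL ψ (A k) (hA k))
        = φ (indL ψ (Un n) (hUn n)) := by
      intro n
      induction n with
      | zero =>
          have h0 : Un 0 = (∅ : Set (J × J)) := by simp [hUndef]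
          rw [Finset.sum_range_zero,
            indL_congr ψ h0 (hUn 0) MeasurableSet.empty, hempty _, map_zero]
      | succ n ih =>
          have hUnsucc : Un (n + 1) = Un n ∪ A n := by
            rw [hUndef]
            simp only
            rw [show Finset.range (n + 1) = insert n (Finset.range n) from Finset.range_add_one,
              Finset.set_biUnion_insert, Set.union_comm]
          have hdisj' : Disjoint (Un n) (A n) := by
            refine Set.disjoint_left.2 fun p hp hpA => ?_
            obtain ⟨k, hk, hpk⟩ := Set.mem_iUnion₂.1 hp
            have hkn : k ≠ n := by
              intro h; subst h; exact absurd hk (by simp)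
            exact Set.disjoint_left.1 (hdisj hkn) hpk hpA
          rw [Finset.sum_range_succ, ih,
            indL_congr ψ hUnsucc (hUn (n + 1)) ((hUn n).union (hA n)),
            hadd _ _ (hUn n) (hA n) hdisj']
    have htendL : Filter.Tendsto (fun n => indL ψ (Un n) (hUn n)) Filter.atTop
        (nhds (indL ψ U hU)) := by
      rw [tendsto_iff_norm_sub_tendsto_zero]
      have hdiff : ∀ n, indL ψ U hU - indL ψ (Un n) (hUn n)
          = indL ψ (U \ Un n) (hU.diff (hUn n)) := by
        intro n
        have hfun : (U \ Un n).indicator (fun _ => (1:ℝ))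
            = U.indicator (fun _ => (1:ℝ)) - (Un n).indicator (fun _ => (1:ℝ)) :=
          Set.indicator_sdiff (hUnsub n) _
        have := toLp_eq_toLp hfun (ind_memL1 ψ (hU.diff (hUn n)))
          ((ind_memL1 ψ hU).sub (ind_memL1 ψ (hUn n)))
        rw [MemLp.toLp_sub (ind_memL1 ψ hU) (ind_memL1 ψ (hUn n))] at this
        exact this.symm
      have hnorm : ∀ n, ‖indL ψ (Un n) (hUn n) - indL ψ U hU‖
          = (ψ (U \ Un n)).toReal := by
        intro n
        rw [norm_sub_rev, hdiff n, norm_indL]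
      simp only [hnorm]
      have hmeas_t : Filter.Tendsto (fun n => (ψ (Un n)).toReal) Filter.atTop
          (nhds (ψ U).toReal) := by
        have h1 : Filter.Tendsto (fun n => ψ (Un n)) Filter.atTop (nhds (ψ U)) := by
          have := tendsto_measure_iUnion_atTop (μ := ψ) hUnmono
          rwa [hUnU] at this
        exact (ENNReal.tendsto_toReal (measure_ne_top ψ U)).comp h1
      have hdiffval : ∀ n, (ψ (U \ Un n)).toReal
          = (ψ U).toReal - (ψ (Un n)).toReal := by
        intro n
        rw [measure_diff (hUnsub n) (hUn n).nullMeasurableSet (measure_ne_top ψ _),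
          ENNReal.toReal_sub_of_le (measure_mono (hUnsub n)) (measure_ne_top ψ U)]
      simp only [hdiffval]
      have := (tendsto_const_nhds : Filter.Tendsto (fun _ : ℕ => (ψ U).toReal)
        Filter.atTop (nhds ((ψ U).toReal))).sub hmeas_t
      simpa using this
    have htend : Filter.Tendsto (fun n => φ (indL ψ (Un n) (hUn n))) Filter.atTop
        (nhds (φ (indL ψ U hU))) :=
      ((WeakDual.toStrongDual φ).continuous.tendsto _).comp htendL
    have hHasSum : HasSum (fun k => φ (indL ψ (A k) (hA k))) (φ (indL ψ U hU)) := by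
      rw [hasSum_iff_tendsto_nat_of_nonneg (fun k => (hind _ (hA k)).1)]
      simp only [hpartial]
      exact htend
    rw [← hHasSum.tsum_eq,
      ENNReal.ofReal_tsum_of_nonneg (fun k => (hind _ (hA k)).1) hHasSum.summable]
  -- the measure
  set μ : Measure (J × J) := Measure.ofMeasurable
    (fun A hA => ENNReal.ofReal (φ (indL ψ A hA)))
    (by
      show ENNReal.ofReal (φ (indL ψ (∅ : Set (J × J)) MeasurableSet.empty)) = 0
      rw [hempty _, map_zero, ENNReal.ofReal_zero]) mU with hμdef
  have hμap : ∀ (A : Set (J × J)) (hA : MeasurableSet A),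
      μ A = ENNReal.ofReal (φ (indL ψ A hA)) := fun A hA =>
    Measure.ofMeasurable_apply A hA
  have hμle : μ ≤ ψ := by
    refine Measure.le_iff.2 fun A hA => ?_
    rw [hμap A hA]
    exact ENNReal.ofReal_le_of_le_toReal (hind A hA).2
  have honeL : indL ψ univ MeasurableSet.univ = oneL ψ :=
    toLp_eq_toLp (Set.indicator_univ _) _ _
  have hμuniv : 1 ≤ μ univ := by
    rw [hμap univ MeasurableSet.univ, honeL]
    exact ENNReal.one_le_ofReal.2 hφ1
  have hμtop : μ univ ≠ ⊤ :=
    ((Measure.le_iff'.1 hμle univ).trans_lt (measure_lt_top ψ univ)).ne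
  have hμne0 : μ univ ≠ 0 := (lt_of_lt_of_le zero_lt_one hμuniv).ne'
  -- marginals agree
  have hμfs : μ.fst = μ.snd := by
    ext B hB
    rw [Measure.fst_apply hB, Measure.snd_apply hB,
      hμap _ (measurable_fst hB), hμap _ (measurable_snd hB)]
    congr 1
    set f' : J → ℝ := B.indicator (fun _ => (1:ℝ)) with hf'def
    have hf'm : Measurable f' := measurable_const.indicator hB
    have hf'1 : ∀ y, |f' y| ≤ 1 := fun y => by
      by_cases h : y ∈ B <;> simp [hf'def, h]
    have hL : MemLp (fun p : J × J => f' p.1 - f' p.2) 1 ψ :=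
      memL1_of_bdd ((hf'm.comp measurable_fst).sub (hf'm.comp measurable_snd)) (C := 2)
        (fun x => (abs_sub _ _).trans (by linarith [hf'1 x.1, hf'1 x.2]))
    have hzero := hφcirc f' hf'm ⟨1, hf'1⟩ hL
    have hfun : (fun p : J × J => f' p.1 - f' p.2)
        = (Prod.fst ⁻¹' B).indicator (fun _ => (1:ℝ))
          - (Prod.snd ⁻¹' B).indicator (fun _ => (1:ℝ)) := by
      funext p
      simp only [Pi.sub_apply]
      by_cases h1 : p.1 ∈ B <;> by_cases h2 : p.2 ∈ B <;>
        simp [hf'def, Set.indicator_apply, h1, h2]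
    have heq := toLp_eq_toLp hfun hL
      ((ind_memL1 ψ (measurable_fst hB)).sub (ind_memL1 ψ (measurable_snd hB)))
    rw [MemLp.toLp_sub (ind_memL1 ψ (measurable_fst hB)) (ind_memL1 ψ (measurable_snd hB))] at heq
    rw [heq, map_sub] at hzero
    exact sub_eq_zero.1 hzero
  -- rescale
  refine ⟨(μ univ)⁻¹ • μ, ?_, ?_, ?_⟩
  · ext B hB
    rw [Measure.fst_apply hB, Measure.snd_apply hB, Measure.smul_apply,
      Measure.smul_apply]
    congr 1
    rw [← Measure.fst_apply hB, ← Measure.snd_apply hB, hμfs]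
  · rw [Measure.smul_apply, smul_eq_mul]
    exact ENNReal.inv_mul_cancel hμne0 hμtop
  · refine le_trans (Measure.le_iff.2 fun A hA => ?_) hμle
    rw [Measure.smul_apply, smul_eq_mul]
    calc (μ univ)⁻¹ * μ A ≤ 1 * μ A :=
          mul_le_mul_left (ENNReal.inv_le_one.2 hμuniv) _
      _ = μ A := one_mul _

end stepC

/-- **Existence of ergodic circulations dominated by a capacity.**
There is a nonnegative circulation `η` on `J × J` with `η(J × J) = 1` and `η ≤ ψ` iff
`∫ (1 + F)₊ dψ ≥ 1` for every potential `F(x,y) = f(x) - f(y)` with `f` bounded measurable. -/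
theorem stmt_2 {J : Type*} [MeasurableSpace J] [StandardBorelSpace J]
    (ψ : Measure (J × J)) [IsFiniteMeasure ψ] :
    (∃ η : Measure (J × J), η.fst = η.snd ∧ η univ = 1 ∧ η ≤ ψ) ↔
      (∀ f : J → ℝ, Measurable f → (∃ C, ∀ x, |f x| ≤ C) →
        1 ≤ ∫ p, max (1 + (f p.1 - f p.2)) 0 ∂ψ) := by
  constructor
  · rintro ⟨η, hfs, huniv, hle⟩ f hf ⟨C, hC⟩
    haveI : IsFiniteMeasure η := ⟨by rw [huniv]; exact ENNReal.one_lt_top⟩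
    have hd : Measurable fun p : J × J => f p.1 - f p.2 :=
      (hf.comp measurable_fst).sub (hf.comp measurable_snd)
    have hdb : ∀ p : J × J, |f p.1 - f p.2| ≤ C + C := fun p =>
      (abs_sub _ _).trans (add_le_add (hC _) (hC _))
    have hGm : Measurable fun p : J × J => max (1 + (f p.1 - f p.2)) 0 :=
      (measurable_const.add hd).max measurable_const
    have hGb : ∀ p : J × J, |max (1 + (f p.1 - f p.2)) 0| ≤ 1 + (C + C) := by
      intro p
      have h1 := abs_le.1 (hdb p)
      have h2 := abs_nonneg (f p.1 - f p.2)
      rw [abs_of_nonneg (le_max_right _ _)]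
      refine max_le (by linarith [h1.2]) (by linarith)
    have h1db : ∀ p : J × J, |1 + (f p.1 - f p.2)| ≤ 1 + (C + C) := by
      intro p
      have h1 := abs_le.1 (hdb p)
      rw [abs_le]
      exact ⟨by linarith [h1.1], by linarith [h1.2]⟩
    have h3 : ∫ p, (1 + (f p.1 - f p.2)) ∂η = 1 := by
      rw [integral_add (integrable_const 1) (integrable_of_bdd hd hdb),
        integral_sub
          (integrable_of_bdd (g := fun p : J × J => f p.1) (hf.comp measurable_fst)
            (C := C) fun p => hC p.1)
          (integrable_of_bdd (g := fun p : J × J => f p.2) (hf.comp measurable_snd)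
            (C := C) fun p => hC p.2)]
      have hfst : ∫ p : J × J, f p.1 ∂η = ∫ y, f y ∂η.fst := by
        rw [show η.fst = Measure.map Prod.fst η from rfl,
          integral_map measurable_fst.aemeasurable hf.aestronglyMeasurable]
      have hsnd : ∫ p : J × J, f p.2 ∂η = ∫ y, f y ∂η.snd := by
        rw [show η.snd = Measure.map Prod.snd η from rfl,
          integral_map measurable_snd.aemeasurable hf.aestronglyMeasurable]
      rw [hfst, hsnd, hfs, integral_const, smul_eq_mul, mul_one, measureReal_def, huniv]
      simp
    have h4 : ∫ p, (1 + (f p.1 - f p.2)) ∂η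
        ≤ ∫ p, max (1 + (f p.1 - f p.2)) 0 ∂η :=
      integral_mono (integrable_of_bdd (measurable_const.add hd) h1db)
        (integrable_of_bdd hGm hGb) fun p => le_max_left _ _
    have h5 : ∫ p, max (1 + (f p.1 - f p.2)) 0 ∂η
        ≤ ∫ p, max (1 + (f p.1 - f p.2)) 0 ∂ψ :=
      integral_mono_measure hle (Filter.Eventually.of_forall fun p => le_max_right _ _)
        (integrable_of_bdd hGm hGb)
    linarith
  · intro hyp
    exact key ψ hyp
end

section
/- Let (J, 𝒜) be a standard Borel space and let ψ be a finite nonnegative Borel measure on J × J. There exists a nonnegative circulation η on J × J with η(J × J) = 1 and η ≤ ψ if and only if for every partition J = S₁ ∪ ⋯ ∪ S_k of J into finitely many pairwise disjoint Borel sets one has Σ_{1 ≤ i ≤ j ≤ k} (j − i + 1) · ψ(S_j × S_i) ≥ 1. -/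
open MeasureTheory Set
open scoped ENNReal
open Filter


private lemma floor_piece_lo {s θ : ℝ} (h0 : 0 ≤ θ) (hθ : θ < 1 - Int.fract s) :
    ⌊s + θ⌋ = ⌊s⌋ := by
  rw [Int.floor_eq_iff]
  constructor
  · have := Int.floor_le s; linarith
  · have : Int.fract s = s - ⌊s⌋ := rfl
    push_cast
    linarith [this]

private lemma floor_piece_hi {s θ : ℝ} (h0 : 1 - Int.fract s ≤ θ) (hθ : θ < 1) :
    ⌊s + θ⌋ = ⌊s⌋ + 1 := by
  rw [Int.floor_eq_iff]
  have : Int.fract s = s - ⌊s⌋ := rfl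
  constructor
  · push_cast; linarith [this]
  · push_cast; linarith [Int.fract_lt_one s, this]

private lemma piece_int {p q : ℝ} (hp : 0 ≤ p) (hpq : p ≤ q) (hq : q ≤ 1)
    {g : ℝ → ℝ} {c₁ c₂ c₃ : ℝ}
    (h₁ : ∀ θ ∈ Ico (0:ℝ) p, g θ = c₁) (h₂ : ∀ θ ∈ Ico p q, g θ = c₂)
    (h₃ : ∀ θ ∈ Ico q (1:ℝ), g θ = c₃) :
    ∫ θ in Ico (0:ℝ) 1, g θ = p * c₁ + (q - p) * c₂ + (1 - q) * c₃ := by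
  have key : ∀ (a b : ℝ) (c : ℝ), a ≤ b → (∀ θ ∈ Ico a b, g θ = c) →
      ∫ θ in Ico a b, g θ = (b - a) * c := by
    intro a b c hab hc
    rw [setIntegral_congr_fun measurableSet_Ico hc, setIntegral_const, Real.volume_real_Ico_of_le hab,
      smul_eq_mul]
  have int_piece : ∀ (a b : ℝ) (c : ℝ), (∀ θ ∈ Ico a b, g θ = c) → IntegrableOn g (Ico a b) := by
    intro a b c hc
    exact (integrableOn_const measure_Ico_lt_top.ne).congr_fun
      (fun θ hθ => (hc θ hθ).symm) measurableSet_Ico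
  have h12 : Ico (0:ℝ) p ∪ Ico p q = Ico 0 q := Ico_union_Ico_eq_Ico hp hpq
  have h123 : Ico (0:ℝ) q ∪ Ico q 1 = Ico 0 1 := Ico_union_Ico_eq_Ico (le_trans hp hpq) hq
  rw [← h123, setIntegral_union (Ico_disjoint_Ico_same) measurableSet_Ico
      (by rw [← h12]; exact ((int_piece _ _ _ h₁).union (int_piece _ _ _ h₂)))
      (int_piece _ _ _ h₃),
    ← h12, setIntegral_union (Ico_disjoint_Ico_same) measurableSet_Ico
      (int_piece _ _ _ h₁) (int_piece _ _ _ h₂),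
    key _ _ _ hp h₁, key _ _ _ hpq h₂, key _ _ _ hq h₃]
  ring

private lemma comb1 (c : ℤ) {δ : ℝ} (h0 : 0 ≤ δ) (h1 : δ < 1) :
    (1 - δ) * max 0 (1 + (c:ℝ)) + δ * max 0 (1 + (c:ℝ) + 1) = max 0 (1 + (c:ℝ) + δ) := by
  rcases (show c ≤ -2 ∨ c = -1 ∨ 0 ≤ c by omega) with h | h | h
  · have hc' : (c:ℝ) ≤ -2 := by exact_mod_cast h
    rw [max_eq_left (by linarith), max_eq_left (by linarith), max_eq_left (by linarith)]
    ring
  · have hc' : (c:ℝ) = -1 := by exact_mod_cast h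
    rw [hc', max_eq_left (by linarith), max_eq_right (by linarith), max_eq_right (by linarith)]
    ring
  · have hc' : (0:ℝ) ≤ c := by exact_mod_cast h
    rw [max_eq_right (by linarith), max_eq_right (by linarith), max_eq_right (by linarith)]
    ring

private lemma comb2 (c : ℤ) {δ : ℝ} (h0 : 0 ≤ δ) (h1 : δ < 1) :
    (1 - δ) * max 0 (1 + (c:ℝ)) + δ * max 0 ((c:ℝ)) = max 0 (1 + (c:ℝ) - δ) := by
  rcases (show c ≤ -1 ∨ c = 0 ∨ 1 ≤ c by omega) with h | h | h
  · have hc' : (c:ℝ) ≤ -1 := by exact_mod_cast h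
    rcases eq_or_lt_of_le h0 with hδ | hδ
    · rw [← hδ]
      ring_nf
    · rw [max_eq_left (by linarith), max_eq_left (by linarith), max_eq_left (by linarith)]
      ring
  · have hc' : (c:ℝ) = 0 := by exact_mod_cast h
    rcases eq_or_lt_of_le h0 with hδ | hδ
    · rw [hc', ← hδ]; norm_num
    · rw [hc', max_eq_left le_rfl, max_eq_right (by linarith), max_eq_right (by linarith)]
      ring
  · have hc' : (1:ℝ) ≤ c := by exact_mod_cast h
    rw [max_eq_right (by linarith), max_eq_right (by linarith), max_eq_right (by linarith)]
    ring

private lemma floor_avg (s t : ℝ) :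
    ∫ θ in Ico (0:ℝ) 1, max 0 (1 + (⌊s + θ⌋ : ℝ) - (⌊t + θ⌋ : ℝ)) = max 0 (1 + s - t) := by
  have hfrs := Int.fract_nonneg s
  have hfrs1 := Int.fract_lt_one s
  have hfrt := Int.fract_nonneg t
  have hfrt1 := Int.fract_lt_one t
  have hs_eq : (⌊s⌋ : ℝ) + Int.fract s = s := by rw [Int.fract]; ring
  have ht_eq : (⌊t⌋ : ℝ) + Int.fract t = t := by rw [Int.fract]; ring
  rcases le_total (1 - Int.fract s) (1 - Int.fract t) with hxy | hxy
  · -- fract t ≤ fract s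
    have key := piece_int (p := 1 - Int.fract s) (q := 1 - Int.fract t)
      (g := fun θ => max 0 (1 + (⌊s + θ⌋ : ℝ) - (⌊t + θ⌋ : ℝ)))
      (c₁ := max 0 (1 + (⌊s⌋ : ℝ) - (⌊t⌋ : ℝ)))
      (c₂ := max 0 (1 + ((⌊s⌋ : ℝ) + 1) - (⌊t⌋ : ℝ)))
      (c₃ := max 0 (1 + ((⌊s⌋ : ℝ) + 1) - ((⌊t⌋ : ℝ) + 1)))
      (by linarith) hxy (by linarith)
      (fun θ hθ => by
        rw [floor_piece_lo hθ.1 hθ.2, floor_piece_lo hθ.1 (lt_of_lt_of_le hθ.2 hxy)])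
      (fun θ hθ => by
        rw [floor_piece_hi hθ.1 (lt_of_lt_of_le hθ.2 (by linarith)),
          floor_piece_lo (le_trans (by linarith) hθ.1) hθ.2]
        push_cast; ring_nf)
      (fun θ hθ => by
        rw [floor_piece_hi (le_trans hxy hθ.1) hθ.2, floor_piece_hi hθ.1 hθ.2]
        push_cast; ring_nf)
    rw [key]
    have hδ0 : 0 ≤ Int.fract s - Int.fract t := by linarith
    have hδ1 : Int.fract s - Int.fract t < 1 := by linarith
    have hcomb := comb1 (⌊s⌋ - ⌊t⌋) hδ0 hδ1
    push_cast at hcomb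
    have harg : 1 + ((⌊s⌋:ℝ) - ⌊t⌋) + (Int.fract s - Int.fract t) = 1 + s - t := by linarith
    rw [harg] at hcomb
    rw [← hcomb]
    ring_nf
  · -- fract s ≤ fract t
    have key := piece_int (p := 1 - Int.fract t) (q := 1 - Int.fract s)
      (g := fun θ => max 0 (1 + (⌊s + θ⌋ : ℝ) - (⌊t + θ⌋ : ℝ)))
      (c₁ := max 0 (1 + (⌊s⌋ : ℝ) - (⌊t⌋ : ℝ)))
      (c₂ := max 0 (1 + (⌊s⌋ : ℝ) - ((⌊t⌋ : ℝ) + 1)))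
      (c₃ := max 0 (1 + ((⌊s⌋ : ℝ) + 1) - ((⌊t⌋ : ℝ) + 1)))
      (by linarith) hxy (by linarith)
      (fun θ hθ => by
        rw [floor_piece_lo hθ.1 (lt_of_lt_of_le hθ.2 hxy), floor_piece_lo hθ.1 hθ.2])
      (fun θ hθ => by
        rw [floor_piece_lo (le_trans (by linarith) hθ.1) hθ.2,
          floor_piece_hi hθ.1 (lt_of_lt_of_le hθ.2 (by linarith))]
        push_cast; ring_nf)
      (fun θ hθ => by
        rw [floor_piece_hi hθ.1 hθ.2, floor_piece_hi (le_trans hxy hθ.1) hθ.2]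
        push_cast; ring_nf)
    rw [key]
    have hδ0 : 0 ≤ Int.fract t - Int.fract s := by linarith
    have hδ1 : Int.fract t - Int.fract s < 1 := by linarith
    have hcomb := comb2 (⌊s⌋ - ⌊t⌋) hδ0 hδ1
    push_cast at hcomb
    have harg : 1 + ((⌊s⌋:ℝ) - ⌊t⌋) - (Int.fract t - Int.fract s) = 1 + s - t := by linarith
    rw [harg] at hcomb
    rw [← hcomb]
    ring_nf


private lemma mk_measure' {α : Type*} [MeasurableSpace α] (ψ : Measure α) [IsFiniteMeasure ψ]
    (m : Set α → ℝ)
    (hbd : ∀ A, MeasurableSet A → 0 ≤ m A ∧ m A ≤ (ψ A).toReal)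
    (hadd : ∀ A B, MeasurableSet A → MeasurableSet B → Disjoint A B → m (A ∪ B) = m A + m B) :
    ∃ μ : Measure α, (∀ A, MeasurableSet A → μ A = ENNReal.ofReal (m A)) ∧ μ ≤ ψ := by
  have hm0 : m ∅ = 0 := by
    have := hadd ∅ ∅ MeasurableSet.empty MeasurableSet.empty (disjoint_bot_left)
    simp only [Set.union_empty] at this
    linarith
  have hfinadd : ∀ (g : ℕ → Set α), (∀ i, MeasurableSet (g i)) → Pairwise (Function.onFun Disjoint g) →
      ∀ N, m (⋃ i, g i) = (∑ i ∈ Finset.range N, m (g i)) + m (⋃ i, g (i + N)) := by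
    intro g hg hpg N
    induction N with
    | zero => simp
    | succ N ih =>
      have hsplit : (⋃ i, g (i + N)) = g N ∪ ⋃ i, g (i + (N + 1)) := by
        ext x
        simp only [mem_iUnion, mem_union]
        constructor
        · rintro ⟨i, hi⟩
          rcases Nat.eq_zero_or_pos i with h0 | h0
          · left; rwa [h0, zero_add] at hi
          · right; exact ⟨i - 1, by rwa [show i - 1 + (N + 1) = i + N by omega]⟩
        · rintro (h | ⟨i, hi⟩)
          · exact ⟨0, by rwa [zero_add]⟩
          · exact ⟨i + 1, by rwa [show i + 1 + N = i + (N + 1) by omega]⟩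
      have hdisjN : Disjoint (g N) (⋃ i, g (i + (N + 1))) := by
        refine Set.disjoint_iUnion_right.mpr fun i => hpg (by omega)
      have : m (⋃ i, g (i + N)) = m (g N) + m (⋃ i, g (i + (N + 1))) := by
        rw [hsplit]
        exact hadd _ _ (hg N) (MeasurableSet.iUnion fun i => hg _) hdisjN
      rw [ih, this, Finset.sum_range_succ]
      ring
  have hμU : ∀ ⦃g : ℕ → Set α⦄, (∀ i, MeasurableSet (g i)) → Pairwise (Function.onFun Disjoint g) →
      ENNReal.ofReal (m (⋃ i, g i)) = ∑' i, ENNReal.ofReal (m (g i)) := by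
    intro g hg hpg
    have hUm : MeasurableSet (⋃ i, g i) := MeasurableSet.iUnion hg
    have htail_meas : ∀ N, MeasurableSet (⋃ i, g (i + N)) :=
      fun N => MeasurableSet.iUnion fun i => hg _
    apply le_antisymm
    · -- ≤ : limit argument
      have hub : ∀ N, ENNReal.ofReal (m (⋃ i, g i)) ≤
          (∑ i ∈ Finset.range N, ENNReal.ofReal (m (g i))) + ψ (⋃ i, g (i + N)) := by
        intro N
        rw [hfinadd g hg hpg N]
        calc ENNReal.ofReal ((∑ i ∈ Finset.range N, m (g i)) + m (⋃ i, g (i + N)))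
            ≤ ENNReal.ofReal (∑ i ∈ Finset.range N, m (g i))
              + ENNReal.ofReal (m (⋃ i, g (i + N))) := ENNReal.ofReal_add_le
          _ ≤ (∑ i ∈ Finset.range N, ENNReal.ofReal (m (g i))) + ψ (⋃ i, g (i + N)) := by
              gcongr
              · rw [ENNReal.ofReal_sum_of_nonneg fun i _ => (hbd _ (hg i)).1]
              · exact ENNReal.ofReal_le_of_le_toReal (hbd _ (htail_meas N)).2
      have htendsto : Filter.Tendsto
          (fun N => (∑ i ∈ Finset.range N, ENNReal.ofReal (m (g i))) + ψ (⋃ i, g (i + N)))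
          Filter.atTop (nhds ((∑' i, ENNReal.ofReal (m (g i))) + 0)) := by
        apply Filter.Tendsto.add (ENNReal.tendsto_nat_tsum _)
        have heq : ∀ N, ψ (⋃ i, g (i + N)) = ∑' i, ψ (g (i + N)) := by
          intro N
          exact measure_iUnion (fun i i' hii' => hpg (by omega)) (fun i => hg _)
        simp_rw [heq]
        exact ENNReal.tendsto_sum_nat_add (fun i => ψ (g i))
          (ne_top_of_le_ne_top (measure_ne_top ψ univ)
            (by rw [← measure_iUnion hpg hg]; exact measure_mono (subset_univ _)))
      have := ge_of_tendsto htendsto (Filter.Eventually.of_forall hub)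
      rwa [add_zero] at this
    · -- ≥
      rw [ENNReal.tsum_eq_iSup_sum]
      refine iSup_le fun s => ?_
      obtain ⟨N, hN⟩ := Finset.exists_nat_subset_range s
      calc ∑ i ∈ s, ENNReal.ofReal (m (g i))
          ≤ ∑ i ∈ Finset.range N, ENNReal.ofReal (m (g i)) :=
            Finset.sum_le_sum_of_subset hN
        _ = ENNReal.ofReal (∑ i ∈ Finset.range N, m (g i)) :=
            (ENNReal.ofReal_sum_of_nonneg fun i _ => (hbd _ (hg i)).1).symm
        _ ≤ ENNReal.ofReal (m (⋃ i, g i)) := by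
            apply ENNReal.ofReal_le_ofReal
            rw [hfinadd g hg hpg N]
            have := (hbd _ (htail_meas N)).1
            linarith
  refine ⟨Measure.ofMeasurable (fun A _ => ENNReal.ofReal (m A)) (by simp [hm0]) ?_, ?_, ?_⟩
  · intro g hg hpg
    exact hμU hg hpg
  · intro A hA
    exact Measure.ofMeasurable_apply A hA
  · rw [Measure.le_iff]
    intro A hA
    rw [Measure.ofMeasurable_apply A hA]
    exact ENNReal.ofReal_le_of_le_toReal (hbd A hA).2


private lemma forward_dir {J : Type*} [MeasurableSpace J]
    (ψ : Measure (J × J)) [IsFiniteMeasure ψ]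
    (η : Measure (J × J)) (hfs : η.fst = η.snd) (hmass : η univ = 1) (hle : η ≤ ψ)
    (k : ℕ) (S : Fin k → Set J) (hmeas : ∀ i, MeasurableSet (S i))
    (hdisj : ∀ i j, i ≠ j → Disjoint (S i) (S j)) (hcover : (⋃ i, S i) = univ) :
    1 ≤ ∑ i : Fin k, ∑ j : Fin k,
      if (i : ℕ) ≤ (j : ℕ) then (((j : ℕ) - (i : ℕ) + 1 : ℕ) : ℝ≥0∞) * ψ (S j ×ˢ S i)
      else 0 := by
  set a : Fin k → Fin k → ℝ≥0∞ := fun j i => η (S j ×ˢ S i) with ha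
  -- decomposition of η univ
  have hU : (⋃ q : Fin k × Fin k, S q.1 ×ˢ S q.2) = univ := by
    ext p
    simp only [mem_iUnion, mem_univ, iff_true]
    have h1 : p.1 ∈ ⋃ i, S i := by rw [hcover]; trivial
    have h2 : p.2 ∈ ⋃ i, S i := by rw [hcover]; trivial
    obtain ⟨i, hi⟩ := mem_iUnion.mp h1
    obtain ⟨j, hj⟩ := mem_iUnion.mp h2
    exact ⟨(i, j), hi, hj⟩
  have hrd : Pairwise (Function.onFun Disjoint fun q : Fin k × Fin k => S q.1 ×ˢ S q.2) := by
    intro q q' hqq'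
    rcases (show q.1 ≠ q'.1 ∨ q.2 ≠ q'.2 by
      by_contra h; push_neg at h; exact hqq' (Prod.ext h.1 h.2)) with h | h
    · exact Set.disjoint_left.mpr fun p hp hp' => (hdisj _ _ h).le_bot ⟨hp.1, hp'.1⟩
    · exact Set.disjoint_left.mpr fun p hp hp' => (hdisj _ _ h).le_bot ⟨hp.2, hp'.2⟩
  have hrm : ∀ q : Fin k × Fin k, MeasurableSet (S q.1 ×ˢ S q.2) :=
    fun q => (hmeas q.1).prod (hmeas q.2)
  have hdecomp : ∀ (μ : Measure (J × J)), μ univ = ∑ j : Fin k, ∑ i : Fin k, μ (S j ×ˢ S i) := by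
    intro μ
    rw [← hU, measure_iUnion hrd hrm, tsum_fintype, Fintype.sum_prod_type]
  have h1 : ∑ j : Fin k, ∑ i : Fin k, a j i = 1 := by rw [← hdecomp η, hmass]
  -- marginals
  have hmarg : ∀ j, (∑ i : Fin k, a j i) = ∑ i : Fin k, a i j := by
    intro j
    have hrow : η (S j ×ˢ univ) = ∑ i : Fin k, a j i := by
      have : S j ×ˢ univ = ⋃ i, S j ×ˢ S i := by rw [← hcover, Set.prod_iUnion]
      rw [this, measure_iUnion (fun i i' hii' => Set.disjoint_left.mpr
          fun p hp hp' => (hdisj _ _ hii').le_bot ⟨hp.2, hp'.2⟩)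
          (fun i => (hmeas j).prod (hmeas i)), tsum_fintype]
    have hcol : η (univ ×ˢ S j) = ∑ i : Fin k, a i j := by
      have : univ ×ˢ S j = ⋃ i, S i ×ˢ S j := by rw [← hcover, Set.iUnion_prod_const]
      rw [this, measure_iUnion (fun i i' hii' => Set.disjoint_left.mpr
          fun p hp hp' => (hdisj _ _ hii').le_bot ⟨hp.1, hp'.1⟩)
          (fun i => (hmeas i).prod (hmeas j)), tsum_fintype]
    rw [← hrow, ← hcol, Set.prod_univ, Set.univ_prod, ← Measure.fst_apply (hmeas j),
      ← Measure.snd_apply (hmeas j), hfs]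
  -- finiteness
  have hafin : ∀ j i, a j i ≠ ⊤ :=
    fun j i => ne_top_of_le_ne_top (measure_ne_top ψ _) (Measure.le_iff.mp hle _ (hrm (j, i)))
  set W : ℝ≥0∞ := ∑ j : Fin k, ∑ i : Fin k, ((i : ℕ) : ℝ≥0∞) * a j i with hW
  have hWfin : W ≠ ⊤ := by
    rw [hW]
    refine (ENNReal.sum_lt_top.mpr fun j _ => (ENNReal.sum_lt_top.mpr fun i _ => ?_)).ne
    exact ENNReal.mul_lt_top (ENNReal.natCast_lt_top _) (lt_top_iff_ne_top.mpr (hafin j i))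
  set T : ℝ≥0∞ := ∑ j : Fin k, ∑ i : Fin k,
      (if (i : ℕ) ≤ (j : ℕ) then (((j : ℕ) - (i : ℕ) + 1 : ℕ) : ℝ≥0∞) else 0) * a j i with hT
  -- step 1
  have step1 : ∑ j : Fin k, ∑ i : Fin k, (((j:ℕ):ℝ≥0∞) + 1) * a j i ≤ T + W := by
    rw [hT, hW, ← Finset.sum_add_distrib]
    refine Finset.sum_le_sum fun j _ => ?_
    rw [← Finset.sum_add_distrib]
    refine Finset.sum_le_sum fun i _ => ?_
    by_cases h : (i:ℕ) ≤ (j:ℕ)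
    · rw [if_pos h, ← add_mul]
      refine mul_le_mul_left (le_of_eq ?_) _
      have hnat : ((j:ℕ) - (i:ℕ) + 1) + (i:ℕ) = (j:ℕ) + 1 := by omega
      calc ((j:ℕ):ℝ≥0∞) + 1 = ((((j:ℕ) + 1 : ℕ)) : ℝ≥0∞) := by push_cast; ring
        _ = ((((j:ℕ) - (i:ℕ) + 1) + (i:ℕ) : ℕ) : ℝ≥0∞) := by rw [hnat]
        _ = (((j:ℕ) - (i:ℕ) + 1 : ℕ) : ℝ≥0∞) + ((i:ℕ) : ℝ≥0∞) := by push_cast; ring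
    · rw [if_neg h, zero_mul, zero_add]
      apply mul_le_mul_left
      have : (j:ℕ) + 1 ≤ (i:ℕ) := by omega
      calc ((j:ℕ):ℝ≥0∞) + 1 = (((j:ℕ) + 1 : ℕ) : ℝ≥0∞) := by push_cast; ring
        _ ≤ ((i:ℕ) : ℝ≥0∞) := by exact_mod_cast this
  -- step 2
  have step2 : ∑ j : Fin k, ∑ i : Fin k, (((j:ℕ):ℝ≥0∞) + 1) * a j i
      = ∑ j : Fin k, ∑ i : Fin k, (((i:ℕ):ℝ≥0∞) + 1) * a j i := by
    calc ∑ j : Fin k, ∑ i : Fin k, (((j:ℕ):ℝ≥0∞) + 1) * a j i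
        = ∑ j : Fin k, (((j:ℕ):ℝ≥0∞) + 1) * ∑ i : Fin k, a j i := by
          exact Finset.sum_congr rfl fun j _ => (Finset.mul_sum _ _ _).symm
      _ = ∑ j : Fin k, (((j:ℕ):ℝ≥0∞) + 1) * ∑ i : Fin k, a i j := by
          exact Finset.sum_congr rfl fun j _ => by rw [hmarg j]
      _ = ∑ j : Fin k, ∑ i : Fin k, (((j:ℕ):ℝ≥0∞) + 1) * a i j := by
          exact Finset.sum_congr rfl fun j _ => Finset.mul_sum _ _ _
      _ = ∑ i : Fin k, ∑ j : Fin k, (((j:ℕ):ℝ≥0∞) + 1) * a i j := Finset.sum_comm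
  -- step 3
  have step3 : ∑ j : Fin k, ∑ i : Fin k, (((i:ℕ):ℝ≥0∞) + 1) * a j i = W + 1 := by
    rw [hW]
    calc ∑ j : Fin k, ∑ i : Fin k, (((i:ℕ):ℝ≥0∞) + 1) * a j i
        = ∑ j : Fin k, ∑ i : Fin k, (((i:ℕ):ℝ≥0∞) * a j i + a j i) := by
          refine Finset.sum_congr rfl fun j _ => Finset.sum_congr rfl fun i _ => ?_
          rw [add_mul, one_mul]
      _ = (∑ j : Fin k, ∑ i : Fin k, ((i:ℕ):ℝ≥0∞) * a j i)
            + ∑ j : Fin k, ∑ i : Fin k, a j i := by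
          rw [← Finset.sum_add_distrib]
          exact Finset.sum_congr rfl fun j _ => Finset.sum_add_distrib
      _ = (∑ j : Fin k, ∑ i : Fin k, ((i:ℕ):ℝ≥0∞) * a j i) + 1 := by rw [h1]
  have hkey : (1 : ℝ≥0∞) ≤ T := by
    have : 1 + W ≤ T + W := by
      rw [add_comm 1 W, ← step3, ← step2]; exact step1
    exact (ENNReal.add_le_add_iff_right hWfin).mp this
  -- compare with ψ
  calc (1:ℝ≥0∞) ≤ T := hkey
    _ ≤ ∑ j : Fin k, ∑ i : Fin k,
        (if (i : ℕ) ≤ (j : ℕ) then (((j:ℕ) - (i:ℕ) + 1 : ℕ) : ℝ≥0∞) * ψ (S j ×ˢ S i) else 0) := by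
        rw [hT]
        refine Finset.sum_le_sum fun j _ => Finset.sum_le_sum fun i _ => ?_
        by_cases h : (i:ℕ) ≤ (j:ℕ)
        · rw [if_pos h, if_pos h]
          exact mul_le_mul_right (Measure.le_iff.mp hle _ (hrm (j, i))) _
        · rw [if_neg h, if_neg h, zero_mul]
    _ = ∑ i : Fin k, ∑ j : Fin k,
        (if (i : ℕ) ≤ (j : ℕ) then (((j:ℕ) - (i:ℕ) + 1 : ℕ) : ℝ≥0∞) * ψ (S j ×ˢ S i) else 0) :=
        Finset.sum_comm

private lemma backward_dir {J : Type*} [MeasurableSpace J]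
    (ψ : Measure (J × J)) [IsFiniteMeasure ψ]
    (hpart : ∀ (k : ℕ) (S : Fin k → Set J),
        (∀ i, MeasurableSet (S i)) →
        (∀ i j, i ≠ j → Disjoint (S i) (S j)) →
        (⋃ i, S i) = univ →
        1 ≤ ∑ i : Fin k, ∑ j : Fin k,
          if (i : ℕ) ≤ (j : ℕ) then (((j : ℕ) - (i : ℕ) + 1 : ℕ) : ℝ≥0∞) * ψ (S j ×ˢ S i)
          else 0) :
    ∃ η : Measure (J × J), η.fst = η.snd ∧ η univ = 1 ∧ η ≤ ψ := by
  classical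
  by_contra hcon
  set Φ : Set (Set (J × J) → ℝ) := {m | (∀ A, ¬ MeasurableSet A → m A = 0) ∧
      (∀ A, MeasurableSet A → 0 ≤ m A ∧ m A ≤ (ψ A).toReal) ∧
      (∀ A B, MeasurableSet A → MeasurableSet B → Disjoint A B →
        m (A ∪ B) = m A + m B)} with hΦdef
  have hΦc : IsCompact Φ := by
    have hbig : IsCompact (univ.pi fun A : Set (J × J) =>
        if MeasurableSet A then Icc (0:ℝ) ((ψ A).toReal) else {0}) :=
      isCompact_univ_pi fun A => by
        by_cases hA : MeasurableSet A
        · simp only [if_pos hA]; exact isCompact_Icc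
        · simp only [if_neg hA]; exact isCompact_singleton
    have hsub : Φ ⊆ univ.pi fun A : Set (J × J) =>
        if MeasurableSet A then Icc (0:ℝ) ((ψ A).toReal) else {0} := by
      intro m hm A _
      by_cases hA : MeasurableSet A
      · simp only [if_pos hA]; exact ⟨(hm.2.1 A hA).1, (hm.2.1 A hA).2⟩
      · simp only [if_neg hA, mem_singleton_iff]; exact hm.1 A hA
    refine hbig.of_isClosed_subset ?_ hsub
    have h1 : IsClosed {m : Set (J × J) → ℝ | ∀ A, ¬ MeasurableSet A → m A = 0} := by
      rw [Set.setOf_forall]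
      refine isClosed_iInter fun A => ?_
      by_cases hA : MeasurableSet A
      · have : {m : Set (J × J) → ℝ | ¬ MeasurableSet A → m A = 0} = univ := by
          ext m; simp [hA]
        rw [this]; exact isClosed_univ
      · have : {m : Set (J × J) → ℝ | ¬ MeasurableSet A → m A = 0} = {m | m A = 0} := by
          ext m; simp [hA]
        rw [this]; exact isClosed_eq (continuous_apply A) continuous_const
    have h2 : IsClosed {m : Set (J × J) → ℝ |
        ∀ A, MeasurableSet A → 0 ≤ m A ∧ m A ≤ (ψ A).toReal} := by
      rw [Set.setOf_forall]
      refine isClosed_iInter fun A => ?_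
      by_cases hA : MeasurableSet A
      · have : {m : Set (J × J) → ℝ | MeasurableSet A → 0 ≤ m A ∧ m A ≤ (ψ A).toReal}
            = {m | 0 ≤ m A} ∩ {m | m A ≤ (ψ A).toReal} := by
          ext m; simp [hA]
        rw [this]
        exact (isClosed_le continuous_const (continuous_apply A)).inter
          (isClosed_le (continuous_apply A) continuous_const)
      · have : {m : Set (J × J) → ℝ | MeasurableSet A → 0 ≤ m A ∧ m A ≤ (ψ A).toReal}
            = univ := by
          ext m; simp [hA]
        rw [this]; exact isClosed_univ
    have h3 : IsClosed {m : Set (J × J) → ℝ | ∀ A B, MeasurableSet A → MeasurableSet B →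
        Disjoint A B → m (A ∪ B) = m A + m B} := by
      rw [Set.setOf_forall]
      refine isClosed_iInter fun A => ?_
      rw [Set.setOf_forall]
      refine isClosed_iInter fun B => ?_
      by_cases h : MeasurableSet A ∧ MeasurableSet B ∧ Disjoint A B
      · have : {m : Set (J × J) → ℝ | MeasurableSet A → MeasurableSet B → Disjoint A B →
            m (A ∪ B) = m A + m B} = {m | m (A ∪ B) = m A + m B} := by
          ext m; simp [h.1, h.2.1, h.2.2]
        rw [this]
        exact isClosed_eq (continuous_apply _) ((continuous_apply A).add (continuous_apply B))
      · have : {m : Set (J × J) → ℝ | MeasurableSet A → MeasurableSet B → Disjoint A B →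
            m (A ∪ B) = m A + m B} = univ := by
          ext m
          simp only [mem_setOf_eq, mem_univ, iff_true]
          intro hA hB hAB
          exact absurd ⟨hA, hB, hAB⟩ h
        rw [this]; exact isClosed_univ
    rw [hΦdef]
    rw [show {m : Set (J × J) → ℝ | (∀ A, ¬ MeasurableSet A → m A = 0) ∧
        (∀ A, MeasurableSet A → 0 ≤ m A ∧ m A ≤ (ψ A).toReal) ∧
        (∀ A B, MeasurableSet A → MeasurableSet B → Disjoint A B →
          m (A ∪ B) = m A + m B)} =
        {m : Set (J × J) → ℝ | ∀ A, ¬ MeasurableSet A → m A = 0} ∩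
        ({m : Set (J × J) → ℝ | ∀ A, MeasurableSet A → 0 ≤ m A ∧ m A ≤ (ψ A).toReal} ∩
         {m : Set (J × J) → ℝ | ∀ A B, MeasurableSet A → MeasurableSet B → Disjoint A B →
            m (A ∪ B) = m A + m B}) from rfl]
    exact h1.inter (h2.inter h3)
  have hΦconv : Convex ℝ Φ := by
    intro m1 hm1 m2 hm2 a b ha hb hab
    have happ : ∀ A, (a • m1 + b • m2) A = a * m1 A + b * m2 A := fun A => rfl
    refine ⟨fun A hA => ?_, fun A hA => ?_, fun A B hA hB hAB => ?_⟩
    · rw [happ, hm1.1 A hA, hm2.1 A hA]; ring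
    · constructor
      · rw [happ]
        have h1 := (hm1.2.1 A hA).1
        have h2 := (hm2.2.1 A hA).1
        nlinarith
      · rw [happ]
        have h1 := (hm1.2.1 A hA).2
        have h2 := (hm2.2.1 A hA).2
        have h3 : a * (ψ A).toReal + b * (ψ A).toReal = (ψ A).toReal := by
          rw [← add_mul, hab, one_mul]
        nlinarith [mul_le_mul_of_nonneg_left h1 ha, mul_le_mul_of_nonneg_left h2 hb]
    · rw [happ, happ, happ, hm1.2.2 A B hA hB hAB, hm2.2.2 A B hA hB hAB]; ring
  have hΦ0 : (0 : Set (J × J) → ℝ) ∈ Φ := by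
    refine ⟨fun A _ => rfl, fun A hA => ⟨le_rfl, ENNReal.toReal_nonneg⟩, fun A B _ _ _ => by simp⟩
  -- membership with constraints gives a contradiction
  have hmem : ∀ m ∈ Φ, 1 ≤ m univ →
      (∀ A : Set J, MeasurableSet A → m (A ×ˢ univ) = m (univ ×ˢ A)) → False := by
    intro m hmΦ hm1 hmarg
    obtain ⟨μ, hμapp, hμle⟩ := mk_measure' ψ m hmΦ.2.1 hmΦ.2.2
    have hμuniv : 1 ≤ μ univ := by
      rw [hμapp univ MeasurableSet.univ]
      exact ENNReal.one_le_ofReal.mpr hm1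
    have hμne0 : μ univ ≠ 0 := (zero_lt_one.trans_le hμuniv).ne'
    have hμnetop : μ univ ≠ ⊤ := ne_top_of_le_ne_top (measure_ne_top ψ univ)
      (Measure.le_iff.mp hμle univ MeasurableSet.univ)
    have hfssnd : μ.fst = μ.snd := by
      refine Measure.ext fun A hA => ?_
      rw [Measure.fst_apply hA, Measure.snd_apply hA, ← Set.prod_univ, ← Set.univ_prod,
        hμapp _ (hA.prod MeasurableSet.univ), hμapp _ (MeasurableSet.univ.prod hA), hmarg A hA]
    refine hcon ⟨(μ univ)⁻¹ • μ, ?_, ?_, ?_⟩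
    · show ((μ univ)⁻¹ • μ).map Prod.fst = ((μ univ)⁻¹ • μ).map Prod.snd
      rw [Measure.map_smul, Measure.map_smul]
      show (μ univ)⁻¹ • μ.fst = (μ univ)⁻¹ • μ.snd
      rw [hfssnd]
    · rw [Measure.smul_apply, smul_eq_mul, ENNReal.inv_mul_cancel hμne0 hμnetop]
    · rw [Measure.le_iff]
      intro A hA
      rw [Measure.smul_apply, smul_eq_mul]
      calc (μ univ)⁻¹ * μ A ≤ 1 * μ A :=
            mul_le_mul_left (ENNReal.inv_le_one.mpr hμuniv) _
        _ = μ A := one_mul _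
        _ ≤ ψ A := Measure.le_iff.mp hμle A hA
  -- compactness: finitely many constraints suffice
  set K : Set (Set (J × J) → ℝ) := Φ ∩ {m | 1 ≤ m univ} with hKdef
  have hK : IsCompact K := hΦc.inter_right (isClosed_le continuous_const (continuous_apply univ))
  set Z : Set J → Set (Set (J × J) → ℝ) := fun A =>
    if MeasurableSet A then {m | m (A ×ˢ univ) = m (univ ×ˢ A)} else univ with hZdef
  have hZclosed : ∀ A, IsClosed (Z A) := by
    intro A
    simp only [hZdef]
    split_ifs
    · exact isClosed_eq (continuous_apply _) (continuous_apply _)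
    · exact isClosed_univ
  have hempty : K ∩ ⋂ A, Z A = ∅ := by
    rw [Set.eq_empty_iff_forall_notMem]
    rintro m ⟨⟨hmΦ, hm1⟩, hmZ⟩
    refine hmem m hmΦ hm1 fun A hA => ?_
    have h2 := Set.mem_iInter.mp hmZ A
    simp only [hZdef] at h2
    rwa [if_pos hA] at h2
  obtain ⟨t, ht⟩ := hK.elim_finite_subfamily_closed Z hZclosed hempty
  set u : Finset (Set J) := t.filter (fun A => MeasurableSet A) with hudef
  have hmeasu : ∀ A : {A // A ∈ u}, MeasurableSet (A : Set J) :=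
    fun A => (Finset.mem_filter.mp A.2).2
  have hu : K ∩ ⋂ A ∈ u, Z A = ∅ := by
    rw [Set.eq_empty_iff_forall_notMem]
    rintro m ⟨hmK, hmZ⟩
    have : m ∈ K ∩ ⋂ A ∈ t, Z A := by
      refine ⟨hmK, Set.mem_iInter₂.mpr fun A hAt => ?_⟩
      by_cases hA : MeasurableSet A
      · exact Set.mem_iInter₂.mp hmZ A (Finset.mem_filter.mpr ⟨hAt, hA⟩)
      · simp only [hZdef]; rw [if_neg hA]; trivial
    rw [ht] at this
    exact this
  -- separation
  set G : (Set (J × J) → ℝ) →L[ℝ] ℝ × ({A // A ∈ u} → ℝ) :=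
    (ContinuousLinearMap.proj (R := ℝ) (φ := fun _ : Set (J × J) => ℝ)
        (univ : Set (J × J))).prod
      (ContinuousLinearMap.pi fun A : {A // A ∈ u} =>
        ContinuousLinearMap.proj (R := ℝ) (φ := fun _ : Set (J × J) => ℝ) ((A : Set J) ×ˢ univ) -
        ContinuousLinearMap.proj (R := ℝ) (φ := fun _ : Set (J × J) => ℝ) (univ ×ˢ (A : Set J)))
    with hGdef
  have hGapp : ∀ m, G m = (m univ, fun A : {A // A ∈ u} =>
      m ((A : Set J) ×ˢ univ) - m (univ ×ˢ (A : Set J))) := by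
    intro m
    rw [hGdef]
    ext
    · rfl
    · rfl
  set L : Set (ℝ × ({A // A ∈ u} → ℝ)) := Ici (1:ℝ) ×ˢ ({0} : Set ({A // A ∈ u} → ℝ))
    with hLdef
  have hdisj : Disjoint (G '' Φ) L := by
    rw [Set.disjoint_left]
    rintro e ⟨m, hmΦ, rfl⟩ ⟨he1, he2⟩
    simp only [mem_singleton_iff] at he2
    have hmK : m ∈ K := ⟨hmΦ, by rw [hGapp] at he1; exact he1⟩
    have hmZ : m ∈ ⋂ A ∈ u, Z A := by
      refine Set.mem_iInter₂.mpr fun A hAu => ?_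
      simp only [hZdef]
      rw [if_pos (Finset.mem_filter.mp hAu).2]
      have he2' : (fun A : {A // A ∈ u} =>
          m ((A : Set J) ×ˢ univ) - m (univ ×ˢ (A : Set J))) = 0 := by
        rw [hGapp m] at he2
        exact he2
      have := congrFun he2' ⟨A, hAu⟩
      simpa [sub_eq_zero] using this
    have : m ∈ K ∩ ⋂ A ∈ u, Z A := ⟨hmK, hmZ⟩
    rw [hu] at this
    exact this
  obtain ⟨ℓ, uu, vv, hsep1, huv, hsep2⟩ :=
    geometric_hahn_banach_compact_closed
      (by simpa using hΦconv.linear_image G.toLinearMap)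
      (hΦc.image G.continuous)
      ((convex_Ici (1:ℝ)).prod (convex_singleton 0))
      (isClosed_Ici.prod isClosed_singleton) hdisj
  set c : ℝ := ℓ (1, 0) with hcdef
  set lam : {A // A ∈ u} → ℝ := fun A => ℓ (0, Pi.single A 1) with hlamdef
  have hdecomp : ∀ e : ℝ × ({A // A ∈ u} → ℝ),
      ℓ e = e.1 * c + ∑ A : {A // A ∈ u}, e.2 A * lam A := by
    intro e
    have he : e = e.1 • ((1:ℝ), (0 : {A // A ∈ u} → ℝ))
        + ∑ A : {A // A ∈ u}, e.2 A • ((0:ℝ), (Pi.single A 1 : {A // A ∈ u} → ℝ)) := by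
      have hsingle : ∀ A : {A // A ∈ u}, e.2 A • (Pi.single A 1 : {A // A ∈ u} → ℝ)
          = Pi.single A (e.2 A) := fun A => by
        rw [← Pi.single_smul, smul_eq_mul, mul_one]
      refine Prod.ext ?_ ?_
      · simp [Prod.fst_sum]
      · simp only [Prod.snd_add, Prod.snd_sum, Prod.smul_snd, smul_zero, zero_add,
          hsingle]
        exact (Finset.univ_sum_single e.2).symm
    calc ℓ e = ℓ (e.1 • ((1:ℝ), (0 : {A // A ∈ u} → ℝ))
        + ∑ A : {A // A ∈ u}, e.2 A • ((0:ℝ), (Pi.single A 1 : {A // A ∈ u} → ℝ))) := by rw [← he]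
      _ = e.1 * c + ∑ A : {A // A ∈ u}, e.2 A * lam A := by
        rw [map_add, map_sum]
        simp only [ℓ.map_smul, smul_eq_mul]
        rfl
  have hL1 : ((1:ℝ), (0 : {A // A ∈ u} → ℝ)) ∈ L := ⟨mem_Ici.mpr le_rfl, rfl⟩
  have hc : 0 < c := by
    by_contra hcle
    push_neg at hcle
    have h0 : (0:ℝ) < uu := by
      have := hsep1 (G 0) ⟨0, hΦ0, rfl⟩
      rwa [map_zero, map_zero] at this
    have h1 : vv < c := by
      have h := hsep2 _ hL1
      rw [hdecomp ((1:ℝ), (0 : {A // A ∈ u} → ℝ))] at h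
      simpa using h
    linarith
  have hcne : c ≠ 0 := ne_of_gt hc
  have hkey : ∀ m ∈ Φ, m univ + ∑ A : {A // A ∈ u},
      (lam A / c) * (m ((A : Set J) ×ˢ univ) - m (univ ×ˢ (A : Set J))) < 1 := by
    intro m hm
    have h1 : ℓ (G m) < uu := hsep1 _ ⟨m, hm, rfl⟩
    have h2 : vv < c := by
      have h := hsep2 _ hL1
      rw [hdecomp ((1:ℝ), (0 : {A // A ∈ u} → ℝ))] at h
      simpa using h
    have h3 : ℓ (G m) < c := h1.trans (huv.trans h2)
    rw [hdecomp (G m), hGapp m] at h3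
    simp only at h3
    have hX : m univ + ∑ A : {A // A ∈ u},
        (lam A / c) * (m ((A : Set J) ×ˢ univ) - m (univ ×ˢ (A : Set J)))
        = (m univ * c + ∑ A : {A // A ∈ u},
          (m ((A : Set J) ×ˢ univ) - m (univ ×ˢ (A : Set J))) * lam A) / c := by
      rw [add_div, mul_div_cancel_right₀ _ hcne, Finset.sum_div]
      congr 1
      refine Finset.sum_congr rfl fun A _ => ?_
      field_simp
    rw [hX]
    exact (div_lt_one hc).mpr h3
  -- Step F: the test function f, the positivity set P, and the measure-type element mstar
  set μA : {A // A ∈ u} → ℝ := fun A => lam A / c with hμAdef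
  set f : J → ℝ := fun x => ∑ A : {A // A ∈ u}, ((A : Set J)).indicator (fun _ => μA A) x
    with hfdef
  have hfmeas : Measurable f := by
    apply Finset.measurable_sum
    intro A _
    exact measurable_const.indicator (hmeasu A)
  set Cf : ℝ := ∑ A : {A // A ∈ u}, |μA A| with hCfdef
  have hCf : ∀ x, |f x| ≤ Cf := by
    intro x
    rw [hfdef, hCfdef]
    refine (Finset.abs_sum_le_sum_abs _ _).trans (Finset.sum_le_sum fun A _ => ?_)
    by_cases hx : x ∈ (A : Set J)
    · rw [Set.indicator_of_mem hx]
    · rw [Set.indicator_of_notMem hx, abs_zero]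
      exact abs_nonneg _
  set Δ : J × J → ℝ := fun p => 1 + f p.1 - f p.2 with hΔdef
  have hΔmeas : Measurable Δ :=
    (measurable_const.add (hfmeas.comp measurable_fst)).sub (hfmeas.comp measurable_snd)
  set P : Set (J × J) := {p | 0 < Δ p} with hPdef
  have hP : MeasurableSet P := measurableSet_lt measurable_const hΔmeas
  set mstar : Set (J × J) → ℝ := fun E => if MeasurableSet E then (ψ (E ∩ P)).toReal else 0
    with hmstardef
  have hmstar_apply : ∀ E, MeasurableSet E → mstar E = (ψ (E ∩ P)).toReal := fun E hE => by
    rw [hmstardef]; simp only [if_pos hE]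
  have hmstarΦ : mstar ∈ Φ := by
    refine ⟨fun A hA => by rw [hmstardef]; simp only [if_neg hA],
      fun A hA => ?_, fun A B hA hB hAB => ?_⟩
    · rw [hmstar_apply A hA]
      exact ⟨ENNReal.toReal_nonneg,
        ENNReal.toReal_mono (measure_ne_top ψ A) (measure_mono inter_subset_left)⟩
    · rw [hmstar_apply _ (hA.union hB), hmstar_apply _ hA, hmstar_apply _ hB,
        Set.union_inter_distrib_right,
        measure_union (hAB.mono inter_subset_left inter_subset_left) (hB.inter hP),
        ENNReal.toReal_add (measure_ne_top ψ _) (measure_ne_top ψ _)]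
  have hind : ∀ (A : Set (J × J)), MeasurableSet A → ∀ (r : ℝ),
      ∫ p in P, A.indicator (fun _ => r) p ∂ψ = (ψ (A ∩ P)).toReal * r := by
    intro A hA r
    rw [setIntegral_indicator hA, setIntegral_const, Set.inter_comm, smul_eq_mul, measureReal_def]
  have hstep : mstar univ + ∑ A : {A // A ∈ u},
      μA A * (mstar ((A : Set J) ×ˢ univ) - mstar (univ ×ˢ (A : Set J)))
      = ∫ p, max 0 (Δ p) ∂ψ := by
    have hmax : (fun p => max 0 (Δ p)) = P.indicator Δ := by
      funext p
      by_cases hp : p ∈ P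
      · rw [Set.indicator_of_mem hp]
        exact max_eq_right (le_of_lt hp)
      · rw [Set.indicator_of_notMem hp]
        exact max_eq_left (le_of_not_gt hp)
    rw [hmax, integral_indicator hP]
    have hint1 : IntegrableOn (fun _ : J × J => (1:ℝ)) P ψ := (integrable_const 1).integrableOn
    have hintf1 : IntegrableOn (fun p : J × J => f p.1) P ψ := by
      refine ((integrable_const Cf).mono' (hfmeas.comp measurable_fst).aestronglyMeasurable
        (Filter.Eventually.of_forall fun p => by simpa using hCf p.1)).integrableOn
    have hintf2 : IntegrableOn (fun p : J × J => f p.2) P ψ := by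
      refine ((integrable_const Cf).mono' (hfmeas.comp measurable_snd).aestronglyMeasurable
        (Filter.Eventually.of_forall fun p => by simpa using hCf p.2)).integrableOn
    have hΔexpand : ∫ p in P, Δ p ∂ψ
        = (∫ p in P, (1:ℝ) ∂ψ) + (∫ p in P, f p.1 ∂ψ) - ∫ p in P, f p.2 ∂ψ := by
      have hint1f : IntegrableOn (fun p : J × J => 1 + f p.1) P ψ := hint1.add hintf1
      simp only [hΔdef]
      rw [integral_sub hint1f hintf2, integral_add hint1 hintf1]
    have h1 : ∫ p in P, (1:ℝ) ∂ψ = (ψ P).toReal := by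
      rw [setIntegral_const, smul_eq_mul, mul_one, measureReal_def]
    have h2 : ∫ p in P, f p.1 ∂ψ
        = ∑ A : {A // A ∈ u}, (ψ (((A : Set J) ×ˢ univ) ∩ P)).toReal * μA A := by
      have hre : (fun p : J × J => f p.1) = fun p => ∑ A : {A // A ∈ u},
          (((A : Set J) ×ˢ univ : Set (J × J))).indicator (fun _ => μA A) p := by
        funext p
        rw [hfdef]
        refine Finset.sum_congr rfl fun A _ => ?_
        by_cases hx : p.1 ∈ (A : Set J)
        · rw [Set.indicator_of_mem hx, Set.indicator_of_mem (show p ∈ (A : Set J) ×ˢ univ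
            from ⟨hx, trivial⟩)]
        · rw [Set.indicator_of_notMem hx,
            Set.indicator_of_notMem (fun hcmem => hx hcmem.1)]
      rw [hre, integral_finset_sum _ (fun A _ =>
        (((integrable_const (μ := ψ) (μA A)).indicator ((hmeasu A).prod MeasurableSet.univ)).integrableOn))]
      exact Finset.sum_congr rfl fun A _ => hind _ ((hmeasu A).prod MeasurableSet.univ) _
    have h3 : ∫ p in P, f p.2 ∂ψ
        = ∑ A : {A // A ∈ u}, (ψ ((univ ×ˢ (A : Set J)) ∩ P)).toReal * μA A := by
      have hre : (fun p : J × J => f p.2) = fun p => ∑ A : {A // A ∈ u},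
          ((univ ×ˢ (A : Set J) : Set (J × J))).indicator (fun _ => μA A) p := by
        funext p
        rw [hfdef]
        refine Finset.sum_congr rfl fun A _ => ?_
        by_cases hx : p.2 ∈ (A : Set J)
        · rw [Set.indicator_of_mem hx, Set.indicator_of_mem (show p ∈ univ ×ˢ (A : Set J)
            from ⟨trivial, hx⟩)]
        · rw [Set.indicator_of_notMem hx,
            Set.indicator_of_notMem (fun hcmem => hx hcmem.2)]
      rw [hre, integral_finset_sum _ (fun A _ =>
        (((integrable_const (μ := ψ) (μA A)).indicator (MeasurableSet.univ.prod (hmeasu A))).integrableOn))]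
      exact Finset.sum_congr rfl fun A _ => hind _ (MeasurableSet.univ.prod (hmeasu A)) _
    rw [hΔexpand, h1, h2, h3, hmstar_apply univ MeasurableSet.univ, univ_inter]
    have hcomb : ∑ A : {A // A ∈ u},
        μA A * (mstar ((A : Set J) ×ˢ univ) - mstar (univ ×ˢ (A : Set J)))
        = (∑ A : {A // A ∈ u}, (ψ (((A : Set J) ×ˢ univ) ∩ P)).toReal * μA A)
          - ∑ A : {A // A ∈ u}, (ψ ((univ ×ˢ (A : Set J)) ∩ P)).toReal * μA A := by
      rw [← Finset.sum_sub_distrib]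
      refine Finset.sum_congr rfl fun A _ => ?_
      rw [hmstar_apply _ ((hmeasu A).prod MeasurableSet.univ),
        hmstar_apply _ (MeasurableSet.univ.prod (hmeasu A))]
      ring
    rw [hcomb]
    ring
  have hlt1 : ∫ p, max 0 (Δ p) ∂ψ < 1 := by
    rw [← hstep]
    exact hkey mstar hmstarΦ
  -- Step G: averaging over the rounding shift
  haveI hfinres : IsFiniteMeasure (volume.restrict (Ico (0:ℝ) 1)) := by
    constructor
    rw [Measure.restrict_apply_univ, Real.volume_Ico]
    simp
  set H : ℝ × (J × J) → ℝ :=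
    fun q => max 0 (1 + (⌊f q.2.1 + q.1⌋ : ℝ) - (⌊f q.2.2 + q.1⌋ : ℝ)) with hHdef
  have hHmeas : Measurable H := by
    have h1 : Measurable fun q : ℝ × (J × J) => (⌊f q.2.1 + q.1⌋ : ℝ) :=
      measurable_from_top.comp
        (((hfmeas.comp (measurable_fst.comp measurable_snd)).add measurable_fst).floor)
    have h2 : Measurable fun q : ℝ × (J × J) => (⌊f q.2.2 + q.1⌋ : ℝ) :=
      measurable_from_top.comp
        (((hfmeas.comp (measurable_snd.comp measurable_snd)).add measurable_fst).floor)
    exact measurable_const.max ((measurable_const.add h1).sub h2)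
  have hCf0 : 0 ≤ Cf := by
    rw [hCfdef]
    exact Finset.sum_nonneg fun A _ => abs_nonneg _
  have hHbd : ∀ q, |H q| ≤ 2 * Cf + 3 := by
    intro q
    have hb1 := Int.floor_le (f q.2.1 + q.1)
    have hb2 := Int.sub_one_lt_floor (f q.2.2 + q.1)
    have hc1 := abs_le.mp (hCf q.2.1)
    have hc2 := abs_le.mp (hCf q.2.2)
    rw [hHdef, abs_of_nonneg (le_max_left _ _)]
    apply max_le
    · linarith [hc1.1, hc1.2, abs_nonneg (f q.2.1)]
    · linarith
  have hHint : Integrable H ((volume.restrict (Ico (0:ℝ) 1)).prod ψ) :=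
    (integrable_const (2 * Cf + 3)).mono' hHmeas.aestronglyMeasurable
      (Filter.Eventually.of_forall fun q => by simpa using hHbd q)
  set g : ℝ → ℝ := fun θ => ∫ p, H (θ, p) ∂ψ with hgdef
  have havg : ∫ θ in Ico (0:ℝ) 1, g θ = ∫ p, max 0 (Δ p) ∂ψ := by
    rw [hgdef]
    have hswap := integral_integral_swap (f := fun θ (p : J × J) => H (θ, p))
      (μ := volume.restrict (Ico (0:ℝ) 1)) (ν := ψ) (by exact hHint)
    rw [hswap]
    refine integral_congr_ae (Filter.Eventually.of_forall fun p => ?_)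
    have := floor_avg (f p.1) (f p.2)
    rw [hHdef, hΔdef]
    exact this
  obtain ⟨θ, hθIco, hθ⟩ : ∃ θ ∈ Ico (0:ℝ) 1, g θ < 1 := by
    by_contra hno
    push_neg at hno
    have hgint : IntegrableOn g (Ico (0:ℝ) 1) volume := hHint.integral_prod_left
    have h1le : (1:ℝ) ≤ ∫ θ in Ico (0:ℝ) 1, g θ := by
      have hconst : ∫ θ in Ico (0:ℝ) 1, (1:ℝ) = 1 := by
        rw [setIntegral_const, smul_eq_mul, mul_one, Real.volume_real_Ico_of_le (by norm_num)]
        norm_num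
      calc (1:ℝ) = ∫ θ in Ico (0:ℝ) 1, (1:ℝ) := hconst.symm
        _ ≤ ∫ θ in Ico (0:ℝ) 1, g θ :=
            setIntegral_mono_on (integrableOn_const (by
              rw [Real.volume_Ico]; simp)) hgint measurableSet_Ico hno
    rw [havg] at h1le
    linarith
  -- Step H: the partition given by integer levels of the rounded potential
  set M : ℕ := ⌈Cf⌉₊ + 1 with hMdef
  have hCfM : Cf + 1 ≤ (M:ℝ) := by
    rw [hMdef]
    push_cast
    linarith [Nat.le_ceil Cf]
  have hflow : ∀ x : J, -(M:ℤ) ≤ ⌊f x + θ⌋ ∧ ⌊f x + θ⌋ < M := by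
    intro x
    have hx := abs_le.mp (hCf x)
    constructor
    · apply Int.le_floor.mpr
      have hgoal : -(M:ℝ) ≤ f x + θ := by linarith [hθIco.1, hx.1, hCfM]
      exact_mod_cast hgoal
    · apply Int.floor_lt.mpr
      have hgoal : f x + θ < (M:ℝ) := by linarith [hθIco.2, hx.2, hCfM]
      exact_mod_cast hgoal
  set k : ℕ := 2 * M with hkdef
  have hlvlt : ∀ x : J, (⌊f x + θ⌋ + M).toNat < k := by
    intro x
    have := hflow x
    omega
  set lv : J → Fin k := fun x => ⟨(⌊f x + θ⌋ + M).toNat, hlvlt x⟩ with hlvdef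
  have hlv_val : ∀ x : J, ((lv x : ℕ) : ℤ) = ⌊f x + θ⌋ + M := by
    intro x
    have h0 : (0:ℤ) ≤ ⌊f x + θ⌋ + M := by
      have := (hflow x).1
      omega
    calc ((lv x : ℕ) : ℤ) = (((⌊f x + θ⌋ + M).toNat : ℕ) : ℤ) := rfl
      _ = ⌊f x + θ⌋ + M := Int.toNat_of_nonneg h0
  set S : Fin k → Set J := fun i => {x | lv x = i} with hSdef
  have hSmeas : ∀ i : Fin k, MeasurableSet (S i) := by
    intro i
    have hpre : S i = (fun x => ⌊f x + θ⌋) ⁻¹' {((i:ℕ):ℤ) - M} := by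
      ext x
      simp only [hSdef, mem_setOf_eq, mem_preimage, mem_singleton_iff]
      constructor
      · intro h
        have hv := hlv_val x
        rw [h] at hv
        omega
      · intro h
        have hv := hlv_val x
        exact Fin.val_injective (by omega)
    rw [hpre]
    exact (hfmeas.add_const θ).floor (measurableSet_singleton _)
  have hlvmeas : Measurable lv := by
    refine measurable_to_countable' fun i => ?_
    have : lv ⁻¹' {i} = S i := by
      ext x
      simp [hSdef]
    rw [this]
    exact hSmeas i
  have hSdisj : ∀ i j, i ≠ j → Disjoint (S i) (S j) := by
    intro i j hij
    refine Set.disjoint_left.mpr fun x hx hx' => hij ?_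
    rw [← (show lv x = i from hx), (show lv x = j from hx')]
  have hScover : (⋃ i, S i) = univ :=
    eq_univ_of_forall fun x => mem_iUnion.mpr ⟨lv x, rfl⟩
  have happ := hpart k S hSmeas hSdisj hScover
  set κ : J × J → Fin k × Fin k := fun p => (lv p.1, lv p.2) with hκdef
  have hκmeas : Measurable κ :=
    (hlvmeas.comp measurable_fst).prodMk (hlvmeas.comp measurable_snd)
  haveI : IsFiniteMeasure (ψ.map κ) := by
    constructor
    rw [Measure.map_apply hκmeas MeasurableSet.univ]
    exact measure_lt_top ψ _
  set c' : Fin k → Fin k → ℝ :=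
    fun j i => if (i:ℕ) ≤ (j:ℕ) then (((j:ℕ) - (i:ℕ) + 1 : ℕ) : ℝ) else 0 with hc'def
  have hpoint : ∀ p : J × J, H (θ, p) = c' (lv p.1) (lv p.2) := by
    intro p
    have h1 := hlv_val p.1
    have h2 := hlv_val p.2
    rw [hHdef, hc'def]
    simp only
    by_cases hab : ((lv p.2 : ℕ)) ≤ ((lv p.1 : ℕ))
    · rw [if_pos hab]
      have hr : (1:ℝ) + (⌊f p.1 + θ⌋:ℝ) - (⌊f p.2 + θ⌋:ℝ)
          = (((lv p.1 : ℕ) - (lv p.2 : ℕ) + 1 : ℕ) : ℝ) := by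
        have hz : ((1:ℤ) + ⌊f p.1 + θ⌋ - ⌊f p.2 + θ⌋)
            = (((lv p.1 : ℕ) - (lv p.2 : ℕ) + 1 : ℕ) : ℤ) := by omega
        calc (1:ℝ) + (⌊f p.1 + θ⌋:ℝ) - (⌊f p.2 + θ⌋:ℝ)
            = (((1:ℤ) + ⌊f p.1 + θ⌋ - ⌊f p.2 + θ⌋ : ℤ) : ℝ) := by push_cast; ring
          _ = _ := by rw [hz]; push_cast; ring
      rw [hr]
      exact max_eq_right (Nat.cast_nonneg _)
    · rw [if_neg hab]
      apply max_eq_left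
      have hz : ((1:ℤ) + ⌊f p.1 + θ⌋ - ⌊f p.2 + θ⌋) ≤ 0 := by omega
      have : (((1:ℤ) + ⌊f p.1 + θ⌋ - ⌊f p.2 + θ⌋ : ℤ) : ℝ) ≤ 0 := by exact_mod_cast hz
      push_cast at this
      linarith
  have hgθ : g θ = ∑ j : Fin k, ∑ i : Fin k, (ψ (S j ×ˢ S i)).toReal * c' j i := by
    have hmap : ∀ j i : Fin k, (ψ.map κ) {(j, i)} = ψ (S j ×ˢ S i) := by
      intro j i
      rw [Measure.map_apply hκmeas (measurableSet_singleton _)]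
      congr 1
      ext p
      simp only [hκdef, mem_preimage, mem_singleton_iff, Prod.ext_iff, hSdef, mem_prod,
        mem_setOf_eq]
    rw [hgdef]
    calc ∫ p, H (θ, p) ∂ψ = ∫ p, c' (κ p).1 (κ p).2 ∂ψ :=
          integral_congr_ae (Filter.Eventually.of_forall fun p => hpoint p)
      _ = ∫ q, c' q.1 q.2 ∂(ψ.map κ) :=
          (integral_map (φ := κ) (f := fun q : Fin k × Fin k => c' q.1 q.2)
            hκmeas.aemeasurable
            ((measurable_of_countable _).aestronglyMeasurable)).symm
      _ = ∑ q : Fin k × Fin k, ((ψ.map κ) {q}).toReal • c' q.1 q.2 :=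
          integral_fintype .of_finite
      _ = ∑ j : Fin k, ∑ i : Fin k, ((ψ.map κ) {(j, i)}).toReal • c' j i :=
          Fintype.sum_prod_type _
      _ = ∑ j : Fin k, ∑ i : Fin k, (ψ (S j ×ˢ S i)).toReal * c' j i := by
          refine Finset.sum_congr rfl fun j _ => Finset.sum_congr rfl fun i _ => ?_
          rw [hmap j i, smul_eq_mul]
  have hc'0 : ∀ j i, 0 ≤ c' j i := by
    intro j i
    rw [hc'def]
    dsimp only
    split_ifs
    · exact Nat.cast_nonneg _
    · exact le_rfl
  have hsum_eq : (∑ i : Fin k, ∑ j : Fin k,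
      if (i:ℕ) ≤ (j:ℕ) then (((j:ℕ) - (i:ℕ) + 1 : ℕ) : ℝ≥0∞) * ψ (S j ×ˢ S i) else 0)
      = ENNReal.ofReal (g θ) := by
    rw [hgθ]
    rw [ENNReal.ofReal_sum_of_nonneg (fun j _ =>
      Finset.sum_nonneg fun i _ => mul_nonneg ENNReal.toReal_nonneg (hc'0 j i))]
    rw [Finset.sum_comm]
    refine Finset.sum_congr rfl fun i _ => ?_
    rw [ENNReal.ofReal_sum_of_nonneg (fun j _ =>
      mul_nonneg ENNReal.toReal_nonneg (hc'0 i j))]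
    refine Finset.sum_congr rfl fun j _ => ?_
    rw [hc'def]
    dsimp only
    by_cases hij : (j:ℕ) ≤ (i:ℕ)
    · rw [if_pos hij, if_pos hij, ENNReal.ofReal_mul ENNReal.toReal_nonneg,
        ENNReal.ofReal_toReal (measure_ne_top ψ _), ENNReal.ofReal_natCast, mul_comm]
    · rw [if_neg hij, if_neg hij, mul_zero, ENNReal.ofReal_zero]
  rw [hsum_eq] at happ
  exact absurd (ENNReal.one_le_ofReal.mp happ) (not_le.mpr hθ)


/-- **Combinatorial form of the ergodic circulation existence condition.**
There is a nonnegative circulation `η` with `η(J × J) = 1` and `η ≤ ψ` iff for every partition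
`J = S₁ ∪ ⋯ ∪ S_k` into finitely many pairwise disjoint Borel sets,
`Σ_{i ≤ j} (j - i + 1) ψ(S_j × S_i) ≥ 1`. -/
theorem stmt_4 {J : Type*} [MeasurableSpace J] [StandardBorelSpace J]
    (ψ : Measure (J × J)) [IsFiniteMeasure ψ] :
    (∃ η : Measure (J × J), η.fst = η.snd ∧ η univ = 1 ∧ η ≤ ψ) ↔
      (∀ (k : ℕ) (S : Fin k → Set J),
        (∀ i, MeasurableSet (S i)) →
        (∀ i j, i ≠ j → Disjoint (S i) (S j)) →
        (⋃ i, S i) = univ →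
        1 ≤ ∑ i : Fin k, ∑ j : Fin k,
          if (i : ℕ) ≤ (j : ℕ) then (((j : ℕ) - (i : ℕ) + 1 : ℕ) : ℝ≥0∞) * ψ (S j ×ˢ S i)
          else 0) := by
  constructor
  · rintro ⟨η, hfs, hmass, hle⟩ k S hmeas hdisj hcover
    exact forward_dir ψ η hfs hmass hle k S hmeas hdisj hcover
  · exact backward_dir ψ
end

section
/- Let (J, 𝒜) be a standard Borel space, let ψ be a finite nonnegative Borel measure on J × J (the capacity), and let s, t ∈ J be distinct points. There exists an s-t flow φ of value 1 with φ ≤ ψ if and only if ψ(A × Aᶜ) ≥ 1 for every Borel set A ⊆ J with s ∈ A and t ∉ A. -/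
open MeasureTheory Set ENNReal

set_option linter.unusedSectionVars false
namespace MFMC

variable {X : Type*} [MeasurableSpace X] (ψ : Measure X) [IsFiniteMeasure ψ]

/-- Indicator of a measurable set as an element of `L¹(ψ)`. -/
noncomputable def ind {B : Set X} (hB : MeasurableSet B) : Lp ℝ 1 ψ :=
  indicatorConstLp 1 hB (measure_ne_top ψ B) (1 : ℝ)

variable {ψ}

lemma ind_coeFn {B : Set X} (hB : MeasurableSet B) :
    ⇑(ind ψ hB) =ᵐ[ψ] B.indicator (fun _ => (1 : ℝ)) :=
  indicatorConstLp_coeFn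

lemma ind_nonneg {B : Set X} (hB : MeasurableSet B) :
    0 ≤ᵐ[ψ] ⇑(ind ψ hB) := by
  filter_upwards [ind_coeFn hB] with x hx
  rw [hx]
  exact Set.indicator_nonneg (fun _ _ => zero_le_one) x

lemma integral_ind {B : Set X} (hB : MeasurableSet B) :
    ∫ x, (ind ψ hB) x ∂ψ = (ψ B).toReal := by
  rw [integral_congr_ae (ind_coeFn hB), integral_indicator_const (1 : ℝ) hB, smul_eq_mul, mul_one]
  rfl

variable (ψ) in
/-- The feasible set: positive functionals on `L¹(ψ)` dominated by integration against `ψ`. -/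
def K : Set (WeakDual ℝ (Lp ℝ 1 ψ)) :=
  {Φ | ∀ h : Lp ℝ 1 ψ, 0 ≤ᵐ[ψ] ⇑h → Φ h ∈ Icc 0 (∫ x, h x ∂ψ)}

lemma abs_apply_le_norm {Φ : WeakDual ℝ (Lp ℝ 1 ψ)} (hΦ : Φ ∈ K ψ) (h : Lp ℝ 1 ψ) :
    |Φ h| ≤ ‖h‖ := by
  set P := Lp.posPart h with hP
  set N := Lp.negPart h with hN
  have hPN : h = P - N := by
    refine (Lp.ext ?_).symm
    filter_upwards [Lp.coeFn_sub P N, Lp.coeFn_posPart h, Lp.coeFn_negPart h] with a h1 h2 h3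
    rw [h1, Pi.sub_apply, h2, h3]
    simp [max_def, min_def]
    split <;> simp
  have hP0 : 0 ≤ᵐ[ψ] ⇑P := by
    filter_upwards [Lp.coeFn_posPart h] with a ha; rw [ha]; exact le_max_right _ _
  have hN0 : 0 ≤ᵐ[ψ] ⇑N := by
    filter_upwards [Lp.coeFn_negPart h] with a ha; rw [ha]; simp [min_def]; split <;> linarith
  have hPle : ∫ x, P x ∂ψ ≤ ‖h‖ := by
    rw [L1.norm_eq_integral_norm]
    refine integral_mono_ae (L1.integrable_coeFn P) (L1.integrable_coeFn h).norm ?_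
    filter_upwards [Lp.coeFn_posPart h] with a ha
    rw [ha, Real.norm_eq_abs]
    exact max_le (le_abs_self _) (abs_nonneg _)
  have hNle : ∫ x, N x ∂ψ ≤ ‖h‖ := by
    rw [L1.norm_eq_integral_norm]
    refine integral_mono_ae (L1.integrable_coeFn N) (L1.integrable_coeFn h).norm ?_
    filter_upwards [Lp.coeFn_negPart h] with a ha
    rw [ha, Real.norm_eq_abs]
    simp only [min_def]; split
    · rw [abs_of_nonpos ‹_›]
    · simp only [neg_zero]; positivity
  have h1 := hΦ P hP0
  have h2 := hΦ N hN0
  have hsub : Φ h = Φ P - Φ N := by rw [hPN, map_sub]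
  rw [hsub]
  rw [abs_le]
  exact ⟨by linarith [h1.1, h2.2], by linarith [h1.2, h2.1]⟩

lemma isClosed_K : IsClosed (K ψ) := by
  have : K ψ = ⋂ h ∈ {h : Lp ℝ 1 ψ | 0 ≤ᵐ[ψ] ⇑h},
      (fun Φ : WeakDual ℝ (Lp ℝ 1 ψ) => Φ h) ⁻¹' Icc 0 (∫ x, h x ∂ψ) := by
    ext Φ; simp [K, Set.mem_iInter]
  rw [this]
  exact isClosed_biInter fun h _ => IsClosed.preimage (WeakDual.eval_continuous h) isClosed_Icc

lemma K_subset_ball : K ψ ⊆ WeakDual.toStrongDual ⁻¹' Metric.closedBall 0 1 := by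
  intro Φ hΦ
  simp only [Set.mem_preimage, Metric.mem_closedBall, dist_zero_right]
  refine ContinuousLinearMap.opNorm_le_bound _ zero_le_one fun h => ?_
  rw [one_mul]
  exact (Real.norm_eq_abs _).trans_le (abs_apply_le_norm hΦ h)

lemma isCompact_K : IsCompact (K ψ) :=
  (WeakDual.isCompact_closedBall (𝕜 := ℝ) (0 : StrongDual ℝ (Lp ℝ 1 ψ)) 1).of_isClosed_subset
    isClosed_K K_subset_ball

lemma convex_K : Convex ℝ (K ψ) := by
  intro Φ₁ h₁ Φ₂ h₂ a b ha hb hab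
  intro h hh
  have e : (a • Φ₁ + b • Φ₂) h = a * Φ₁ h + b * Φ₂ h := rfl
  obtain ⟨p1, q1⟩ := h₁ h hh
  obtain ⟨p2, q2⟩ := h₂ h hh
  constructor
  · rw [e]; exact add_nonneg (mul_nonneg ha p1) (mul_nonneg hb p2)
  · rw [e]
    calc a * Φ₁ h + b * Φ₂ h ≤ a * ∫ x, h x ∂ψ + b * ∫ x, h x ∂ψ := by
          gcongr
      _ = ∫ x, h x ∂ψ := by rw [← add_mul, hab, one_mul]

variable (ψ) in
/-- Integration over a measurable set `G`, as a continuous functional on `L¹(ψ)`. -/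
noncomputable def cutCLM {G : Set X} (hG : MeasurableSet G) : Lp ℝ 1 ψ →L[ℝ] ℝ :=
  LinearMap.mkContinuous
    { toFun := fun h => ∫ x in G, h x ∂ψ
      map_add' := fun h₁ h₂ => by
        show ∫ x in G, (h₁ + h₂) x ∂ψ = (∫ x in G, h₁ x ∂ψ) + ∫ x in G, h₂ x ∂ψ
        rw [integral_congr_ae (ae_restrict_of_ae (Lp.coeFn_add h₁ h₂))]
        exact integral_add ((L1.integrable_coeFn h₁).restrict)
          ((L1.integrable_coeFn h₂).restrict)
      map_smul' := fun c h => by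
        show ∫ x in G, (c • h) x ∂ψ = c • ∫ x in G, h x ∂ψ
        rw [integral_congr_ae (ae_restrict_of_ae (Lp.coeFn_smul c h))]
        simpa using integral_smul c fun x => h x }
    1 (fun h => by
      simp only [LinearMap.coe_mk, AddHom.coe_mk, one_mul]
      calc ‖∫ x in G, h x ∂ψ‖ ≤ ∫ x in G, ‖h x‖ ∂ψ := norm_integral_le_integral_norm _
        _ ≤ ∫ x, ‖h x‖ ∂ψ := setIntegral_le_integral (L1.integrable_coeFn h).norm
            (Filter.Eventually.of_forall fun x => norm_nonneg _)
        _ = ‖h‖ := (L1.norm_eq_integral_norm h).symm)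

lemma cutCLM_apply {G : Set X} (hG : MeasurableSet G) (h : Lp ℝ 1 ψ) :
    cutCLM ψ hG h = ∫ x in G, h x ∂ψ := rfl

lemma cutCLM_mem_K {G : Set X} (hG : MeasurableSet G) :
    (WeakDual.toStrongDual.symm (cutCLM ψ hG) : WeakDual ℝ (Lp ℝ 1 ψ)) ∈ K ψ := by
  intro h hh
  have e : (WeakDual.toStrongDual.symm (cutCLM ψ hG) : WeakDual ℝ (Lp ℝ 1 ψ)) h
      = ∫ x in G, h x ∂ψ := rfl
  rw [e]
  exact ⟨integral_nonneg_of_ae (ae_restrict_of_ae hh),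
    setIntegral_le_integral (L1.integrable_coeFn h) hh⟩

lemma ind_union {A B : Set X} (hA : MeasurableSet A) (hB : MeasurableSet B)
    (hAB : Disjoint A B) (hU : MeasurableSet (A ∪ B)) :
    ind ψ hU = ind ψ hA + ind ψ hB :=
  indicatorConstLp_disjoint_union hA hB (measure_ne_top ψ A) (measure_ne_top ψ B) hAB (1 : ℝ)

lemma ind_eq_add_diff {A B : Set X} (hA : MeasurableSet A) (hB : MeasurableSet B) (hAB : A ⊆ B) :
    ind ψ hB = ind ψ hA + ind ψ (hB.diff hA) := by
  have h := ind_union (ψ := ψ) hA (hB.diff hA) disjoint_sdiff_right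
    ((hA.union (hB.diff hA)))
  have hset : A ∪ B \ A = B := Set.union_diff_cancel hAB
  rw [← h]
  congr 1
  exact hset.symm

lemma ind_biUnion_range {f : ℕ → Set X} (hf : ∀ i, MeasurableSet (f i))
    (hd : Pairwise (Function.onFun Disjoint f)) (n : ℕ)
    (hU : MeasurableSet (⋃ i ∈ Finset.range n, f i)) :
    ind ψ hU = ∑ i ∈ Finset.range n, ind ψ (hf i) := by
  induction n with
  | zero => simp only [Finset.range_zero, Finset.sum_empty]
            have : (⋃ i ∈ (Finset.range 0 : Finset ℕ), f i) = (∅ : Set X) := by simp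
            rw [show ind ψ _ = ind ψ (MeasurableSet.empty (α := X)) from by congr 1 <;> simp, ind]
            exact indicatorConstLp_empty
  | succ n ih =>
    have hU' : MeasurableSet (⋃ i ∈ Finset.range n, f i) := by
      exact MeasurableSet.biUnion (Set.to_countable _) fun i _ => hf i
    have hset : (⋃ i ∈ Finset.range (n + 1), f i) = (⋃ i ∈ Finset.range n, f i) ∪ f n := by
      simp [Finset.range_add_one, Set.union_comm]
    have hdisj : Disjoint (⋃ i ∈ Finset.range n, f i) (f n) := by
      refine Set.disjoint_left.mpr fun x hx hxn => ?_
      simp only [Set.mem_iUnion, Finset.mem_range] at hx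
      obtain ⟨i, hi, hxi⟩ := hx
      exact Set.disjoint_left.mp (hd (Nat.ne_of_lt hi)) hxi hxn
    have h1 : ind ψ hU = ind ψ (hU'.union (hf n)) := by congr 1
    rw [h1, ind_union hU' (hf n) hdisj, ih hU', Finset.sum_range_succ]

lemma K_ind_nonneg {Φ : WeakDual ℝ (Lp ℝ 1 ψ)} (hΦ : Φ ∈ K ψ) {B : Set X}
    (hB : MeasurableSet B) : 0 ≤ Φ (ind ψ hB) :=
  (hΦ _ (ind_nonneg hB)).1

lemma K_ind_le {Φ : WeakDual ℝ (Lp ℝ 1 ψ)} (hΦ : Φ ∈ K ψ) {B : Set X}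
    (hB : MeasurableSet B) : Φ (ind ψ hB) ≤ (ψ B).toReal :=
  (hΦ _ (ind_nonneg hB)).2.trans_eq (integral_ind hB)

lemma hasSum_ind {Φ : WeakDual ℝ (Lp ℝ 1 ψ)} (hΦ : Φ ∈ K ψ) {f : ℕ → Set X}
    (hf : ∀ i, MeasurableSet (f i)) (hd : Pairwise (Function.onFun Disjoint f)) :
    HasSum (fun i => Φ (ind ψ (hf i))) (Φ (ind ψ (MeasurableSet.iUnion hf))) := by
  set U := ⋃ i, f i with hUdef
  have hU : MeasurableSet U := MeasurableSet.iUnion hf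
  rw [hasSum_iff_tendsto_nat_of_nonneg (fun i => K_ind_nonneg hΦ (hf i))]
  rw [← tendsto_sub_nhds_zero_iff]
  have hUn : ∀ n, MeasurableSet (⋃ i ∈ Finset.range n, f i) := fun n =>
    MeasurableSet.biUnion (Set.to_countable _) fun i _ => hf i
  have hsub : ∀ n, (⋃ i ∈ Finset.range n, f i) ⊆ U := fun n =>
    Set.iUnion₂_subset fun i _ => Set.subset_iUnion f i
  -- the partial sums
  have hpart : ∀ n, ∑ i ∈ Finset.range n, Φ (ind ψ (hf i)) = Φ (ind ψ (hUn n)) := fun n => by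
    rw [ind_biUnion_range hf hd n (hUn n), map_sum]
  -- bound the distance by the tail measure
  have hbound : ∀ n, ‖∑ i ∈ Finset.range n, Φ (ind ψ (hf i)) - Φ (ind ψ hU)‖
      ≤ (ψ (U \ ⋃ i ∈ Finset.range n, f i)).toReal := by
    intro n
    rw [hpart n, ← map_sub, ← neg_sub (ind ψ hU), map_neg, norm_neg,
      ind_eq_add_diff (hUn n) hU (hsub n)]
    have : ind ψ (hUn n) + ind ψ (hU.diff (hUn n)) - ind ψ (hUn n)
        = ind ψ (hU.diff (hUn n)) := add_sub_cancel_left _ _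
    rw [this, Real.norm_eq_abs, abs_of_nonneg (K_ind_nonneg hΦ _)]
    exact K_ind_le hΦ _
  refine squeeze_zero_norm hbound ?_
  -- tail measure tends to zero
  have htail : ∀ n, ψ (U \ ⋃ i ∈ Finset.range n, f i) ≤ ∑' k, ψ (f (k + n)) := by
    intro n
    refine le_trans (measure_mono ?_) (measure_iUnion_le fun k => f (k + n))
    rintro x ⟨hxU, hxn⟩
    simp only [Set.mem_iUnion, Finset.mem_range, not_exists] at hxn
    obtain ⟨i, hxi⟩ := Set.mem_iUnion.mp hxU
    by_cases hi : i < n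
    · exact absurd hxi (hxn i hi)
    · exact Set.mem_iUnion.mpr ⟨i - n, by rwa [Nat.sub_add_cancel (not_lt.mp hi)]⟩
  have hfin : ∑' i, ψ (f i) ≠ ⊤ := by
    rw [← measure_iUnion hd hf]; exact measure_ne_top ψ U
  have h0 : Filter.Tendsto (fun n => ∑' k, ψ (f (k + n))) Filter.atTop (nhds 0) :=
    ENNReal.tendsto_sum_nat_add (fun i => ψ (f i)) hfin
  have h0' : Filter.Tendsto (fun n => (∑' k, ψ (f (k + n))).toReal) Filter.atTop (nhds 0) := by
    have := (ENNReal.tendsto_toReal (by simp : (0 : ℝ≥0∞) ≠ ⊤)).comp h0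
    simpa [Function.comp_def] using this
  refine squeeze_zero (fun n => ENNReal.toReal_nonneg) (fun n => ?_) h0'
  refine ENNReal.toReal_mono (ne_top_of_le_ne_top hfin ?_) (htail n)
  exact ENNReal.tsum_comp_le_tsum_of_injective (add_left_injective n) (fun i => ψ (f i))


/-- The measure associated to a functional in `K ψ`. -/
noncomputable def toMeasure (Φ : WeakDual ℝ (Lp ℝ 1 ψ)) (hΦ : Φ ∈ K ψ) : Measure X :=
  Measure.ofMeasurable (fun B hB => ENNReal.ofReal (Φ (ind ψ hB)))
    (by
      show ENNReal.ofReal (Φ (ind ψ MeasurableSet.empty)) = 0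
      have : ind ψ (MeasurableSet.empty (α := X)) = 0 := indicatorConstLp_empty
      rw [this, map_zero, ENNReal.ofReal_zero])
    (fun f hf hd => by
      show ENNReal.ofReal (Φ (ind ψ (MeasurableSet.iUnion hf)))
        = ∑' i, ENNReal.ofReal (Φ (ind ψ (hf i)))
      have hs := hasSum_ind hΦ hf hd
      rw [← hs.tsum_eq, ← ENNReal.ofReal_tsum_of_nonneg
        (fun i => K_ind_nonneg hΦ (hf i)) hs.summable])

lemma toMeasure_apply (Φ : WeakDual ℝ (Lp ℝ 1 ψ)) (hΦ : Φ ∈ K ψ) {B : Set X}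
    (hB : MeasurableSet B) :
    toMeasure Φ hΦ B = ENNReal.ofReal (Φ (ind ψ hB)) :=
  Measure.ofMeasurable_apply B hB

lemma toMeasure_le (Φ : WeakDual ℝ (Lp ℝ 1 ψ)) (hΦ : Φ ∈ K ψ) : toMeasure Φ hΦ ≤ ψ := by
  refine Measure.le_iff.mpr fun B hB => ?_
  rw [toMeasure_apply Φ hΦ hB]
  calc ENNReal.ofReal (Φ (ind ψ hB)) ≤ ENNReal.ofReal ((ψ B).toReal) :=
        ENNReal.ofReal_le_ofReal (K_ind_le hΦ hB)
    _ = ψ B := ENNReal.ofReal_toReal (measure_ne_top ψ B)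

lemma toMeasure_finite (Φ : WeakDual ℝ (Lp ℝ 1 ψ)) (hΦ : Φ ∈ K ψ) :
    IsFiniteMeasure (toMeasure Φ hΦ) :=
  ⟨by rw [toMeasure_apply Φ hΦ MeasurableSet.univ]; exact ENNReal.ofReal_lt_top⟩

lemma coeFn_finset_sum {ι : Type*} (s : Finset ι) (f : ι → Lp ℝ 1 ψ) :
    ⇑(∑ i ∈ s, f i) =ᵐ[ψ] fun x => ∑ i ∈ s, f i x := by
  classical
  induction s using Finset.cons_induction with
  | empty => simp only [Finset.sum_empty]; exact Lp.coeFn_zero ℝ 1 ψ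
  | cons i s hi ih =>
    rw [Finset.sum_cons]
    filter_upwards [Lp.coeFn_add (f i) (∑ j ∈ s, f j), ih] with x h1 h2
    rw [h1, Pi.add_apply, h2, Finset.sum_cons]

end MFMC

namespace MFMC

variable {J : Type*} [MeasurableSpace J] (ψ : Measure (J × J)) [IsFiniteMeasure ψ]

/-- Coarea-type inequality: if every `s`-`t` cut has capacity at least `1`, then for any
measurable `F : J → ℝ` the "discrete gradient" integrates to at least `F s - F t`. -/
lemma coarea {s t : J} (F : J → ℝ) (hF : Measurable F)
    (hcut : ∀ A : Set J, MeasurableSet A → s ∈ A → t ∉ A → 1 ≤ ψ (A ×ˢ Aᶜ)) :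
    ENNReal.ofReal (F s - F t) ≤ ∫⁻ p, ENNReal.ofReal (F p.1 - F p.2) ∂ψ := by
  set g : (J × J) → ℝ → ℝ≥0∞ := fun p lam =>
    (Set.Ico (F p.2) (F p.1)).indicator 1 lam with hg
  have hpoint : ∀ p : J × J, ∫⁻ lam, g p lam = ENNReal.ofReal (F p.1 - F p.2) := by
    intro p
    rw [hg]
    rw [lintegral_indicator_one measurableSet_Ico, Real.volume_Ico]
  have hmeas : Measurable (Function.uncurry g) := by
    have huncurry : Function.uncurry g =
        Set.indicator {z : (J × J) × ℝ | F z.1.2 ≤ z.2 ∧ z.2 < F z.1.1} 1 := by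
      funext z
      simp only [Function.uncurry, hg, Set.indicator_apply, Set.mem_Ico, Set.mem_setOf_eq, Pi.one_apply]
    rw [huncurry]
    refine Measurable.indicator measurable_const ?_
    exact MeasurableSet.inter
      (measurableSet_le (hF.comp (measurable_snd.comp measurable_fst)) measurable_snd)
      (measurableSet_lt measurable_snd (hF.comp (measurable_fst.comp measurable_fst)))
  calc ENNReal.ofReal (F s - F t) = volume (Set.Ico (F t) (F s)) := (Real.volume_Ico).symm
    _ = ∫⁻ _ in Set.Ico (F t) (F s), 1 := (setLIntegral_one _).symm
    _ ≤ ∫⁻ lam in Set.Ico (F t) (F s), ψ ({x | lam < F x} ×ˢ {x | lam < F x}ᶜ) := by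
        refine setLIntegral_mono' measurableSet_Ico fun lam hlam => ?_
        exact hcut _ (measurableSet_lt measurable_const hF) hlam.2
          (by simp [not_lt.mpr hlam.1])
    _ ≤ ∫⁻ lam, ψ ({x | lam < F x} ×ˢ {x | lam < F x}ᶜ) := setLIntegral_le_lintegral _ _
    _ = ∫⁻ lam, ∫⁻ p, g p lam ∂ψ := by
        refine lintegral_congr fun lam => ?_
        have hfun : (fun p : J × J => g p lam)
            = Set.indicator ({x | lam < F x} ×ˢ {x | lam < F x}ᶜ) 1 := by
          funext p
          simp only [hg, Set.indicator_apply, Set.mem_Ico, Set.mem_prod, Set.mem_setOf_eq,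
            Set.mem_compl_iff, not_lt, Pi.one_apply]
          by_cases h1 : F p.2 ≤ lam ∧ lam < F p.1
          · rw [if_pos h1, if_pos ⟨h1.2, h1.1⟩]
          · rw [if_neg h1, if_neg fun hc => h1 ⟨hc.2, hc.1⟩]
        rw [hfun, lintegral_indicator_one
          ((measurableSet_lt measurable_const hF).prod
            (measurableSet_lt measurable_const hF).compl)]
    _ = ∫⁻ p, ∫⁻ lam, g p lam ∂volume ∂ψ := (lintegral_lintegral_swap hmeas.aemeasurable).symm
    _ = ∫⁻ p, ENNReal.ofReal (F p.1 - F p.2) ∂ψ := lintegral_congr hpoint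

/-- The element of `L¹(ψ)` representing the net flow through a set `A`. -/
noncomputable def flowElt {A : Set J} (hA : MeasurableSet A) : Lp ℝ 1 ψ :=
  ind ψ (hA.prod MeasurableSet.univ) - ind ψ (MeasurableSet.univ.prod hA)

lemma flowElt_coeFn {A : Set J} (hA : MeasurableSet A) :
    ⇑(flowElt ψ hA) =ᵐ[ψ] fun p =>
      A.indicator (fun _ => (1 : ℝ)) p.1 - A.indicator (fun _ => (1 : ℝ)) p.2 := by
  filter_upwards [Lp.coeFn_sub (ind ψ (hA.prod MeasurableSet.univ))
      (ind ψ (MeasurableSet.univ.prod hA)),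
    ind_coeFn (hA.prod MeasurableSet.univ), ind_coeFn (MeasurableSet.univ.prod hA)]
    with p h1 h2 h3
  show (⇑(ind ψ (hA.prod MeasurableSet.univ) - ind ψ (MeasurableSet.univ.prod hA))) p = _
  rw [h1, Pi.sub_apply, h2, h3]
  by_cases hp1 : p.1 ∈ A <;> by_cases hp2 : p.2 ∈ A <;>
    simp [Set.indicator_apply, Set.mem_prod, hp1, hp2]


set_option maxHeartbeats 1000000 in
/-- The key existence result: if all cuts have capacity at least one, there is a feasible
functional satisfying all the flow constraints. -/
lemma exists_phi (s t : J)
    (hcut : ∀ A : Set J, MeasurableSet A → s ∈ A → t ∉ A → 1 ≤ ψ (A ×ˢ Aᶜ)) :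
    ∃ Φ ∈ K ψ, ∀ (A : Set J) (hA : MeasurableSet A),
      Φ (flowElt ψ hA)
        = A.indicator (fun _ => (1 : ℝ)) s - A.indicator (fun _ => (1 : ℝ)) t := by
  classical
  by_contra hcon
  push_neg at hcon
  set ι := {A : Set J // MeasurableSet A} with hι
  set d : ι → ℝ := fun i =>
    i.1.indicator (fun _ => (1 : ℝ)) s - i.1.indicator (fun _ => (1 : ℝ)) t with hd
  set Z : ι → Set (WeakDual ℝ (Lp ℝ 1 ψ)) :=
    fun i => (fun Φ : WeakDual ℝ (Lp ℝ 1 ψ) => Φ (flowElt ψ i.2)) ⁻¹' {d i} with hZ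
  have hZc : ∀ i, IsClosed (Z i) := fun i =>
    isClosed_singleton.preimage (WeakDual.eval_continuous _)
  have hempty : K ψ ∩ ⋂ i, Z i = ∅ := by
    rw [Set.eq_empty_iff_forall_notMem]
    rintro Φ ⟨hΦK, hΦZ⟩
    obtain ⟨A, hA, hne⟩ := hcon Φ hΦK
    exact hne (Set.mem_iInter.mp hΦZ ⟨A, hA⟩)
  obtain ⟨u, hu⟩ := (isCompact_K (ψ := ψ)).elim_finite_subfamily_closed Z hZc hempty
  -- the affine constraint-violation map into a finite-dimensional space
  set L : WeakDual ℝ (Lp ℝ 1 ψ) → (↥u → ℝ) :=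
    fun Φ i => Φ (flowElt ψ (i : ι).2) - d i with hL
  have hLcont : Continuous L :=
    continuous_pi fun i => (WeakDual.eval_continuous _).sub continuous_const
  set T := L '' K ψ with hT
  have hTcpt : IsCompact T := isCompact_K.image hLcont
  have hTconv : Convex ℝ T := by
    rintro x ⟨Φ₁, hΦ₁, rfl⟩ y ⟨Φ₂, hΦ₂, rfl⟩ a b ha hb hab
    refine ⟨a • Φ₁ + b • Φ₂, convex_K hΦ₁ hΦ₂ ha hb hab, ?_⟩
    funext i
    have e : (a • Φ₁ + b • Φ₂) (flowElt ψ (i : ι).2)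
        = a * Φ₁ (flowElt ψ (i : ι).2) + b * Φ₂ (flowElt ψ (i : ι).2) := rfl
    simp only [hL, Pi.add_apply, Pi.smul_apply, smul_eq_mul, e]
    linear_combination (d i) * hab
  have h0T : (0 : ↥u → ℝ) ∉ T := by
    rintro ⟨Φ, hΦK, hL0⟩
    have hmem : Φ ∈ K ψ ∩ ⋂ i ∈ u, Z i := by
      refine ⟨hΦK, Set.mem_iInter₂.mpr fun i hi => ?_⟩
      have := congrFun hL0 ⟨i, hi⟩
      simp only [hL, Pi.zero_apply] at this
      exact sub_eq_zero.mp this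
    rw [hu] at hmem
    exact hmem
  obtain ⟨f, u', v, hfa, huv, hfb⟩ := geometric_hahn_banach_compact_closed hTconv hTcpt
    (convex_singleton 0) isClosed_singleton (Set.disjoint_singleton_right.mpr h0T)
  have hv0 : v < 0 := by simpa using hfb 0 rfl
  set c : ↥u → ℝ := fun i => f (fun j => if i = j then 1 else 0) with hc
  have hf_eq : ∀ x : ↥u → ℝ, f x = ∑ i, x i * c i := by
    intro x
    conv_lhs => rw [pi_eq_sum_univ x, map_sum]
    refine Finset.sum_congr rfl fun i _ => ?_
    rw [_root_.map_smul, smul_eq_mul, hc]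
  set F : J → ℝ := fun a => ∑ i : ↥u, c i * (i : ι).1.indicator (fun _ => (1 : ℝ)) a with hFdef
  have hF : Measurable F :=
    Finset.measurable_sum Finset.univ fun i _ =>
      ((measurable_const.indicator (i : ι).2)).const_mul _
  set G := {p : J × J | F p.2 < F p.1} with hGdef
  have hG : MeasurableSet G := measurableSet_lt (hF.comp measurable_snd) (hF.comp measurable_fst)
  set Φs : WeakDual ℝ (Lp ℝ 1 ψ) := WeakDual.toStrongDual.symm (cutCLM ψ hG) with hΦs
  have hΦsK : Φs ∈ K ψ := cutCLM_mem_K hG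
  have happ : ∀ h : Lp ℝ 1 ψ, Φs h = ∫ x in G, h x ∂ψ := fun h => rfl
  set HF : Lp ℝ 1 ψ := ∑ i : ↥u, c i • flowElt ψ (i : ι).2 with hHFdef
  have hHF_coe : ⇑HF =ᵐ[ψ] fun p => F p.1 - F p.2 := by
    have h2 : ∀ i : ↥u, ∀ᵐ p ∂ψ, (c i • flowElt ψ (i : ι).2) p
        = c i * ((i : ι).1.indicator (fun _ => (1 : ℝ)) p.1
          - (i : ι).1.indicator (fun _ => (1 : ℝ)) p.2) := fun i => by
      filter_upwards [Lp.coeFn_smul (c i) (flowElt ψ (i : ι).2), flowElt_coeFn ψ (i : ι).2]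
        with p q1 q2
      rw [q1, Pi.smul_apply, q2, smul_eq_mul]
    have h2' : ∀ᵐ p ∂ψ, ∀ i : ↥u, (c i • flowElt ψ (i : ι).2) p
        = c i * ((i : ι).1.indicator (fun _ => (1 : ℝ)) p.1
          - (i : ι).1.indicator (fun _ => (1 : ℝ)) p.2) :=
      eventually_countable_forall.mpr h2
    filter_upwards [coeFn_finset_sum Finset.univ (fun i : ↥u => c i • flowElt ψ (i : ι).2), h2']
      with p e1 e2
    rw [hHFdef]
    rw [e1]
    rw [Finset.sum_congr rfl fun i _ => e2 i]
    simp only [mul_sub, Finset.sum_sub_distrib, hFdef]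
  have hshrink : Φs HF = ∑ i : ↥u, c i * Φs (flowElt ψ (i : ι).2) := by
    rw [hHFdef, map_sum]
    exact Finset.sum_congr rfl fun i _ => by rw [_root_.map_smul, smul_eq_mul]
  have hsum_d : ∑ i : ↥u, c i * d i = F s - F t := by
    simp only [hd, mul_sub]
    rw [Finset.sum_sub_distrib]
  have hkey : f (L Φs) < u' := hfa (L Φs) ⟨Φs, hΦsK, rfl⟩
  have hflt : f (L Φs) = Φs HF - (F s - F t) := by
    rw [hf_eq (L Φs)]
    have : ∀ i : ↥u, L Φs i * c i
        = c i * Φs (flowElt ψ (i : ι).2) - c i * d i := fun i => by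
      simp only [hL]; ring
    rw [Finset.sum_congr rfl fun i _ => this i, Finset.sum_sub_distrib, ← hshrink, hsum_d]
  -- lower bound for `Φs HF` via the coarea inequality
  have hGint : Φs HF = ∫ p in G, (F p.1 - F p.2) ∂ψ := by
    rw [happ HF]
    exact integral_congr_ae (ae_restrict_of_ae hHF_coe)
  have hmax : ∫ p in G, (F p.1 - F p.2) ∂ψ = ∫ p, max (F p.1 - F p.2) 0 ∂ψ := by
    rw [← integral_indicator hG]
    congr 1
    funext p
    by_cases hp : p ∈ G
    · rw [Set.indicator_of_mem hp, max_eq_left (by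
        have : F p.2 < F p.1 := hp
        linarith)]
    · rw [Set.indicator_of_notMem hp, max_eq_right (by
        have : ¬ F p.2 < F p.1 := hp
        linarith)]
  set C : ℝ := ∑ i : ↥u, |c i| with hC
  have habs : ∀ a : J, |F a| ≤ C := fun a => by
    refine (Finset.abs_sum_le_sum_abs _ _).trans (Finset.sum_le_sum fun i _ => ?_)
    rw [abs_mul]
    have : |(i : ι).1.indicator (fun _ => (1 : ℝ)) a| ≤ 1 := by
      by_cases hm : a ∈ (i : ι).1 <;>
        simp [Set.indicator_of_mem, Set.indicator_of_notMem, hm]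
    calc |c i| * |(i : ι).1.indicator (fun _ => (1 : ℝ)) a| ≤ |c i| * 1 := by
          gcongr
      _ = |c i| := mul_one _
  have hbdd : ∫⁻ p, ENNReal.ofReal (F p.1 - F p.2) ∂ψ ≠ ⊤ := by
    refine ne_of_lt (lt_of_le_of_lt (lintegral_mono fun p =>
      ENNReal.ofReal_le_ofReal ?_) (?_ : ∫⁻ _, ENNReal.ofReal (2 * C) ∂ψ < ⊤))
    · have h1 := (abs_le.mp (habs p.1)).2
      have h2 := (abs_le.mp (habs p.2)).1
      linarith
    · rw [lintegral_const]
      exact ENNReal.mul_lt_top ENNReal.ofReal_lt_top (measure_lt_top ψ _)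
  have hco := coarea ψ F hF hcut
  have hreal : F s - F t ≤ ∫ p, max (F p.1 - F p.2) 0 ∂ψ := by
    have hmeas' : Measurable fun p : J × J => max (F p.1 - F p.2) 0 :=
      ((hF.comp measurable_fst).sub (hF.comp measurable_snd)).max measurable_const
    have heq0 := integral_eq_lintegral_of_nonneg_ae (μ := ψ)
      (f := fun p : J × J => max (F p.1 - F p.2) 0)
      (Filter.Eventually.of_forall fun p => le_max_right _ _) hmeas'.aestronglyMeasurable
    have heq : ∫ p, max (F p.1 - F p.2) 0 ∂ψ
        = (∫⁻ p, ENNReal.ofReal (F p.1 - F p.2) ∂ψ).toReal := by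
      rw [heq0]
      congr 1
      refine lintegral_congr fun p => ?_
      show ENNReal.ofReal (max (F p.1 - F p.2) 0) = ENNReal.ofReal (F p.1 - F p.2)
      rcases le_total (F p.1 - F p.2) 0 with h | h
      · rw [max_eq_right h, ENNReal.ofReal_of_nonpos h, ENNReal.ofReal_zero]
      · rw [max_eq_left h]
    rcases le_or_gt (F s - F t) 0 with h | h
    · exact h.trans (integral_nonneg fun p => le_max_right _ _)
    · rw [heq]
      calc F s - F t = (ENNReal.ofReal (F s - F t)).toReal :=
            (ENNReal.toReal_ofReal h.le).symm
        _ ≤ _ := ENNReal.toReal_mono hbdd hco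
  have hge0 : 0 ≤ f (L Φs) := by
    rw [hflt, hGint, hmax]; linarith
  linarith

end MFMC

open MFMC in
/-- **Max-Flow-Min-Cut Theorem for measures.** Given a finite capacity measure `ψ` on `J × J`
and distinct points `s, t`, there is a feasible `s`-`t` flow of value `1` (a finite nonnegative
measure `φ ≤ ψ` with `φ¹ - φ² = δ_s - δ_t`) iff `ψ(A × Aᶜ) ≥ 1` for every Borel set `A`
containing `s` but not `t`. -/
theorem stmt_5 {J : Type*} [MeasurableSpace J] [StandardBorelSpace J]
    (ψ : Measure (J × J)) [IsFiniteMeasure ψ] (s t : J) (hst : s ≠ t) :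
    (∃ φ : Measure (J × J), IsFiniteMeasure φ ∧
        φ.fst + Measure.dirac t = φ.snd + Measure.dirac s ∧ φ ≤ ψ) ↔
      (∀ A : Set J, MeasurableSet A → s ∈ A → t ∉ A → 1 ≤ ψ (A ×ˢ Aᶜ)) := by
  constructor
  · rintro ⟨φ, hfin, heq, hle⟩ A hA hsA htA
    haveI := hfin
    have h1 : φ.fst A + Measure.dirac t A = φ.snd A + Measure.dirac s A := by
      rw [← Measure.add_apply, ← Measure.add_apply, heq]
    rw [Measure.fst_apply hA, Measure.snd_apply hA, Measure.dirac_apply' t hA,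
      Measure.dirac_apply' s hA] at h1
    simp only [Set.indicator_of_notMem htA, Set.indicator_of_mem hsA, Pi.one_apply,
      add_zero] at h1
    have hsplit1 : φ (Prod.fst ⁻¹' A) = φ (A ×ˢ A) + φ (A ×ˢ Aᶜ) := by
      rw [← Set.prod_univ, ← Set.union_compl_self A, Set.prod_union]
      exact measure_union (by
        rw [Set.disjoint_left]
        rintro p ⟨-, hp2⟩ ⟨-, hp2'⟩
        exact hp2' hp2) (hA.prod hA.compl)
    have hsplit2 : φ (Prod.snd ⁻¹' A) = φ (A ×ˢ A) + φ (Aᶜ ×ˢ A) := by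
      rw [← Set.univ_prod, ← Set.union_compl_self A, Set.union_prod]
      exact measure_union (by
        rw [Set.disjoint_left]
        rintro p ⟨hp1, -⟩ ⟨hp1', -⟩
        exact hp1' hp1) (hA.compl.prod hA)
    rw [hsplit1, hsplit2, add_assoc] at h1
    have hcancel : φ (A ×ˢ Aᶜ) = φ (Aᶜ ×ˢ A) + 1 :=
      (ENNReal.add_right_inj (measure_ne_top φ (A ×ˢ A))).mp h1
    calc (1 : ℝ≥0∞) ≤ φ (A ×ˢ Aᶜ) := by rw [hcancel]; exact le_add_self
      _ ≤ ψ (A ×ˢ Aᶜ) := hle _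
  · intro hcut
    obtain ⟨Φ, hΦK, hΦ⟩ := exists_phi ψ s t hcut
    refine ⟨toMeasure Φ hΦK, toMeasure_finite Φ hΦK, ?_, toMeasure_le Φ hΦK⟩
    refine Measure.ext fun A hA => ?_
    rw [Measure.add_apply, Measure.add_apply, Measure.fst_apply hA, Measure.snd_apply hA,
      Measure.dirac_apply' t hA, Measure.dirac_apply' s hA, ← Set.prod_univ, ← Set.univ_prod,
      toMeasure_apply Φ hΦK (hA.prod MeasurableSet.univ),
      toMeasure_apply Φ hΦK (MeasurableSet.univ.prod hA)]
    have hc := hΦ A hA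
    have hsub : Φ (ind ψ (hA.prod MeasurableSet.univ)) - Φ (ind ψ (MeasurableSet.univ.prod hA))
        = A.indicator (fun _ => (1 : ℝ)) s - A.indicator (fun _ => (1 : ℝ)) t := by
      rw [← map_sub]
      exact hc
    have ha0 : 0 ≤ Φ (ind ψ (hA.prod MeasurableSet.univ)) := K_ind_nonneg hΦK _
    have hb0 : 0 ≤ Φ (ind ψ (MeasurableSet.univ.prod hA)) := K_ind_nonneg hΦK _
    set a := Φ (ind ψ (hA.prod MeasurableSet.univ)) with hadef
    set b := Φ (ind ψ (MeasurableSet.univ.prod hA)) with hbdef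
    by_cases hs' : s ∈ A <;> by_cases ht' : t ∈ A
    · rw [Set.indicator_of_mem hs', Set.indicator_of_mem ht'] at hsub
      rw [Set.indicator_of_mem hs', Set.indicator_of_mem ht', Pi.one_apply, Pi.one_apply]
      have hab : a = b := by linarith
      rw [hab]
    · rw [Set.indicator_of_mem hs', Set.indicator_of_notMem ht'] at hsub
      rw [Set.indicator_of_mem hs', Set.indicator_of_notMem ht', Pi.one_apply, add_zero]
      have hab : a = b + 1 := by linarith
      rw [hab, ENNReal.ofReal_add hb0 zero_le_one, ENNReal.ofReal_one]
    · rw [Set.indicator_of_notMem hs', Set.indicator_of_mem ht'] at hsub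
      rw [Set.indicator_of_notMem hs', Set.indicator_of_mem ht', Pi.one_apply, add_zero]
      have hab : b = a + 1 := by linarith
      rw [hab, ENNReal.ofReal_add ha0 zero_le_one, ENNReal.ofReal_one]
    · rw [Set.indicator_of_notMem hs', Set.indicator_of_notMem ht'] at hsub
      rw [Set.indicator_of_notMem hs', Set.indicator_of_notMem ht']
      have hab : a = b := by linarith
      rw [hab]
end
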